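/- arXiv:2007.00331 — 7 statements merged into one kernel-verified Lean document; each statement's English description precedes it below -/
import Mathlib

section
/- Let Ω ⊆ ℝ² be open and connected, and let e : Ω → ℝ² be a C² vector field with |e(x)| = 1 for all x ∈ Ω, satisfying ∂₁e₂ - ∂₂e₁ = α₁ and ∂₁e₁ + ∂₂e₂ = α₂ on Ω for constants α₁, α₂ ∈ ℝ. Then e is constant on Ω. -/
set_option maxHeartbeats 1000000


/-- Partial derivative in the `i`-th coordinate direction. -/
noncomputable def pd {n : ℕ} (i : Fin n) (f : (Fin n → ℝ) → ℝ) (x : Fin n → ℝ) : ℝ :=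
  fderiv ℝ f x (Pi.single i 1)

private lemma diff_pdf {f : (Fin 2 → ℝ) → ℝ} {x : Fin 2 → ℝ}
    (hf : ContDiffAt ℝ 2 f x) (v : Fin 2 → ℝ) :
    DifferentiableAt ℝ (fun y => fderiv ℝ f y v) x :=
  ((hf.fderiv_right (m := 1) (by norm_num)).differentiableAt (by norm_num)).clm_apply
    (differentiableAt_const _)

private lemma second_symm {f : (Fin 2 → ℝ) → ℝ} {x : Fin 2 → ℝ}
    (hf : ContDiffAt ℝ 2 f x) (v w : Fin 2 → ℝ) :
    fderiv ℝ (fun y => fderiv ℝ f y v) x w = fderiv ℝ (fun y => fderiv ℝ f y w) x v := by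
  have hF : DifferentiableAt ℝ (fderiv ℝ f) x :=
    (hf.fderiv_right (m := 1) (by norm_num)).differentiableAt (by norm_num)
  have h : ∀ v w : Fin 2 → ℝ, fderiv ℝ (fun y => fderiv ℝ f y v) x w
      = fderiv ℝ (fderiv ℝ f) x w v := by
    intro v w
    rw [fderiv_clm_apply hF (differentiableAt_const _)]
    simp
  rw [h, h]
  exact (hf.isSymmSndFDerivAt (by norm_num)) w v

theorem rotation_field_constant_2d
    (Ω : Set (Fin 2 → ℝ)) (hΩ : IsOpen Ω) (hconn : IsConnected Ω)
    (e : (Fin 2 → ℝ) → Fin 2 → ℝ) (he : ContDiffOn ℝ 2 e Ω)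
    (hunit : ∀ x ∈ Ω, (e x 0) ^ 2 + (e x 1) ^ 2 = 1)
    (α₁ α₂ : ℝ)
    (h1 : ∀ x ∈ Ω, pd 0 (fun y => e y 1) x - pd 1 (fun y => e y 0) x = α₁)
    (h2 : ∀ x ∈ Ω, pd 0 (fun y => e y 0) x + pd 1 (fun y => e y 1) x = α₂) :
    ∀ x ∈ Ω, ∀ y ∈ Ω, e x = e y := by
  simp only [pd] at h1 h2
  -- pointwise contDiff facts
  have hcomp : ∀ (j : Fin 2), ∀ y ∈ Ω, ContDiffAt ℝ 2 (fun z => e z j) y := by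
    intro j y hy
    exact ((ContinuousLinearMap.proj (R := ℝ) (φ := fun _ : Fin 2 => ℝ) j).contDiff.contDiffAt).comp
      y (he.contDiffAt (hΩ.mem_nhds hy))
  -- Step 1: structure of the first derivatives
  have key : ∀ y ∈ Ω,
      fderiv ℝ (fun z => e z 0) y (Pi.single 0 1) = -(e y 1) * (α₁ * e y 0 - α₂ * e y 1) ∧
      fderiv ℝ (fun z => e z 1) y (Pi.single 0 1) = (e y 0) * (α₁ * e y 0 - α₂ * e y 1) ∧
      fderiv ℝ (fun z => e z 0) y (Pi.single 1 1) = -(e y 1) * (α₁ * e y 1 + α₂ * e y 0) ∧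
      fderiv ℝ (fun z => e z 1) y (Pi.single 1 1) = (e y 0) * (α₁ * e y 1 + α₂ * e y 0) := by
    intro y hy
    have hny : Ω ∈ nhds y := hΩ.mem_nhds hy
    have hd0 : DifferentiableAt ℝ (fun z => e z 0) y := (hcomp 0 y hy).differentiableAt (by norm_num)
    have hd1 : DifferentiableAt ℝ (fun z => e z 1) y := (hcomp 1 y hy).differentiableAt (by norm_num)
    have horth : ∀ i : Fin 2,
        e y 0 * fderiv ℝ (fun z => e z 0) y (Pi.single i 1)
          + e y 1 * fderiv ℝ (fun z => e z 1) y (Pi.single i 1) = 0 := by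
      intro i
      have hsq : HasFDerivAt (fun z => e z 0 * e z 0 + e z 1 * e z 1)
          ((e y 0 • fderiv ℝ (fun z => e z 0) y + e y 0 • fderiv ℝ (fun z => e z 0) y)
            + (e y 1 • fderiv ℝ (fun z => e z 1) y + e y 1 • fderiv ℝ (fun z => e z 1) y)) y :=
        (hd0.hasFDerivAt.mul hd0.hasFDerivAt).add (hd1.hasFDerivAt.mul hd1.hasFDerivAt)
      have hev : (fun z : Fin 2 → ℝ => e z 0 * e z 0 + e z 1 * e z 1) =ᶠ[nhds y] fun _ => 1 := by
        filter_upwards [hny] with z hz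
        linear_combination hunit z hz
      have h0 : fderiv ℝ (fun z : Fin 2 → ℝ => e z 0 * e z 0 + e z 1 * e z 1) y = 0 := by
        rw [hev.fderiv_eq]
        exact fderiv_const_apply 1
      have hD := hsq.fderiv
      rw [h0] at hD
      have happ := congrArg (fun L : (Fin 2 → ℝ) →L[ℝ] ℝ => L (Pi.single i 1)) hD
      simp only [ContinuousLinearMap.zero_apply, ContinuousLinearMap.add_apply,
        ContinuousLinearMap.smul_apply, smul_eq_mul] at happ
      linarith
    have ho0 := horth 0
    have ho1 := horth 1
    have h1' := h1 y hy
    have h2' := h2 y hy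
    have hu := hunit y hy
    refine ⟨?_, ?_, ?_, ?_⟩
    · linear_combination (e y 0) * ho0 - (e y 1) * ho1 - (e y 0) * (e y 1) * h1'
        + (e y 1)^2 * h2' - (fderiv ℝ (fun z => e z 0) y (Pi.single 0 1)) * hu
    · linear_combination (e y 1) * ho0 + (e y 0) * ho1 + (e y 0)^2 * h1'
        - (e y 0) * (e y 1) * h2' - (fderiv ℝ (fun z => e z 1) y (Pi.single 0 1)) * hu
    · linear_combination (e y 1) * ho0 + (e y 0) * ho1 - (e y 1)^2 * h1'
        - (e y 0) * (e y 1) * h2' - (fderiv ℝ (fun z => e z 0) y (Pi.single 1 1)) * hu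
    · linear_combination -(e y 0) * ho0 + (e y 1) * ho1 + (e y 0) * (e y 1) * h1'
        + (e y 0)^2 * h2' - (fderiv ℝ (fun z => e z 1) y (Pi.single 1 1)) * hu
  -- Step 2: the full derivative vanishes on Ω
  have hzero : ∀ x ∈ Ω, fderiv ℝ e x = 0 := by
    intro x hx
    have hnx : Ω ∈ nhds x := hΩ.mem_nhds hx
    have hc0 : ContDiffAt ℝ 2 (fun z => e z 0) x := hcomp 0 x hx
    have hc1 : ContDiffAt ℝ 2 (fun z => e z 1) x := hcomp 1 x hx
    have hd0 : DifferentiableAt ℝ (fun z => e z 0) x := hc0.differentiableAt (by norm_num)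
    have hd1 : DifferentiableAt ℝ (fun z => e z 1) x := hc1.differentiableAt (by norm_num)
    -- abbreviations for the second derivative terms
    -- E1 : derivative of H0 = G0 in direction (single 1 1)
    have hH0 : HasFDerivAt
        (fun y => e y 0 * fderiv ℝ (fun z => e z 1) y (Pi.single 0 1)
          - e y 1 * fderiv ℝ (fun z => e z 0) y (Pi.single 0 1))
        ((e x 0 • fderiv ℝ (fun y => fderiv ℝ (fun z => e z 1) y (Pi.single 0 1)) x
            + fderiv ℝ (fun z => e z 1) x (Pi.single 0 1) • fderiv ℝ (fun z => e z 0) x)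
          - (e x 1 • fderiv ℝ (fun y => fderiv ℝ (fun z => e z 0) y (Pi.single 0 1)) x
            + fderiv ℝ (fun z => e z 0) x (Pi.single 0 1) • fderiv ℝ (fun z => e z 1) x)) x :=
      ((hd0.hasFDerivAt.mul (diff_pdf hc1 (Pi.single 0 1)).hasFDerivAt).sub
        (hd1.hasFDerivAt.mul (diff_pdf hc0 (Pi.single 0 1)).hasFDerivAt))
    have hH1 : HasFDerivAt
        (fun y => e y 0 * fderiv ℝ (fun z => e z 1) y (Pi.single 1 1)
          - e y 1 * fderiv ℝ (fun z => e z 0) y (Pi.single 1 1))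
        ((e x 0 • fderiv ℝ (fun y => fderiv ℝ (fun z => e z 1) y (Pi.single 1 1)) x
            + fderiv ℝ (fun z => e z 1) x (Pi.single 1 1) • fderiv ℝ (fun z => e z 0) x)
          - (e x 1 • fderiv ℝ (fun y => fderiv ℝ (fun z => e z 0) y (Pi.single 1 1)) x
            + fderiv ℝ (fun z => e z 0) x (Pi.single 1 1) • fderiv ℝ (fun z => e z 1) x)) x :=
      ((hd0.hasFDerivAt.mul (diff_pdf hc1 (Pi.single 1 1)).hasFDerivAt).sub
        (hd1.hasFDerivAt.mul (diff_pdf hc0 (Pi.single 1 1)).hasFDerivAt))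
    have hG0 : HasFDerivAt (fun y => α₁ * e y 0 - α₂ * e y 1)
        ((α₁ • fderiv ℝ (fun z => e z 0) x) - (α₂ • fderiv ℝ (fun z => e z 1) x)) x :=
      (hd0.hasFDerivAt.const_mul α₁).sub (hd1.hasFDerivAt.const_mul α₂)
    have hG1 : HasFDerivAt (fun y => α₁ * e y 1 + α₂ * e y 0)
        ((α₁ • fderiv ℝ (fun z => e z 1) x) + (α₂ • fderiv ℝ (fun z => e z 0) x)) x :=
      (hd1.hasFDerivAt.const_mul α₁).add (hd0.hasFDerivAt.const_mul α₂)
    have hE0 : (fun y => e y 0 * fderiv ℝ (fun z => e z 1) y (Pi.single 0 1)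
          - e y 1 * fderiv ℝ (fun z => e z 0) y (Pi.single 0 1))
        =ᶠ[nhds x] (fun y => α₁ * e y 0 - α₂ * e y 1) := by
      filter_upwards [hnx] with y hy
      obtain ⟨k00, k01, _, _⟩ := key y hy
      rw [k00, k01]
      linear_combination (α₁ * e y 0 - α₂ * e y 1) * hunit y hy
    have hE1 : (fun y => e y 0 * fderiv ℝ (fun z => e z 1) y (Pi.single 1 1)
          - e y 1 * fderiv ℝ (fun z => e z 0) y (Pi.single 1 1))
        =ᶠ[nhds x] (fun y => α₁ * e y 1 + α₂ * e y 0) := by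
      filter_upwards [hnx] with y hy
      obtain ⟨_, _, k10, k11⟩ := key y hy
      rw [k10, k11]
      linear_combination (α₁ * e y 1 + α₂ * e y 0) * hunit y hy
    have hDeq0 := hH0.fderiv
    rw [hE0.fderiv_eq, hG0.fderiv] at hDeq0
    have hDeq1 := hH1.fderiv
    rw [hE1.fderiv_eq, hG1.fderiv] at hDeq1
    -- Evaluate hDeq0 at single 1 1, hDeq1 at single 0 1
    have E1 := congrArg (fun L : (Fin 2 → ℝ) →L[ℝ] ℝ => L (Pi.single 1 1)) hDeq0
    have E2 := congrArg (fun L : (Fin 2 → ℝ) →L[ℝ] ℝ => L (Pi.single 0 1)) hDeq1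
    simp only [ContinuousLinearMap.sub_apply, ContinuousLinearMap.add_apply,
      ContinuousLinearMap.smul_apply, smul_eq_mul] at E1 E2
    rw [second_symm hc1 (Pi.single 1 1) (Pi.single 0 1),
      second_symm hc0 (Pi.single 1 1) (Pi.single 0 1)] at E2
    obtain ⟨k00, k01, k10, k11⟩ := key x hx
    rw [k00, k01, k10, k11] at E1 E2
    have hsum : (α₁ * e x 0 - α₂ * e x 1)^2 + (α₁ * e x 1 + α₂ * e x 0)^2 = 0 := by
      linear_combination E2 - E1
    have hL0 : α₁ * e x 0 - α₂ * e x 1 = 0 := by nlinarith [sq_nonneg (α₁ * e x 0 - α₂ * e x 1), sq_nonneg (α₁ * e x 1 + α₂ * e x 0)]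
    have hL1 : α₁ * e x 1 + α₂ * e x 0 = 0 := by nlinarith [sq_nonneg (α₁ * e x 0 - α₂ * e x 1), sq_nonneg (α₁ * e x 1 + α₂ * e x 0)]
    rw [hL0, mul_zero] at k00 k01
    rw [hL1, mul_zero] at k10 k11
    -- now assemble fderiv e x = 0
    have hde : DifferentiableAt ℝ e x := (he.contDiffAt hnx).differentiableAt (by norm_num)
    have hcompj : ∀ j : Fin 2, fderiv ℝ (fun z => e z j) x
        = (ContinuousLinearMap.proj (R := ℝ) (φ := fun _ : Fin 2 => ℝ) j).comp (fderiv ℝ e x) := by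
      intro j
      exact ((ContinuousLinearMap.proj (R := ℝ) (φ := fun _ : Fin 2 => ℝ) j).hasFDerivAt.comp x
        hde.hasFDerivAt).fderiv
    have hvdec : ∀ v : Fin 2 → ℝ, v = v 0 • (Pi.single 0 1 : Fin 2 → ℝ) + v 1 • (Pi.single 1 1 : Fin 2 → ℝ) := by
      intro v
      funext k
      fin_cases k <;> simp
    have hjz0 : ∀ v : Fin 2 → ℝ, fderiv ℝ (fun z => e z 0) x v = 0 := by
      intro v
      rw [hvdec v, map_add, map_smul, map_smul, k00, k10]
      simp
    have hjz1 : ∀ v : Fin 2 → ℝ, fderiv ℝ (fun z => e z 1) x v = 0 := by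
      intro v
      rw [hvdec v, map_add, map_smul, map_smul, k01, k11]
      simp
    have hc0' : ∀ v : Fin 2 → ℝ, fderiv ℝ e x v 0 = 0 := by
      intro v
      have h := hjz0 v
      rw [hcompj 0] at h
      simpa using h
    have hc1' : ∀ v : Fin 2 → ℝ, fderiv ℝ e x v 1 = 0 := by
      intro v
      have h := hjz1 v
      rw [hcompj 1] at h
      simpa using h
    ext v j
    fin_cases j
    · simpa using hc0' v
    · simpa using hc1' v
  -- Step 3: local constancy
  have hloc : ∀ y ∈ Ω, ∃ ε > 0, Metric.ball y ε ⊆ Ω ∧ ∀ z ∈ Metric.ball y ε, e z = e y := by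
    intro y hy
    obtain ⟨ε, hε, hball⟩ := Metric.isOpen_iff.1 hΩ y hy
    refine ⟨ε, hε, hball, ?_⟩
    intro z hz
    have hdiff : DifferentiableOn ℝ e (Metric.ball y ε) := fun w hw =>
      ((he.contDiffAt (hΩ.mem_nhds (hball hw))).differentiableAt
        (by norm_num)).differentiableWithinAt
    have hzero' : ∀ w ∈ Metric.ball y ε, fderivWithin ℝ e (Metric.ball y ε) w = 0 := by
      intro w hw
      rw [fderivWithin_of_isOpen Metric.isOpen_ball hw]
      exact hzero w (hball hw)
    exact (convex_ball y ε).is_const_of_fderivWithin_eq_zero hdiff hzero' hz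
      (Metric.mem_ball_self hε)
  -- Step 4: connectedness
  intro x hx
  suffices h : ∀ z ∈ Ω, e z = e x by
    intro y hy
    rw [h y hy]
  by_contra hcon
  push_neg at hcon
  obtain ⟨z₀, hz₀, hz₀ne⟩ := hcon
  set S := {z | z ∈ Ω ∧ e z = e x} with hSdef
  set T := {z | z ∈ Ω ∧ e z ≠ e x} with hTdef
  have hS : IsOpen S := by
    rw [Metric.isOpen_iff]
    intro z hz
    obtain ⟨ε, hε, hball, hconst⟩ := hloc z hz.1
    exact ⟨ε, hε, fun w hw => ⟨hball hw, by rw [hconst w hw, hz.2]⟩⟩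
  have hT : IsOpen T := by
    rw [Metric.isOpen_iff]
    intro z hz
    obtain ⟨ε, hε, hball, hconst⟩ := hloc z hz.1
    exact ⟨ε, hε, fun w hw => ⟨hball hw, by rw [hconst w hw]; exact hz.2⟩⟩
  have hsub : Ω ⊆ S ∪ T := by
    intro z hz
    by_cases h : e z = e x
    · exact Or.inl ⟨hz, h⟩
    · exact Or.inr ⟨hz, h⟩
  have hne := hconn.isPreconnected S T hS hT hsub ⟨x, hx, hx, rfl⟩ ⟨z₀, hz₀, hz₀, hz₀ne⟩
  obtain ⟨w, _, hwS, hwT⟩ := hne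
  exact hwT.2 hwS.2
end

section
/- Let R : ℝ³ → SO(3) be a C¹ matrix field with curl R = α for a constant matrix α ∈ ℝ³ˣ³ (curl taken rowwise). Then α = 0 and R is constant. -/
open Matrix

/-- The Levi-Civita symbol in dimension 3. -/
def eps (i j k : Fin 3) : ℝ :=
  if (i, j, k) = (0, 1, 2) ∨ (i, j, k) = (1, 2, 0) ∨ (i, j, k) = (2, 0, 1) then 1
  else if (i, j, k) = (2, 1, 0) ∨ (i, j, k) = (0, 2, 1) ∨ (i, j, k) = (1, 0, 2) then -1
  else 0

lemma abs4 {a b d e T : ℝ} (ha : |a| ≤ T) (hb : |b| ≤ T) (hd : |d| ≤ T) (he : |e| ≤ T) :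
    |((a - b) + d) - e| ≤ 4 * T := by
  rw [abs_le] at *
  constructor <;> linarith [ha.1, ha.2, hb.1, hb.2, hd.1, hd.2, he.1, he.2]

set_option maxHeartbeats 1000000 in
lemma curl_const_zero (f g : (Fin 3 → ℝ) → ℝ) (hf : ContDiff ℝ 1 f) (hg : ContDiff ℝ 1 g)
    (bf : ∀ x, |f x| ≤ 1) (bg : ∀ x, |g x| ≤ 1) (j1 j2 : Fin 3) (c : ℝ)
    (h : ∀ x, pd j1 f x - pd j2 g x = c) : c = 0 := by
  set L : (ℝ × ℝ) →L[ℝ] (Fin 3 → ℝ) :=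
    (ContinuousLinearMap.fst ℝ ℝ ℝ).smulRight (Pi.single j1 1) +
      (ContinuousLinearMap.snd ℝ ℝ ℝ).smulRight (Pi.single j2 1) with hL
  have hL10 : L (1, 0) = Pi.single j1 1 := by simp [hL]
  have hL01 : L (0, 1) = Pi.single j2 1 := by simp [hL]
  set F : ℝ × ℝ → ℝ := fun p => f (L p) with hF
  set G : ℝ × ℝ → ℝ := fun p => -g (L p) with hG
  set F' : ℝ × ℝ → (ℝ × ℝ) →L[ℝ] ℝ := fun p => (fderiv ℝ f (L p)).comp L with hF'
  set G' : ℝ × ℝ → (ℝ × ℝ) →L[ℝ] ℝ := fun p => -((fderiv ℝ g (L p)).comp L) with hG'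
  have hdF : ∀ p : ℝ × ℝ, HasFDerivAt F (F' p) p := fun p =>
    ((hf.differentiable one_ne_zero (L p)).hasFDerivAt.comp p (L.hasFDerivAt))
  have hdG : ∀ p : ℝ × ℝ, HasFDerivAt G (G' p) p := fun p =>
    ((hg.differentiable one_ne_zero (L p)).hasFDerivAt.comp p (L.hasFDerivAt)).neg
  have hdiv : ∀ p : ℝ × ℝ, F' p (1, 0) + G' p (0, 1) = c := by
    intro p
    have h1 : F' p (1, 0) = pd j1 f (L p) := by simp [hF', pd, hL10]
    have h2 : G' p (0, 1) = -pd j2 g (L p) := by simp [hG', pd, hL01]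
    rw [h1, h2, ← h (L p)]; ring
  have key : ∀ T : ℝ, 0 < T → |c| * (T * T) ≤ 4 * T := by
    intro T hT
    have hle : ((0, 0) : ℝ × ℝ) ≤ (T, T) := ⟨hT.le, hT.le⟩
    have Hi : MeasureTheory.IntegrableOn (fun x : ℝ × ℝ => F' x (1, 0) + G' x (0, 1))
        (Set.Icc ((0, 0) : ℝ × ℝ) (T, T)) := by
      have heq : (fun x : ℝ × ℝ => F' x (1, 0) + G' x (0, 1)) = fun _ => c := funext hdiv
      rw [heq]
      exact (MeasureTheory.integrableOn_const_iff (C := c)).2 (Or.inr (isCompact_Icc.measure_lt_top))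
    have hdivthm := MeasureTheory.integral_divergence_prod_Icc_of_hasFDerivAt_off_countable_of_le
      F G F' G' (0, 0) (T, T) hle ∅ Set.countable_empty
      ((hf.continuous.comp L.continuous).continuousOn)
      (((hg.continuous.comp L.continuous).neg).continuousOn)
      (fun x _ => hdF x) (fun x _ => hdG x) Hi
    have hInt : (∫ x in Set.Icc ((0, 0) : ℝ × ℝ) (T, T), (F' x (1, 0) + G' x (0, 1)))
        = c * (T * T) := by
      simp only [hdiv]
      rw [MeasureTheory.setIntegral_const, smul_eq_mul, mul_comm]
      congr 1
      rw [Set.Icc_prod_eq, MeasureTheory.Measure.volume_eq_prod, MeasureTheory.measureReal_def,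
        MeasureTheory.Measure.prod_prod, Real.volume_Icc]
      simp [ENNReal.toReal_ofReal hT.le]
    have bG : ∀ s t : ℝ, |G (s, t)| ≤ 1 := fun s t => by
      simpa [hG] using bg (L (s, t))
    have bF : ∀ s t : ℝ, |F (s, t)| ≤ 1 := fun s t => bf _
    have i1 : |∫ x in (0:ℝ)..T, G (x, T)| ≤ T := by
      simpa [abs_of_pos hT] using intervalIntegral.norm_integral_le_of_norm_le_const
        (C := 1) (f := fun x => G (x, T)) (a := 0) (b := T)
        (fun x _ => by simpa [Real.norm_eq_abs] using bG x T)
    have i2 : |∫ x in (0:ℝ)..T, G (x, 0)| ≤ T := by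
      simpa [abs_of_pos hT] using intervalIntegral.norm_integral_le_of_norm_le_const
        (C := 1) (f := fun x => G (x, 0)) (a := 0) (b := T)
        (fun x _ => by simpa [Real.norm_eq_abs] using bG x 0)
    have i3 : |∫ y in (0:ℝ)..T, F (T, y)| ≤ T := by
      simpa [abs_of_pos hT] using intervalIntegral.norm_integral_le_of_norm_le_const
        (C := 1) (f := fun y => F (T, y)) (a := 0) (b := T)
        (fun x _ => by simpa [Real.norm_eq_abs] using bF T x)
    have i4 : |∫ y in (0:ℝ)..T, F (0, y)| ≤ T := by
      simpa [abs_of_pos hT] using intervalIntegral.norm_integral_le_of_norm_le_const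
        (C := 1) (f := fun y => F (0, y)) (a := 0) (b := T)
        (fun x _ => by simpa [Real.norm_eq_abs] using bF 0 x)
    calc |c| * (T * T) = |c * (T * T)| := by
          rw [abs_mul, abs_of_pos (by positivity : (0:ℝ) < T * T)]
      _ = |(((∫ x in (0:ℝ)..T, G (x, T)) - ∫ x in (0:ℝ)..T, G (x, 0)) +
            ∫ y in (0:ℝ)..T, F (T, y)) - ∫ y in (0:ℝ)..T, F (0, y)| := by
          rw [← hInt, hdivthm]
      _ ≤ 4 * T := abs4 i1 i2 i3 i4
  by_contra hc
  have hc' : 0 < |c| := abs_pos.mpr hc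
  have hkey := key (8 / |c|) (by positivity)
  have e1 : |c| * (8 / |c| * (8 / |c|)) = 64 / |c| := by
    field_simp; nlinarith [abs_mul_abs_self c]
  have e2 : (4:ℝ) * (8 / |c|) = 32 / |c| := by ring
  rw [e1, e2] at hkey
  have := (div_le_div_iff₀ hc' hc').mp hkey
  nlinarith

theorem rotation_field_constant_curl_R3
    (R : (Fin 3 → ℝ) → Fin 3 → Fin 3 → ℝ) (hR : ContDiff ℝ 1 R)
    (hSO : ∀ x, (Matrix.of (R x))ᵀ * Matrix.of (R x) = 1 ∧ (Matrix.of (R x)).det = 1)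
    (α : Matrix (Fin 3) (Fin 3) ℝ)
    (hcurl : ∀ x, ∀ i l : Fin 3,
      ∑ j, ∑ k, eps l j k * pd j (fun y => R y i k) x = α i l) :
    α = 0 ∧ ∀ x y, R x = R y := by
  have hcomp : ∀ i k, ContDiff ℝ 1 (fun y => R y i k) := fun i k =>
    contDiff_pi.mp (contDiff_pi.mp hR i) k
  have horth : ∀ y k m, ∑ i, R y i k * R y i m = if k = m then (1:ℝ) else 0 := by
    intro y k m
    have h1 := congrArg (fun M => M k m) (hSO y).1
    simpa [Matrix.mul_apply, Matrix.one_apply] using h1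
  have horth2 : ∀ y i i', ∑ m, R y i m * R y i' m = if i = i' then (1:ℝ) else 0 := by
    intro y i i'
    have h1 := congrArg (fun M => M i i') (mul_eq_one_comm.mpr (hSO y).1)
    simpa [Matrix.mul_apply, Matrix.one_apply] using h1
  have hbound : ∀ y i k, |R y i k| ≤ 1 := by
    intro y i k
    have hle : R y i k * R y i k ≤ 1 := by
      have h1 := horth y k k
      simp at h1
      rw [← h1]
      exact Finset.single_le_sum (fun j _ => mul_self_nonneg (R y j k)) (Finset.mem_univ i)
    exact abs_le_one_iff_mul_self_le_one.mpr hle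
  -- the three components of the curl relation
  have hc0 : ∀ x i, pd 1 (fun y => R y i 2) x - pd 2 (fun y => R y i 1) x = α i 0 := by
    intro x i
    have h := hcurl x i 0
    simp [Fin.sum_univ_three, eps, Prod.ext_iff] at h
    linarith [h]
  have hc1 : ∀ x i, pd 2 (fun y => R y i 0) x - pd 0 (fun y => R y i 2) x = α i 1 := by
    intro x i
    have h := hcurl x i 1
    simp [Fin.sum_univ_three, eps, Prod.ext_iff] at h
    linarith [h]
  have hc2 : ∀ x i, pd 0 (fun y => R y i 1) x - pd 1 (fun y => R y i 0) x = α i 2 := by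
    intro x i
    have h := hcurl x i 2
    simp [Fin.sum_univ_three, eps, Prod.ext_iff] at h
    linarith [h]
  -- Part 1 : α = 0
  have hα : α = 0 := by
    have h0 : ∀ i, α i 0 = 0 := fun i =>
      curl_const_zero _ _ (hcomp i 2) (hcomp i 1) (fun y => hbound y i 2)
        (fun y => hbound y i 1) 1 2 _ (fun y => hc0 y i)
    have h1 : ∀ i, α i 1 = 0 := fun i =>
      curl_const_zero _ _ (hcomp i 0) (hcomp i 2) (fun y => hbound y i 0)
        (fun y => hbound y i 2) 2 0 _ (fun y => hc1 y i)
    have h2 : ∀ i, α i 2 = 0 := fun i =>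
      curl_const_zero _ _ (hcomp i 1) (hcomp i 0) (fun y => hbound y i 1)
        (fun y => hbound y i 0) 0 1 _ (fun y => hc2 y i)
    ext i l
    fin_cases l
    · exact h0 i
    · exact h1 i
    · exact h2 i
  refine ⟨hα, ?_⟩
  rw [hα] at hc0 hc1 hc2
  simp only [Matrix.zero_apply, sub_eq_zero] at hc0 hc1 hc2
  -- Part 2 : all partial derivatives vanish
  have hd0 : ∀ x j i k, pd j (fun y => R y i k) x = 0 := by
    intro x
    set d : Fin 3 → Fin 3 → Fin 3 → ℝ := fun j i k => pd j (fun y => R y i k) x with hd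
    show ∀ j i k, d j i k = 0
    -- symmetry from zero curl
    have hS : ∀ i j k, d j i k = d k i j := by
      intro i j k
      fin_cases j <;> fin_cases k <;>
        simp only [hd] <;>
        first
          | rfl
          | (exact hc0 x i) | (exact (hc0 x i).symm)
          | (exact hc1 x i) | (exact (hc1 x i).symm)
          | (exact hc2 x i) | (exact (hc2 x i).symm)
    -- skew-symmetry from orthogonality
    have hA : ∀ j k m : Fin 3, ∑ i, (R x i k * d j i m + R x i m * d j i k) = 0 := by
      intro j k m
      have hder : HasFDerivAt (fun y => ∑ i, R y i k * R y i m)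
          (∑ i, (R x i k • fderiv ℝ (fun y => R y i m) x
            + R x i m • fderiv ℝ (fun y => R y i k) x)) x :=
        HasFDerivAt.fun_sum fun i _ =>
          (((hcomp i k).differentiable one_ne_zero x).hasFDerivAt.mul
            ((hcomp i m).differentiable one_ne_zero x).hasFDerivAt)
      have hcon : (fun y => ∑ i, R y i k * R y i m) = fun _ => (if k = m then (1:ℝ) else 0) :=
        funext fun y => horth y k m
      have hzero : HasFDerivAt (fun y => ∑ i, R y i k * R y i m)
          (0 : (Fin 3 → ℝ) →L[ℝ] ℝ) x := by
        rw [hcon]; exact hasFDerivAt_const _ _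
      have huniq := hder.unique hzero
      have h2 := congrArg (fun Φ : (Fin 3 → ℝ) →L[ℝ] ℝ => Φ (Pi.single j 1)) huniq
      simpa [ContinuousLinearMap.sum_apply, hd, pd] using h2
    set a : Fin 3 → Fin 3 → Fin 3 → ℝ := fun j m k => ∑ i, R x i m * d j i k with ha
    have hskew : ∀ j m k, a j k m + a j m k = 0 := by
      intro j m k
      have := hA j k m
      rwa [Finset.sum_add_distrib] at this
    have hsym : ∀ j m k, a j m k = a k m j :=
      fun j m k => Finset.sum_congr rfl fun i _ => by rw [hS i j k]
    have hazero : ∀ j m k, a j m k = 0 := by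
      intro j m k
      linarith [hskew j m k, hsym j k m, hskew m k j, hsym m j k, hskew k j m, hsym k m j]
    intro j i k
    have hrec : ∀ i', ∑ m, R x i m * (R x i' m * d j i' k)
        = (if i = i' then (1:ℝ) else 0) * d j i' k := fun i' => by
      rw [← horth2 x i i', Finset.sum_mul]
      exact Finset.sum_congr rfl fun m _ => by ring
    have : d j i k = ∑ m, R x i m * a j m k := by
      simp only [ha, Finset.mul_sum]
      rw [Finset.sum_comm]
      simp only [hrec]
      simp
    rw [this]
    simp [hazero]
  -- Part 2 conclusion : R is constant
  have hfz : ∀ i k x, fderiv ℝ (fun y => R y i k) x = 0 := by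
    intro i k x
    apply ContinuousLinearMap.ext
    intro v
    have hv : v = ∑ j, v j • (Pi.single j 1 : Fin 3 → ℝ) := by
      funext j'
      simp [Finset.sum_apply, Pi.single_apply]
    rw [hv, map_sum]
    simp only [_root_.map_smul]
    have hz : ∀ j : Fin 3, fderiv ℝ (fun y => R y i k) x (Pi.single j 1) = 0 := fun j => hd0 x j i k
    simp [hz]
  intro x y
  funext i k
  exact is_const_of_fderiv_eq_zero ((hcomp i k).differentiable one_ne_zero) (hfz i k) x y
end

section
/- Let α ∈ ℝ³ˣ³ be a matrix, v ∈ ℝ³ a unit vector with αv ≠ 0, and suppose R : Ω → SO(3) is C¹ with curl R = α on Ω, where Ω contains a closed disk of radius ρ with unit normal v and ρ > 2/‖αv‖. Then a contradiction follows; equivalently, for any C¹ field R : Ω → SO(3) with curl R = α constant, every disk D ⊆ Ω of radius ρ with unit normal v satisfies πρ²‖αv‖ ≤ 2πρ. -/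
open Matrix

open Real

lemma exists_unit_perp (v : Fin 3 → ℝ) (hv : ∑ i, v i ^ 2 = 1) :
    ∃ u : Fin 3 → ℝ, (∑ i, u i ^ 2 = 1) ∧ (∑ i, u i * v i = 0) := by
  by_cases h : v 0 = 0 ∧ v 1 = 0
  · exact ⟨![1, 0, 0], by simp [Fin.sum_univ_three], by simp [Fin.sum_univ_three, h.1]⟩
  · have hpos : 0 < v 0 ^ 2 + v 1 ^ 2 := by
      rcases not_and_or.1 h with h0 | h1
      · positivity
      · positivity
    set s := Real.sqrt (v 0 ^ 2 + v 1 ^ 2) with hs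
    have hs0 : 0 < s := Real.sqrt_pos.2 hpos
    have hs2 : s ^ 2 = v 0 ^ 2 + v 1 ^ 2 := Real.sq_sqrt hpos.le
    refine ⟨![-(v 1) / s, v 0 / s, 0], ?_, ?_⟩
    · simp only [Fin.sum_univ_three, Matrix.cons_val_zero, Matrix.cons_val_one, Matrix.cons_val_two, Matrix.head_cons, Matrix.tail_cons]
      field_simp
      linarith [hs2]
    · simp only [Fin.sum_univ_three, Matrix.cons_val_zero, Matrix.cons_val_one, Matrix.cons_val_two, Matrix.head_cons, Matrix.tail_cons]
      field_simp
      ring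
lemma exists_frame (v : Fin 3 → ℝ) (hv : ∑ i, v i ^ 2 = 1) :
    ∃ e₁ e₂ : Fin 3 → ℝ, (∑ k, e₁ k ^ 2 = 1) ∧ (∑ k, e₂ k ^ 2 = 1) ∧
      (∑ k, e₁ k * e₂ k = 0) ∧ (∑ k, e₁ k * v k = 0) ∧ (∑ k, e₂ k * v k = 0) ∧
      (∀ j k : Fin 3, e₁ j * e₂ k - e₂ j * e₁ k = ∑ l, eps l j k * v l) := by
  obtain ⟨u, hu1, huv⟩ := exists_unit_perp v hv
  simp only [Fin.sum_univ_three] at hu1 huv hv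
  refine ⟨u, ![v 1 * u 2 - v 2 * u 1, v 2 * u 0 - v 0 * u 2, v 0 * u 1 - v 1 * u 0],
    ?_, ?_, ?_, ?_, ?_, ?_⟩
  · simp only [Fin.sum_univ_three]; linarith [hu1]
  · simp only [Fin.sum_univ_three, Matrix.cons_val_zero, Matrix.cons_val_one, Matrix.head_cons,
      Matrix.cons_val_two, Matrix.tail_cons]
    nlinarith [hu1, huv, hv]
  · simp only [Fin.sum_univ_three, Matrix.cons_val_zero, Matrix.cons_val_one, Matrix.head_cons,
      Matrix.cons_val_two, Matrix.tail_cons]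
    ring
  · simp only [Fin.sum_univ_three]; linarith [huv]
  · simp only [Fin.sum_univ_three, Matrix.cons_val_zero, Matrix.cons_val_one, Matrix.head_cons,
      Matrix.cons_val_two, Matrix.tail_cons]
    ring
  · intro j k
    fin_cases j <;> fin_cases k <;>
      simp (config := { decide := true }) [eps, Fin.sum_univ_three] <;>
      first
        | linear_combination v 2 * hu1 - u 2 * huv
        | linear_combination -(v 2) * hu1 + u 2 * huv
        | linear_combination v 1 * hu1 - u 1 * huv
        | linear_combination -(v 1) * hu1 + u 1 * huv
        | linear_combination v 0 * hu1 - u 0 * huv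
        | linear_combination -(v 0) * hu1 + u 0 * huv
        | ring


noncomputable def gam (c e₁ e₂ : Fin 3 → ℝ) (p : ℝ × ℝ) : Fin 3 → ℝ :=
  fun k => c k + (p.1 * Real.cos p.2) * e₁ k + (p.1 * Real.sin p.2) * e₂ k

lemma clm_expand (L : (Fin 3 → ℝ) →L[ℝ] ℝ) (y : Fin 3 → ℝ) :
    L y = ∑ j, y j * L (Pi.single j 1) := by
  have hy : y = ∑ j, y j • (Pi.single j 1 : Fin 3 → ℝ) := by
    funext k
    simp [Finset.sum_apply, Pi.single_apply, Finset.sum_ite_eq']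
  conv_lhs => rw [hy]
  rw [map_sum]
  simp [smul_eq_mul]

lemma gam_cont (c e₁ e₂ : Fin 3 → ℝ) : Continuous (gam c e₁ e₂) := by
  apply continuous_pi
  intro k
  unfold gam
  fun_prop

lemma gam_diff (c e₁ e₂ : Fin 3 → ℝ) (p : ℝ × ℝ) : DifferentiableAt ℝ (gam c e₁ e₂) p := by
  apply differentiableAt_pi.2
  intro k
  unfold gam
  fun_prop

lemma L2 (c e₁ e₂ : Fin 3 → ℝ) (r θ : ℝ) :
    HasDerivAt (fun t => gam c e₁ e₂ (t, θ))
      (fun k => Real.cos θ * e₁ k + Real.sin θ * e₂ k) r := by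
  apply hasDerivAt_pi.2
  intro k
  unfold gam
  simp only
  have h1 : HasDerivAt (fun t : ℝ => c k + (t * Real.cos θ) * e₁ k + (t * Real.sin θ) * e₂ k)
      ((1 * Real.cos θ) * e₁ k + (1 * Real.sin θ) * e₂ k) r :=
    ((((hasDerivAt_id r).mul_const (Real.cos θ)).mul_const (e₁ k)).const_add (c k)).add
      (((hasDerivAt_id r).mul_const (Real.sin θ)).mul_const (e₂ k))
  simpa using h1

lemma L3 (c e₁ e₂ : Fin 3 → ℝ) (r θ : ℝ) :
    HasDerivAt (fun t => gam c e₁ e₂ (r, t))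
      (fun k => (r * -Real.sin θ) * e₁ k + (r * Real.cos θ) * e₂ k) θ := by
  apply hasDerivAt_pi.2
  intro k
  unfold gam
  simp only
  exact ((((Real.hasDerivAt_cos θ).const_mul r).mul_const (e₁ k)).const_add (c k)).add
      (((Real.hasDerivAt_sin θ).const_mul r).mul_const (e₂ k))

noncomputable def ff (G : (Fin 3 → ℝ) → Fin 3 → ℝ) (c e₁ e₂ : Fin 3 → ℝ) (p : ℝ × ℝ) : ℝ :=
  ∑ k, G (gam c e₁ e₂ p) k * (p.1 * (-Real.sin p.2 * e₁ k + Real.cos p.2 * e₂ k))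

noncomputable def ggf (G : (Fin 3 → ℝ) → Fin 3 → ℝ) (c e₁ e₂ : Fin 3 → ℝ) (p : ℝ × ℝ) : ℝ :=
  -∑ k, G (gam c e₁ e₂ p) k * (Real.cos p.2 * e₁ k + Real.sin p.2 * e₂ k)

lemma L4 (G : (Fin 3 → ℝ) → Fin 3 → ℝ) (c e₁ e₂ : Fin 3 → ℝ) (r θ : ℝ)
    (D : Fin 3 → ((Fin 3 → ℝ) →L[ℝ] ℝ))
    (hDk : ∀ k, HasFDerivAt (fun y => G y k) (D k) (gam c e₁ e₂ (r, θ))) :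
    HasDerivAt (fun t => ff G c e₁ e₂ (t, θ))
      (∑ k, (D k (fun k' => Real.cos θ * e₁ k' + Real.sin θ * e₂ k') *
          (r * (-Real.sin θ * e₁ k + Real.cos θ * e₂ k))
        + G (gam c e₁ e₂ (r, θ)) k * (-Real.sin θ * e₁ k + Real.cos θ * e₂ k))) r := by
  unfold ff
  apply HasDerivAt.fun_sum
  intro k _
  have h1 : HasDerivAt (fun t => G (gam c e₁ e₂ (t, θ)) k)
      (D k (fun k' => Real.cos θ * e₁ k' + Real.sin θ * e₂ k')) r :=
    by have := (hDk k).comp_hasDerivAt r (L2 c e₁ e₂ r θ); exact this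
  have h2 : HasDerivAt (fun t : ℝ => t * (-Real.sin θ * e₁ k + Real.cos θ * e₂ k))
      (1 * (-Real.sin θ * e₁ k + Real.cos θ * e₂ k)) r :=
    (hasDerivAt_id r).mul_const _
  simpa [Pi.mul_def] using h1.mul h2

lemma L5 (G : (Fin 3 → ℝ) → Fin 3 → ℝ) (c e₁ e₂ : Fin 3 → ℝ) (r θ : ℝ)
    (D : Fin 3 → ((Fin 3 → ℝ) →L[ℝ] ℝ))
    (hDk : ∀ k, HasFDerivAt (fun y => G y k) (D k) (gam c e₁ e₂ (r, θ))) :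
    HasDerivAt (fun t => ggf G c e₁ e₂ (r, t))
      (-∑ k, (D k (fun k' => (r * -Real.sin θ) * e₁ k' + (r * Real.cos θ) * e₂ k') *
          (Real.cos θ * e₁ k + Real.sin θ * e₂ k)
        + G (gam c e₁ e₂ (r, θ)) k * (-Real.sin θ * e₁ k + Real.cos θ * e₂ k))) θ := by
  unfold ggf
  apply HasDerivAt.neg
  apply HasDerivAt.fun_sum
  intro k _
  have h1 : HasDerivAt (fun t => G (gam c e₁ e₂ (r, t)) k)
      (D k (fun k' => (r * -Real.sin θ) * e₁ k' + (r * Real.cos θ) * e₂ k')) θ :=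
    by have := (hDk k).comp_hasDerivAt θ (L3 c e₁ e₂ r θ); exact this
  have h2 : HasDerivAt (fun t : ℝ => Real.cos t * e₁ k + Real.sin t * e₂ k)
      (-Real.sin θ * e₁ k + Real.cos θ * e₂ k) θ :=
    ((Real.hasDerivAt_cos θ).mul_const (e₁ k)).add ((Real.hasDerivAt_sin θ).mul_const (e₂ k))
  simpa [Pi.mul_def] using h1.mul h2

lemma slice_sum (r θ A : ℝ) (e₁ e₂ : Fin 3 → ℝ) (Gv : Fin 3 → ℝ)
    (D : Fin 3 → ((Fin 3 → ℝ) →L[ℝ] ℝ))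
    (hA : ∑ j, ∑ k, D k (Pi.single j 1) * (e₁ j * e₂ k - e₂ j * e₁ k) = A) :
    (∑ k, (D k (fun k' => Real.cos θ * e₁ k' + Real.sin θ * e₂ k') *
        (r * (-Real.sin θ * e₁ k + Real.cos θ * e₂ k))
      + Gv k * (-Real.sin θ * e₁ k + Real.cos θ * e₂ k)))
    + (-∑ k, (D k (fun k' => (r * -Real.sin θ) * e₁ k' + (r * Real.cos θ) * e₂ k') *
        (Real.cos θ * e₁ k + Real.sin θ * e₂ k)
      + Gv k * (-Real.sin θ * e₁ k + Real.cos θ * e₂ k)))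
    = r * A := by
  rw [← sub_eq_add_neg, ← Finset.sum_sub_distrib]
  have step1 : ∀ k : Fin 3,
      (D k (fun k' => Real.cos θ * e₁ k' + Real.sin θ * e₂ k') *
        (r * (-Real.sin θ * e₁ k + Real.cos θ * e₂ k))
      + Gv k * (-Real.sin θ * e₁ k + Real.cos θ * e₂ k))
      - (D k (fun k' => (r * -Real.sin θ) * e₁ k' + (r * Real.cos θ) * e₂ k') *
          (Real.cos θ * e₁ k + Real.sin θ * e₂ k)
        + Gv k * (-Real.sin θ * e₁ k + Real.cos θ * e₂ k))
      = r * ∑ j, D k (Pi.single j 1) * (e₁ j * e₂ k - e₂ j * e₁ k) := by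
    intro k
    rw [clm_expand (D k) (fun k' => Real.cos θ * e₁ k' + Real.sin θ * e₂ k'),
        clm_expand (D k) (fun k' => (r * -Real.sin θ) * e₁ k' + (r * Real.cos θ) * e₂ k'),
        Finset.mul_sum, Finset.sum_mul, Finset.sum_mul]
    rw [add_sub_add_right_eq_sub, ← Finset.sum_sub_distrib]
    apply Finset.sum_congr rfl
    intro j _
    have hsc := Real.sin_sq_add_cos_sq θ
    linear_combination (r * D k (Pi.single j 1) * (e₁ j * e₂ k - e₂ j * e₁ k)) * hsc
  calc (∑ k, _) = ∑ k, r * ∑ j, D k (Pi.single j 1) * (e₁ j * e₂ k - e₂ j * e₁ k) :=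
        Finset.sum_congr rfl fun k _ => step1 k
    _ = r * ∑ k, ∑ j, D k (Pi.single j 1) * (e₁ j * e₂ k - e₂ j * e₁ k) := by
        rw [Finset.mul_sum]
    _ = r * A := by rw [Finset.sum_comm]; rw [hA]

lemma green_disk (Ω : Set (Fin 3 → ℝ)) (hΩ : IsOpen Ω)
    (G : (Fin 3 → ℝ) → Fin 3 → ℝ) (hG : ContDiffOn ℝ 1 G Ω)
    (hunit : ∀ x ∈ Ω, ∑ k, (G x k) ^ 2 = 1)
    (e₁ e₂ c : Fin 3 → ℝ)
    (he₁ : ∑ k, e₁ k ^ 2 = 1) (he₂ : ∑ k, e₂ k ^ 2 = 1) (he₁₂ : ∑ k, e₁ k * e₂ k = 0)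
    (ρ : ℝ) (hρ : 0 < ρ) (A : ℝ)
    (hsub : ∀ p : ℝ × ℝ, p.1 ∈ Set.Icc 0 ρ → gam c e₁ e₂ p ∈ Ω)
    (hkey : ∀ x ∈ Ω, ∑ j, ∑ k,
        fderiv ℝ (fun y => G y k) x (Pi.single j 1) * (e₁ j * e₂ k - e₂ j * e₁ k) = A) :
    Real.pi * ρ ^ 2 * A ≤ 2 * Real.pi * ρ := by
  have hπ : (0:ℝ) < 2 * π := by positivity
  have hGk : ∀ x ∈ Ω, ∀ k : Fin 3,
      HasFDerivAt (fun y => G y k) (fderiv ℝ (fun y => G y k) x) x := by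
    intro x hx k
    exact (((contDiffOn_pi.mp hG k).differentiableOn one_ne_zero).differentiableAt
      (hΩ.mem_nhds hx)).hasFDerivAt
  -- differentiability of ff / ggf
  have hffd : ∀ p : ℝ × ℝ, gam c e₁ e₂ p ∈ Ω → DifferentiableAt ℝ (ff G c e₁ e₂) p := by
    intro p hp
    unfold ff
    apply DifferentiableAt.fun_sum
    intro k _
    exact (((hGk _ hp k).differentiableAt).comp p (gam_diff c e₁ e₂ p)).mul (by fun_prop)
  have hggd : ∀ p : ℝ × ℝ, gam c e₁ e₂ p ∈ Ω → DifferentiableAt ℝ (ggf G c e₁ e₂) p := by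
    intro p hp
    unfold ggf
    apply DifferentiableAt.neg
    apply DifferentiableAt.fun_sum
    intro k _
    exact (((hGk _ hp k).differentiableAt).comp p (gam_diff c e₁ e₂ p)).mul (by fun_prop)
  -- continuity on the rectangle
  have hmaps : Set.MapsTo (gam c e₁ e₂) (Set.uIcc 0 ρ ×ˢ Set.uIcc 0 (2*π)) Ω := by
    intro p hp
    apply hsub
    have := hp.1
    rwa [Set.uIcc_of_le hρ.le] at this
  have hGcont : ∀ k : Fin 3, ContinuousOn (fun x => G x k) Ω :=
    fun k => (contDiffOn_pi.mp hG k).continuousOn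
  have hffc : ContinuousOn (ff G c e₁ e₂) (Set.uIcc 0 ρ ×ˢ Set.uIcc 0 (2*π)) := by
    unfold ff
    apply continuousOn_finset_sum
    intro k _
    exact (ContinuousOn.comp (hGcont k) (gam_cont c e₁ e₂).continuousOn hmaps).mul
      (Continuous.continuousOn (by fun_prop))
  have hggc : ContinuousOn (ggf G c e₁ e₂) (Set.uIcc 0 ρ ×ˢ Set.uIcc 0 (2*π)) := by
    unfold ggf
    apply ContinuousOn.neg
    apply continuousOn_finset_sum
    intro k _
    exact (ContinuousOn.comp (hGcont k) (gam_cont c e₁ e₂).continuousOn hmaps).mul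
      (Continuous.continuousOn (by fun_prop))
  -- divergence identity
  have hdiv : ∀ p : ℝ × ℝ, p.1 ∈ Set.Icc 0 ρ →
      fderiv ℝ (ff G c e₁ e₂) p (1, 0) + fderiv ℝ (ggf G c e₁ e₂) p (0, 1) = p.1 * A := by
    rintro ⟨r, θ⟩ hp1
    have hp : gam c e₁ e₂ (r, θ) ∈ Ω := hsub _ hp1
    have hDk : ∀ k : Fin 3, HasFDerivAt (fun y => G y k)
        (fderiv ℝ (fun y => G y k) (gam c e₁ e₂ (r, θ))) (gam c e₁ e₂ (r, θ)) :=
      fun k => hGk _ hp k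
    have h4 := L4 G c e₁ e₂ r θ _ hDk
    have h5 := L5 G c e₁ e₂ r θ _ hDk
    have hf1 : HasDerivAt (fun t => ff G c e₁ e₂ (t, θ))
        (fderiv ℝ (ff G c e₁ e₂) (r, θ) (1, 0)) r :=
      (hffd (r, θ) hp).hasFDerivAt.comp_hasDerivAt (f := fun t => (id t, θ)) r
        ((hasDerivAt_id r).prodMk (hasDerivAt_const r θ))
    have hg1 : HasDerivAt (fun t => ggf G c e₁ e₂ (r, t))
        (fderiv ℝ (ggf G c e₁ e₂) (r, θ) (0, 1)) θ :=
      (hggd (r, θ) hp).hasFDerivAt.comp_hasDerivAt (f := fun t => (r, id t)) θ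
        ((hasDerivAt_const θ r).prodMk (hasDerivAt_id θ))
    rw [hf1.unique h4, hg1.unique h5]
    exact slice_sum r θ A e₁ e₂ (fun k => G (gam c e₁ e₂ (r, θ)) k) _ (hkey _ hp)
  -- integrability of the divergence
  have hmeas : MeasurableSet (Set.uIcc (0:ℝ) ρ ×ˢ Set.uIcc (0:ℝ) (2*π)) :=
    measurableSet_uIcc.prod measurableSet_uIcc
  have hIc : MeasureTheory.IntegrableOn
      (fun p : ℝ × ℝ => fderiv ℝ (ff G c e₁ e₂) p (1, 0) + fderiv ℝ (ggf G c e₁ e₂) p (0, 1))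
      (Set.uIcc 0 ρ ×ˢ Set.uIcc 0 (2*π)) := by
    have hint : MeasureTheory.IntegrableOn (fun p : ℝ × ℝ => p.1 * A)
        (Set.uIcc 0 ρ ×ˢ Set.uIcc 0 (2*π)) :=
      (continuous_fst.mul continuous_const).continuousOn.integrableOn_compact
        (isCompact_uIcc.prod isCompact_uIcc)
    apply hint.congr_fun _ hmeas
    intro p hp
    have : p.1 ∈ Set.Icc 0 ρ := by
      have := hp.1; rwa [Set.uIcc_of_le hρ.le] at this
    exact (hdiv p this).symm
  -- Green's theorem
  have hgreen := MeasureTheory.integral2_divergence_prod_of_hasFDerivAt_off_countable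
    (ff G c e₁ e₂) (ggf G c e₁ e₂)
    (fun p => fderiv ℝ (ff G c e₁ e₂) p) (fun p => fderiv ℝ (ggf G c e₁ e₂) p)
    0 0 ρ (2*π) ∅ Set.countable_empty hffc hggc
    (fun p hp => by
      refine ((hffd p ?_).hasFDerivAt)
      apply hsub
      have := (hp.1).1
      rw [min_eq_left hρ.le, max_eq_right hρ.le] at this
      exact ⟨this.1.le, this.2.le⟩)
    (fun p hp => by
      refine ((hggd p ?_).hasFDerivAt)
      apply hsub
      have := (hp.1).1
      rw [min_eq_left hρ.le, max_eq_right hρ.le] at this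
      exact ⟨this.1.le, this.2.le⟩)
    hIc
  -- LHS equals π ρ² A
  have hL : (∫ x in (0:ℝ)..ρ, ∫ y in (0:ℝ)..(2*π),
      (fderiv ℝ (ff G c e₁ e₂) (x, y) (1, 0) + fderiv ℝ (ggf G c e₁ e₂) (x, y) (0, 1)))
      = π * ρ ^ 2 * A := by
    have h1 : Set.EqOn
        (fun x => ∫ y in (0:ℝ)..(2*π),
          (fderiv ℝ (ff G c e₁ e₂) (x, y) (1, 0) + fderiv ℝ (ggf G c e₁ e₂) (x, y) (0, 1)))
        (fun x => 2 * π * (x * A)) (Set.uIcc (0:ℝ) ρ) := by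
      intro x hx
      have hx' : x ∈ Set.Icc 0 ρ := by rwa [Set.uIcc_of_le hρ.le] at hx
      have h2 : Set.EqOn
          (fun y => fderiv ℝ (ff G c e₁ e₂) (x, y) (1, 0) + fderiv ℝ (ggf G c e₁ e₂) (x, y) (0, 1))
          (fun _ => x * A) (Set.uIcc (0:ℝ) (2*π)) := fun y _ => hdiv (x, y) hx'
      simp only
      rw [intervalIntegral.integral_congr h2, intervalIntegral.integral_const, smul_eq_mul]
      ring
    rw [intervalIntegral.integral_congr h1]
    have h3 : (fun x : ℝ => 2 * π * (x * A)) = fun x : ℝ => (2 * π * A) * x := by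
      funext x; ring
    rw [h3, intervalIntegral.integral_const_mul, integral_id]
    ring
  -- boundary simplifications
  have hbg : ∫ x in (0:ℝ)..ρ, ggf G c e₁ e₂ (x, 2*π) = ∫ x in (0:ℝ)..ρ, ggf G c e₁ e₂ (x, 0) := by
    apply intervalIntegral.integral_congr
    intro x _
    unfold ggf gam
    norm_num
  have hf0 : ∫ y in (0:ℝ)..(2*π), ff G c e₁ e₂ (0, y) = 0 := by
    have h2 : Set.EqOn (fun y => ff G c e₁ e₂ (0, y)) (fun _ => (0:ℝ))
        (Set.uIcc (0:ℝ) (2*π)) := by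
      intro y _
      unfold ff
      simp
    rw [intervalIntegral.integral_congr h2]
    simp
  -- pointwise bound on the circle
  have hb : ∀ y : ℝ, ff G c e₁ e₂ (ρ, y) ≤ ρ := by
    intro y
    have hp : gam c e₁ e₂ (ρ, y) ∈ Ω := hsub (ρ, y) ⟨hρ.le, le_rfl⟩
    have hu := hunit _ hp
    have hsc := Real.sin_sq_add_cos_sq y
    have ht2 : ∑ k, (-Real.sin y * e₁ k + Real.cos y * e₂ k) ^ 2 = 1 := by
      simp only [Fin.sum_univ_three] at he₁ he₂ he₁₂ ⊢
      linear_combination (Real.sin y)^2 * he₁ + (Real.cos y)^2 * he₂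
        - 2 * Real.sin y * Real.cos y * he₁₂ + hsc
    have hcs : (∑ k, G (gam c e₁ e₂ (ρ, y)) k * (-Real.sin y * e₁ k + Real.cos y * e₂ k)) ≤ 1 := by
      set a : Fin 3 → ℝ := fun k => G (gam c e₁ e₂ (ρ, y)) k with ha
      set t : Fin 3 → ℝ := fun k => -Real.sin y * e₁ k + Real.cos y * e₂ k with htd
      have hu' : ∑ k, a k ^ 2 = 1 := hu
      have ht2' : ∑ k, t k ^ 2 = 1 := by
        rw [htd]; exact ht2
      have hgoal : ∑ k, a k * t k ≤ 1 := by
        simp only [Fin.sum_univ_three] at hu' ht2' ⊢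
        nlinarith [sq_nonneg (a 0 * t 1 - a 1 * t 0), sq_nonneg (a 0 * t 2 - a 2 * t 0),
          sq_nonneg (a 1 * t 2 - a 2 * t 1),
          sq_nonneg (a 0 * t 0 + a 1 * t 1 + a 2 * t 2 - 1), hu', ht2']
      exact hgoal
    unfold ff
    simp only
    have hmul := mul_le_mul_of_nonneg_left hcs hρ.le
    simp only [Fin.sum_univ_three] at hmul ⊢
    nlinarith [hmul]
  -- integrability on the circle
  have hfint : IntervalIntegrable (fun y => ff G c e₁ e₂ (ρ, y)) MeasureTheory.volume 0 (2*π) := by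
    apply ContinuousOn.intervalIntegrable
    apply hffc.comp (continuous_const.prodMk continuous_id).continuousOn
    intro y hy
    exact ⟨Set.right_mem_uIcc, hy⟩
  have hless : ∫ y in (0:ℝ)..(2*π), ff G c e₁ e₂ (ρ, y) ≤ 2 * π * ρ := by
    have h4 : ∫ y in (0:ℝ)..(2*π), ff G c e₁ e₂ (ρ, y) ≤ ∫ _ in (0:ℝ)..(2*π), ρ := by
      apply intervalIntegral.integral_mono_on hπ.le hfint intervalIntegrable_const
      intro y _
      exact hb y
    have h5 : ∫ _ in (0:ℝ)..(2*π), (ρ:ℝ) = 2 * π * ρ := by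
      rw [intervalIntegral.integral_const, smul_eq_mul]; ring
    linarith
  have hfinal : π * ρ ^ 2 * A = ∫ y in (0:ℝ)..(2*π), ff G c e₁ e₂ (ρ, y) := by
    rw [← hL, hgreen, hbg, hf0]
    ring
  linarith [hfinal, hless]


theorem disk_estimate_for_constant_curl_rotation_field
    (Ω : Set (Fin 3 → ℝ)) (hΩ : IsOpen Ω)
    (R : (Fin 3 → ℝ) → Fin 3 → Fin 3 → ℝ) (hR : ContDiffOn ℝ 1 R Ω)
    (hSO : ∀ x ∈ Ω, (Matrix.of (R x))ᵀ * Matrix.of (R x) = 1 ∧ (Matrix.of (R x)).det = 1)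
    (α : Matrix (Fin 3) (Fin 3) ℝ)
    (hcurl : ∀ x ∈ Ω, ∀ i l : Fin 3,
      ∑ j, ∑ k, eps l j k * pd j (fun y => R y i k) x = α i l)
    (v : Fin 3 → ℝ) (hv : ∑ i, (v i) ^ 2 = 1)
    (c : Fin 3 → ℝ) (ρ : ℝ) (hρ : 0 < ρ)
    (hD : {x : Fin 3 → ℝ | ∑ i, (x i - c i) ^ 2 ≤ ρ ^ 2 ∧ ∑ i, (x i - c i) * v i = 0} ⊆ Ω) :
    Real.pi * ρ ^ 2 * Real.sqrt (∑ i, (∑ j, α i j * v j) ^ 2) ≤ 2 * Real.pi * ρ := by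
  set a : Fin 3 → ℝ := fun i => ∑ j, α i j * v j with ha
  set S : ℝ := ∑ i, a i ^ 2 with hS
  have hS0 : 0 ≤ S := Finset.sum_nonneg fun i _ => sq_nonneg _
  by_cases hSz : S = 0
  · rw [hSz, Real.sqrt_zero, mul_zero]
    positivity
  · have hSpos : 0 < S := lt_of_le_of_ne hS0 (Ne.symm hSz)
    set A : ℝ := Real.sqrt S with hA
    have hApos : 0 < A := Real.sqrt_pos.2 hSpos
    have hA2 : A ^ 2 = S := Real.sq_sqrt hS0
    set w : Fin 3 → ℝ := fun i => a i / A with hw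
    have hwsq : ∑ i, w i ^ 2 = 1 := by
      simp only [hw, Fin.sum_univ_three, div_pow]
      rw [← add_div, ← add_div, hA2]
      rw [hS, Fin.sum_univ_three] at hSz ⊢
      field_simp
    obtain ⟨e₁, e₂, he₁, he₂, he₁₂, he₁v, he₂v, hframe⟩ := exists_frame v hv
    -- differentiability of R components
    have hRd : ∀ x ∈ Ω, ∀ i k : Fin 3, DifferentiableAt ℝ (fun y => R y i k) x := by
      intro x hx i k
      exact ((contDiffOn_pi.mp (contDiffOn_pi.mp hR i) k).differentiableOn
        one_ne_zero).differentiableAt (hΩ.mem_nhds hx)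
    -- the combined field
    have hG : ContDiffOn ℝ 1 (fun x k => ∑ i, w i * R x i k) Ω := by
      apply contDiffOn_pi.mpr
      intro k
      apply ContDiffOn.sum
      intro i _
      exact (contDiffOn_const).mul (contDiffOn_pi.mp (contDiffOn_pi.mp hR i) k)
    have hunit : ∀ x ∈ Ω, ∑ k, ((fun x k => ∑ i, w i * R x i k) x k) ^ 2 = 1 := by
      intro x hx
      have h2 : Matrix.of (R x) * (Matrix.of (R x))ᵀ = 1 :=
        mul_eq_one_comm.mp (hSO x hx).1
      have hor : ∀ i i' : Fin 3, ∑ k, R x i k * R x i' k = if i = i' then 1 else 0 := by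
        intro i i'
        have h3 : (Matrix.of (R x) * (Matrix.of (R x))ᵀ) i i' = (1 : Matrix (Fin 3) (Fin 3) ℝ) i i' := by
          rw [h2]
        simpa [Matrix.mul_apply, Matrix.one_apply, Matrix.transpose_apply] using h3
      have h00 := hor 0 0; have h11 := hor 1 1; have h22 := hor 2 2
      have h01 := hor 0 1; have h02 := hor 0 2; have h12 := hor 1 2
      simp (config := { decide := true }) [Fin.sum_univ_three] at h00 h11 h22 h01 h02 h12
      simp only [Fin.sum_univ_three] at hwsq ⊢
      linear_combination (w 0)^2 * h00 + (w 1)^2 * h11 + (w 2)^2 * h22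
        + 2 * w 0 * w 1 * h01 + 2 * w 0 * w 2 * h02 + 2 * w 1 * w 2 * h12 + hwsq
    -- the disk parametrization lands in Ω
    have hsub : ∀ p : ℝ × ℝ, p.1 ∈ Set.Icc 0 ρ → gam c e₁ e₂ p ∈ Ω := by
      intro p hp1
      apply hD
      constructor
      · have hsc := Real.sin_sq_add_cos_sq p.2
        have heq : ∑ i, (gam c e₁ e₂ p i - c i) ^ 2 = p.1 ^ 2 := by
          unfold gam
          simp only [Fin.sum_univ_three] at he₁ he₂ he₁₂ ⊢
          linear_combination (p.1 * Real.cos p.2)^2 * he₁ + (p.1 * Real.sin p.2)^2 * he₂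
            + 2 * (p.1 * Real.cos p.2) * (p.1 * Real.sin p.2) * he₁₂ + p.1^2 * hsc
        rw [heq]
        have := hp1.1; have := hp1.2
        nlinarith
      · unfold gam
        simp only [Fin.sum_univ_three] at he₁v he₂v ⊢
        linear_combination (p.1 * Real.cos p.2) * he₁v + (p.1 * Real.sin p.2) * he₂v
    -- the key curl contraction
    have hkey : ∀ x ∈ Ω, ∑ j, ∑ k,
        fderiv ℝ (fun y => (fun x k => ∑ i, w i * R x i k) y k) x (Pi.single j 1) *
          (e₁ j * e₂ k - e₂ j * e₁ k) = A := by
      intro x hx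
      have hfd' : ∀ j k : Fin 3,
          fderiv ℝ (fun y => ∑ i, w i * R y i k) x (Pi.single j 1)
            = ∑ i, w i * pd j (fun y => R y i k) x := by
        intro j k
        have hsum : HasFDerivAt (fun y => ∑ i, w i * R y i k)
            (∑ i, w i • fderiv ℝ (fun y => R y i k) x) x := by
          apply HasFDerivAt.fun_sum
          intro i _
          exact ((hRd x hx i k).hasFDerivAt).const_mul (w i)
        rw [hsum.fderiv]
        simp [pd, ContinuousLinearMap.sum_apply]
      have hwa : ∑ i, w i * a i = A := by
        simp only [hw, Fin.sum_univ_three]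
        rw [div_mul_eq_mul_div, div_mul_eq_mul_div, div_mul_eq_mul_div,
          ← add_div, ← add_div]
        rw [show a 0 * a 0 + a 1 * a 1 + a 2 * a 2 = A ^ 2 by
          rw [hA2, hS, Fin.sum_univ_three]; ring]
        rw [sq, mul_div_assoc, div_self hApos.ne', mul_one]
      have h00 := hcurl x hx 0 0; have h01 := hcurl x hx 0 1; have h02 := hcurl x hx 0 2
      have h10 := hcurl x hx 1 0; have h11 := hcurl x hx 1 1; have h12 := hcurl x hx 1 2
      have h20 := hcurl x hx 2 0; have h21 := hcurl x hx 2 1; have h22 := hcurl x hx 2 2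
      simp (config := { decide := true }) only [Fin.sum_univ_three, eps] at h00 h01 h02 h10 h11 h12 h20 h21 h22
      rw [← hwa]
      simp only [hfd', hframe]
      simp (config := { decide := true }) only [Fin.sum_univ_three, eps]
      simp only [ha, Fin.sum_univ_three]
      linear_combination (w 0 * v 0) * h00 + (w 0 * v 1) * h01 + (w 0 * v 2) * h02
        + (w 1 * v 0) * h10 + (w 1 * v 1) * h11 + (w 1 * v 2) * h12
        + (w 2 * v 0) * h20 + (w 2 * v 1) * h21 + (w 2 * v 2) * h22
    exact green_disk Ω hΩ (fun x k => ∑ i, w i * R x i k) hG hunit e₁ e₂ c he₁ he₂ he₁₂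
      ρ hρ A hsub hkey
end

section
/- Let Ω ⊆ ℝ³ be open and R : Ω → SO(3) a C² matrix field with curl R = α for a constant matrix α ∈ ℝ³ˣ³ (curl taken rowwise). Then for each i ∈ {1,2,3}, div Rᵢ = εᵢⱼₖ αⱼ · Rₖ on Ω, where Rᵢ, αᵢ denote rows. -/
open Matrix

private lemma aux0 (m00 m01 m02 m10 m11 m12 m20 m21 m22 d000 d001 d002 d010 d011 d012 d020 d021 d022 d100 d101 d102 d110 d111 d112 d120 d121 d122 d200 d201 d202 d210 d211 d212 d220 d221 d222 a00 a01 a02 a10 a11 a12 a20 a21 a22 : ℝ)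
    (o00 : m00 * m00 + m10 * m10 + m20 * m20 = 1)
    (o01 : m00 * m01 + m10 * m11 + m20 * m21 = 0)
    (o02 : m00 * m02 + m10 * m12 + m20 * m22 = 0)
    (o11 : m01 * m01 + m11 * m11 + m21 * m21 = 1)
    (o12 : m01 * m02 + m11 * m12 + m21 * m22 = 0)
    (o22 : m02 * m02 + m12 * m12 + m22 * m22 = 1)
    (hdet : m00 * m11 * m22 - m00 * m12 * m21 - m01 * m10 * m22 + m01 * m12 * m20 + m02 * m10 * m21 - m02 * m11 * m20 = 1)
    (c000 : m00 * d000 + m00 * d000 + m10 * d010 + m10 * d010 + m20 * d020 + m20 * d020 = 0)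
    (c001 : m00 * d001 + m01 * d000 + m10 * d011 + m11 * d010 + m20 * d021 + m21 * d020 = 0)
    (c002 : m00 * d002 + m02 * d000 + m10 * d012 + m12 * d010 + m20 * d022 + m22 * d020 = 0)
    (c010 : m01 * d000 + m00 * d001 + m11 * d010 + m10 * d011 + m21 * d020 + m20 * d021 = 0)
    (c011 : m01 * d001 + m01 * d001 + m11 * d011 + m11 * d011 + m21 * d021 + m21 * d021 = 0)
    (c012 : m01 * d002 + m02 * d001 + m11 * d012 + m12 * d011 + m21 * d022 + m22 * d021 = 0)
    (c020 : m02 * d000 + m00 * d002 + m12 * d010 + m10 * d012 + m22 * d020 + m20 * d022 = 0)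
    (c021 : m02 * d001 + m01 * d002 + m12 * d011 + m11 * d012 + m22 * d021 + m21 * d022 = 0)
    (c022 : m02 * d002 + m02 * d002 + m12 * d012 + m12 * d012 + m22 * d022 + m22 * d022 = 0)
    (c100 : m00 * d100 + m00 * d100 + m10 * d110 + m10 * d110 + m20 * d120 + m20 * d120 = 0)
    (c101 : m00 * d101 + m01 * d100 + m10 * d111 + m11 * d110 + m20 * d121 + m21 * d120 = 0)
    (c102 : m00 * d102 + m02 * d100 + m10 * d112 + m12 * d110 + m20 * d122 + m22 * d120 = 0)
    (c110 : m01 * d100 + m00 * d101 + m11 * d110 + m10 * d111 + m21 * d120 + m20 * d121 = 0)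
    (c111 : m01 * d101 + m01 * d101 + m11 * d111 + m11 * d111 + m21 * d121 + m21 * d121 = 0)
    (c112 : m01 * d102 + m02 * d101 + m11 * d112 + m12 * d111 + m21 * d122 + m22 * d121 = 0)
    (c120 : m02 * d100 + m00 * d102 + m12 * d110 + m10 * d112 + m22 * d120 + m20 * d122 = 0)
    (c121 : m02 * d101 + m01 * d102 + m12 * d111 + m11 * d112 + m22 * d121 + m21 * d122 = 0)
    (c122 : m02 * d102 + m02 * d102 + m12 * d112 + m12 * d112 + m22 * d122 + m22 * d122 = 0)
    (c200 : m00 * d200 + m00 * d200 + m10 * d210 + m10 * d210 + m20 * d220 + m20 * d220 = 0)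
    (c201 : m00 * d201 + m01 * d200 + m10 * d211 + m11 * d210 + m20 * d221 + m21 * d220 = 0)
    (c202 : m00 * d202 + m02 * d200 + m10 * d212 + m12 * d210 + m20 * d222 + m22 * d220 = 0)
    (c210 : m01 * d200 + m00 * d201 + m11 * d210 + m10 * d211 + m21 * d220 + m20 * d221 = 0)
    (c211 : m01 * d201 + m01 * d201 + m11 * d211 + m11 * d211 + m21 * d221 + m21 * d221 = 0)
    (c212 : m01 * d202 + m02 * d201 + m11 * d212 + m12 * d211 + m21 * d222 + m22 * d221 = 0)
    (c220 : m02 * d200 + m00 * d202 + m12 * d210 + m10 * d212 + m22 * d220 + m20 * d222 = 0)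
    (c221 : m02 * d201 + m01 * d202 + m12 * d211 + m11 * d212 + m22 * d221 + m21 * d222 = 0)
    (c222 : m02 * d202 + m02 * d202 + m12 * d212 + m12 * d212 + m22 * d222 + m22 * d222 = 0)
    (ha00 : d102 - d201 = a00)
    (ha01 : d200 - d002 = a01)
    (ha02 : d001 - d100 = a02)
    (ha10 : d112 - d211 = a10)
    (ha11 : d210 - d012 = a11)
    (ha12 : d011 - d110 = a12)
    (ha20 : d122 - d221 = a20)
    (ha21 : d220 - d022 = a21)
    (ha22 : d021 - d120 = a22) :
    d000 + d101 + d202 = (a10 * m20 + a11 * m21 + a12 * m22) - (a20 * m10 + a21 * m11 + a22 * m12) := by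
  linear_combination (m20) * ha10 + (m21) * ha11 + (m22) * ha12 + ((-1) * m10) * ha20 + ((-1) * m11) * ha21 + ((-1) * m12) * ha22 + ((1/2) * m00) * c000 + (m01) * c001 + ((-1/2) * m00) * c011 + (m02) * c002 + ((-1/2) * m00) * c022 + (m00) * c110 + ((-1/2) * m01) * c100 + ((1/2) * m01) * c111 + (m02) * c112 + ((-1/2) * m01) * c122 + (m00) * c220 + ((-1/2) * m02) * c200 + (m01) * c221 + ((-1/2) * m02) * c211 + ((1/2) * m02) * c222 + ((-1) * d000 * m00 * m11 * m22) * o00 + (d000 * m00 * m12 * m21) * o00 + (d010 * m00 * m01 * m22) * o00 + ((-1) * d010 * m00 * m02 * m21) * o00 + ((-1) * d020 * m00 * m01 * m12) * o00 + (d020 * m00 * m02 * m11) * o00 + ((-1) * d101 * m00 * m11 * m22) * o00 + (d101 * m00 * m12 * m21) * o00 + (d111 * m00 * m01 * m22) * o00 + ((-1) * d111 * m00 * m02 * m21) * o00 + ((-1) * d121 * m00 * m01 * m12) * o00 + (d121 * m00 * m02 * m11) * o00 + ((-1) * d202 * m00 * m11 * m22) * o00 + (d202 * m00 * m12 * m21)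 * o00 + (d212 * m00 * m01 * m22) * o00 + ((-1) * d212 * m00 * m02 * m21) * o00 + ((-1) * d222 * m00 * m01 * m12) * o00 + (d222 * m00 * m02 * m11) * o00 + ((-1) * d112 * m01 * m12) * o00 + (d112 * m02 * m11) * o00 + (d211 * m01 * m12) * o00 + ((-1) * d211 * m02 * m11) * o00 + ((-1) * d122 * m01 * m22) * o00 + (d122 * m02 * m21) * o00 + (d221 * m01 * m22) * o00 + ((-1) * d221 * m02 * m21) * o00 + (d000 * m00 * m10 * m22) * o01 + ((-1) * d000 * m00 * m12 * m20) * o01 + ((-1) * d010 * m00 * m00 * m22) * o01 + (d010 * m00 * m02 * m20) * o01 + (d020 * m00 * m00 * m12) * o01 + ((-1) * d020 * m00 * m02 * m10) * o01 + (d101 * m00 * m10 * m22) * o01 + ((-1) * d101 * m00 * m12 * m20) * o01 + ((-1) * d111 * m00 * m00 * m22) * o01 + (d111 * m00 * m02 * m20) * o01 + (d121 * m00 * m00 * m12) * o01 + ((-1) * d121 * m00 * m02 * m10) * o01 + (d202 * m00 * m10 * m22) * o01 + ((-1) * d202 * m00 * m12 * m20) * o01 + ((-1) * d212 * m00 * m00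 * m22) * o01 + (d212 * m00 * m02 * m20) * o01 + (d222 * m00 * m00 * m12) * o01 + ((-1) * d222 * m00 * m02 * m10) * o01 + (d012 * m01 * m12) * o01 + ((-1) * d012 * m02 * m11) * o01 + ((-1) * d210 * m01 * m12) * o01 + (d210 * m02 * m11) * o01 + (d022 * m01 * m22) * o01 + ((-1) * d022 * m02 * m21) * o01 + ((-1) * d220 * m01 * m22) * o01 + (d220 * m02 * m21) * o01 + ((-1) * d000 * m00 * m10 * m21) * o02 + (d000 * m00 * m11 * m20) * o02 + (d010 * m00 * m00 * m21) * o02 + ((-1) * d010 * m00 * m01 * m20) * o02 + ((-1) * d020 * m00 * m00 * m11) * o02 + (d020 * m00 * m01 * m10) * o02 + ((-1) * d101 * m00 * m10 * m21) * o02 + (d101 * m00 * m11 * m20) * o02 + (d111 * m00 * m00 * m21) * o02 + ((-1) * d111 * m00 * m01 * m20) * o02 + ((-1) * d121 * m00 * m00 * m11) * o02 + (d121 * m00 * m01 * m10) * o02 + ((-1) * d202 * m00 * m10 * m21) * o02 + (d202 * m00 * m11 * m20) * o02 + (d212 * m00 * m00 * m21) * o02 + ((-1) * d212 * m00 * m01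 * m20) * o02 + ((-1) * d222 * m00 * m00 * m11) * o02 + (d222 * m00 * m01 * m10) * o02 + ((-1) * d011 * m01 * m12) * o02 + (d011 * m02 * m11) * o02 + (d110 * m01 * m12) * o02 + ((-1) * d110 * m02 * m11) * o02 + ((-1) * d021 * m01 * m22) * o02 + (d021 * m02 * m21) * o02 + (d120 * m01 * m22) * o02 + ((-1) * d120 * m02 * m21) * o02 + ((-1) * d000 * m01 * m11 * m22) * o01 + (d000 * m01 * m12 * m21) * o01 + (d010 * m01 * m01 * m22) * o01 + ((-1) * d010 * m01 * m02 * m21) * o01 + ((-1) * d020 * m01 * m01 * m12) * o01 + (d020 * m01 * m02 * m11) * o01 + ((-1) * d101 * m01 * m11 * m22) * o01 + (d101 * m01 * m12 * m21) * o01 + (d111 * m01 * m01 * m22) * o01 + ((-1) * d111 * m01 * m02 * m21) * o01 + ((-1) * d121 * m01 * m01 * m12) * o01 + (d121 * m01 * m02 * m11) * o01 + ((-1) * d202 * m01 * m11 * m22) * o01 + (d202 * m01 * m12 * m21) * o01 + (d212 * m01 * m01 * m22) * o01 + ((-1) * d212 * m01 * m02 * m21) * o01 + ((-1) * d222 * m01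 * m01 * m12) * o01 + (d222 * m01 * m02 * m11) * o01 + (d112 * m00 * m12) * o01 + ((-1) * d112 * m02 * m10) * o01 + ((-1) * d211 * m00 * m12) * o01 + (d211 * m02 * m10) * o01 + (d122 * m00 * m22) * o01 + ((-1) * d122 * m02 * m20) * o01 + ((-1) * d221 * m00 * m22) * o01 + (d221 * m02 * m20) * o01 + (d000 * m01 * m10 * m22) * o11 + ((-1) * d000 * m01 * m12 * m20) * o11 + ((-1) * d010 * m00 * m01 * m22) * o11 + (d010 * m01 * m02 * m20) * o11 + (d020 * m00 * m01 * m12) * o11 + ((-1) * d020 * m01 * m02 * m10) * o11 + (d101 * m01 * m10 * m22) * o11 + ((-1) * d101 * m01 * m12 * m20) * o11 + ((-1) * d111 * m00 * m01 * m22) * o11 + (d111 * m01 * m02 * m20) * o11 + (d121 * m00 * m01 * m12) * o11 + ((-1) * d121 * m01 * m02 * m10) * o11 + (d202 * m01 * m10 * m22) * o11 + ((-1) * d202 * m01 * m12 * m20) * o11 + ((-1) * d212 * m00 * m01 * m22) * o11 + (d212 * m01 * m02 * m20) * o11 + (d222 * m00 * m01 * m12) * o11 + ((-1) * d222 * m01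 * m02 * m10) * o11 + ((-1) * d012 * m00 * m12) * o11 + (d012 * m02 * m10) * o11 + (d210 * m00 * m12) * o11 + ((-1) * d210 * m02 * m10) * o11 + ((-1) * d022 * m00 * m22) * o11 + (d022 * m02 * m20) * o11 + (d220 * m00 * m22) * o11 + ((-1) * d220 * m02 * m20) * o11 + ((-1) * d000 * m01 * m10 * m21) * o12 + (d000 * m01 * m11 * m20) * o12 + (d010 * m00 * m01 * m21) * o12 + ((-1) * d010 * m01 * m01 * m20) * o12 + ((-1) * d020 * m00 * m01 * m11) * o12 + (d020 * m01 * m01 * m10) * o12 + ((-1) * d101 * m01 * m10 * m21) * o12 + (d101 * m01 * m11 * m20) * o12 + (d111 * m00 * m01 * m21) * o12 + ((-1) * d111 * m01 * m01 * m20) * o12 + ((-1) * d121 * m00 * m01 * m11) * o12 + (d121 * m01 * m01 * m10) * o12 + ((-1) * d202 * m01 * m10 * m21) * o12 + (d202 * m01 * m11 * m20) * o12 + (d212 * m00 * m01 * m21) * o12 + ((-1) * d212 * m01 * m01 * m20) * o12 + ((-1) * d222 * m00 * m01 * m11) * o12 + (d222 * m01 * m01 * m10) * o12 + (d011 * m00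 * m12) * o12 + ((-1) * d011 * m02 * m10) * o12 + ((-1) * d110 * m00 * m12) * o12 + (d110 * m02 * m10) * o12 + (d021 * m00 * m22) * o12 + ((-1) * d021 * m02 * m20) * o12 + ((-1) * d120 * m00 * m22) * o12 + (d120 * m02 * m20) * o12 + ((-1) * d000 * m02 * m11 * m22) * o02 + (d000 * m02 * m12 * m21) * o02 + (d010 * m01 * m02 * m22) * o02 + ((-1) * d010 * m02 * m02 * m21) * o02 + ((-1) * d020 * m01 * m02 * m12) * o02 + (d020 * m02 * m02 * m11) * o02 + ((-1) * d101 * m02 * m11 * m22) * o02 + (d101 * m02 * m12 * m21) * o02 + (d111 * m01 * m02 * m22) * o02 + ((-1) * d111 * m02 * m02 * m21) * o02 + ((-1) * d121 * m01 * m02 * m12) * o02 + (d121 * m02 * m02 * m11) * o02 + ((-1) * d202 * m02 * m11 * m22) * o02 + (d202 * m02 * m12 * m21) * o02 + (d212 * m01 * m02 * m22) * o02 + ((-1) * d212 * m02 * m02 * m21) * o02 + ((-1) * d222 * m01 * m02 * m12) * o02 + (d222 * m02 * m02 * m11) * o02 + ((-1) * d112 * m00 * m11) * o02 + (d112 * m01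 * m10) * o02 + (d211 * m00 * m11) * o02 + ((-1) * d211 * m01 * m10) * o02 + ((-1) * d122 * m00 * m21) * o02 + (d122 * m01 * m20) * o02 + (d221 * m00 * m21) * o02 + ((-1) * d221 * m01 * m20) * o02 + (d000 * m02 * m10 * m22) * o12 + ((-1) * d000 * m02 * m12 * m20) * o12 + ((-1) * d010 * m00 * m02 * m22) * o12 + (d010 * m02 * m02 * m20) * o12 + (d020 * m00 * m02 * m12) * o12 + ((-1) * d020 * m02 * m02 * m10) * o12 + (d101 * m02 * m10 * m22) * o12 + ((-1) * d101 * m02 * m12 * m20) * o12 + ((-1) * d111 * m00 * m02 * m22) * o12 + (d111 * m02 * m02 * m20) * o12 + (d121 * m00 * m02 * m12) * o12 + ((-1) * d121 * m02 * m02 * m10) * o12 + (d202 * m02 * m10 * m22) * o12 + ((-1) * d202 * m02 * m12 * m20) * o12 + ((-1) * d212 * m00 * m02 * m22) * o12 + (d212 * m02 * m02 * m20) * o12 + (d222 * m00 * m02 * m12) * o12 + ((-1) * d222 * m02 * m02 * m10) * o12 + (d012 * m00 * m11) * o12 + ((-1) * d012 * m01 * m10) * o12 + ((-1) * d210 * m00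 * m11) * o12 + (d210 * m01 * m10) * o12 + (d022 * m00 * m21) * o12 + ((-1) * d022 * m01 * m20) * o12 + ((-1) * d220 * m00 * m21) * o12 + (d220 * m01 * m20) * o12 + ((-1) * d000 * m02 * m10 * m21) * o22 + (d000 * m02 * m11 * m20) * o22 + (d010 * m00 * m02 * m21) * o22 + ((-1) * d010 * m01 * m02 * m20) * o22 + ((-1) * d020 * m00 * m02 * m11) * o22 + (d020 * m01 * m02 * m10) * o22 + ((-1) * d101 * m02 * m10 * m21) * o22 + (d101 * m02 * m11 * m20) * o22 + (d111 * m00 * m02 * m21) * o22 + ((-1) * d111 * m01 * m02 * m20) * o22 + ((-1) * d121 * m00 * m02 * m11) * o22 + (d121 * m01 * m02 * m10) * o22 + ((-1) * d202 * m02 * m10 * m21) * o22 + (d202 * m02 * m11 * m20) * o22 + (d212 * m00 * m02 * m21) * o22 + ((-1) * d212 * m01 * m02 * m20) * o22 + ((-1) * d222 * m00 * m02 * m11) * o22 + (d222 * m01 * m02 * m10) * o22 + ((-1) * d011 * m00 * m11) * o22 + (d011 * m01 * m10) * o22 + (d110 * m00 * m11) * o22 + ((-1) * d110 * m01 * m10)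 * o22 + ((-1) * d021 * m00 * m21) * o22 + (d021 * m01 * m20) * o22 + (d120 * m00 * m21) * o22 + ((-1) * d120 * m01 * m20) * o22 + (d000 * m00 * m00) * hdet + (d000 * m01 * m01) * hdet + (d000 * m02 * m02) * hdet + ((-1) * d000) * hdet + (d010 * m00 * m10) * hdet + (d010 * m01 * m11) * hdet + (d010 * m02 * m12) * hdet + (d020 * m00 * m20) * hdet + (d020 * m01 * m21) * hdet + (d020 * m02 * m22) * hdet + (d101 * m00 * m00) * hdet + (d101 * m01 * m01) * hdet + (d101 * m02 * m02) * hdet + ((-1) * d101) * hdet + (d111 * m00 * m10) * hdet + (d111 * m01 * m11) * hdet + (d111 * m02 * m12) * hdet + (d121 * m00 * m20) * hdet + (d121 * m01 * m21) * hdet + (d121 * m02 * m22) * hdet + (d202 * m00 * m00) * hdet + (d202 * m01 * m01) * hdet + (d202 * m02 * m02) * hdet + ((-1) * d202) * hdet + (d212 * m00 * m10) * hdet + (d212 * m01 * m11) * hdet + (d212 * m02 * m12) * hdet + (d222 * m00 * m20) * hdet + (d222 * m01 * m21) * hdet + (d222 * m02 * m22) * hdet + (d011 * m22) * hdet + ((-1)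 * d012 * m21) * hdet + ((-1) * d110 * m22) * hdet + (d112 * m20) * hdet + (d210 * m21) * hdet + ((-1) * d211 * m20) * hdet + ((-1) * d021 * m12) * hdet + (d022 * m11) * hdet + (d120 * m12) * hdet + ((-1) * d122 * m10) * hdet + ((-1) * d220 * m11) * hdet + (d221 * m10) * hdet

private lemma aux1 (m00 m01 m02 m10 m11 m12 m20 m21 m22 d000 d001 d002 d010 d011 d012 d020 d021 d022 d100 d101 d102 d110 d111 d112 d120 d121 d122 d200 d201 d202 d210 d211 d212 d220 d221 d222 a00 a01 a02 a10 a11 a12 a20 a21 a22 : ℝ)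
    (o00 : m00 * m00 + m10 * m10 + m20 * m20 = 1)
    (o01 : m00 * m01 + m10 * m11 + m20 * m21 = 0)
    (o02 : m00 * m02 + m10 * m12 + m20 * m22 = 0)
    (o11 : m01 * m01 + m11 * m11 + m21 * m21 = 1)
    (o12 : m01 * m02 + m11 * m12 + m21 * m22 = 0)
    (o22 : m02 * m02 + m12 * m12 + m22 * m22 = 1)
    (hdet : m00 * m11 * m22 - m00 * m12 * m21 - m01 * m10 * m22 + m01 * m12 * m20 + m02 * m10 * m21 - m02 * m11 * m20 = 1)
    (c000 : m00 * d000 + m00 * d000 + m10 * d010 + m10 * d010 + m20 * d020 + m20 * d020 = 0)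
    (c001 : m00 * d001 + m01 * d000 + m10 * d011 + m11 * d010 + m20 * d021 + m21 * d020 = 0)
    (c002 : m00 * d002 + m02 * d000 + m10 * d012 + m12 * d010 + m20 * d022 + m22 * d020 = 0)
    (c010 : m01 * d000 + m00 * d001 + m11 * d010 + m10 * d011 + m21 * d020 + m20 * d021 = 0)
    (c011 : m01 * d001 + m01 * d001 + m11 * d011 + m11 * d011 + m21 * d021 + m21 * d021 = 0)
    (c012 : m01 * d002 + m02 * d001 + m11 * d012 + m12 * d011 + m21 * d022 + m22 * d021 = 0)
    (c020 : m02 * d000 + m00 * d002 + m12 * d010 + m10 * d012 + m22 * d020 + m20 * d022 = 0)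
    (c021 : m02 * d001 + m01 * d002 + m12 * d011 + m11 * d012 + m22 * d021 + m21 * d022 = 0)
    (c022 : m02 * d002 + m02 * d002 + m12 * d012 + m12 * d012 + m22 * d022 + m22 * d022 = 0)
    (c100 : m00 * d100 + m00 * d100 + m10 * d110 + m10 * d110 + m20 * d120 + m20 * d120 = 0)
    (c101 : m00 * d101 + m01 * d100 + m10 * d111 + m11 * d110 + m20 * d121 + m21 * d120 = 0)
    (c102 : m00 * d102 + m02 * d100 + m10 * d112 + m12 * d110 + m20 * d122 + m22 * d120 = 0)
    (c110 : m01 * d100 + m00 * d101 + m11 * d110 + m10 * d111 + m21 * d120 + m20 * d121 = 0)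
    (c111 : m01 * d101 + m01 * d101 + m11 * d111 + m11 * d111 + m21 * d121 + m21 * d121 = 0)
    (c112 : m01 * d102 + m02 * d101 + m11 * d112 + m12 * d111 + m21 * d122 + m22 * d121 = 0)
    (c120 : m02 * d100 + m00 * d102 + m12 * d110 + m10 * d112 + m22 * d120 + m20 * d122 = 0)
    (c121 : m02 * d101 + m01 * d102 + m12 * d111 + m11 * d112 + m22 * d121 + m21 * d122 = 0)
    (c122 : m02 * d102 + m02 * d102 + m12 * d112 + m12 * d112 + m22 * d122 + m22 * d122 = 0)
    (c200 : m00 * d200 + m00 * d200 + m10 * d210 + m10 * d210 + m20 * d220 + m20 * d220 = 0)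
    (c201 : m00 * d201 + m01 * d200 + m10 * d211 + m11 * d210 + m20 * d221 + m21 * d220 = 0)
    (c202 : m00 * d202 + m02 * d200 + m10 * d212 + m12 * d210 + m20 * d222 + m22 * d220 = 0)
    (c210 : m01 * d200 + m00 * d201 + m11 * d210 + m10 * d211 + m21 * d220 + m20 * d221 = 0)
    (c211 : m01 * d201 + m01 * d201 + m11 * d211 + m11 * d211 + m21 * d221 + m21 * d221 = 0)
    (c212 : m01 * d202 + m02 * d201 + m11 * d212 + m12 * d211 + m21 * d222 + m22 * d221 = 0)
    (c220 : m02 * d200 + m00 * d202 + m12 * d210 + m10 * d212 + m22 * d220 + m20 * d222 = 0)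
    (c221 : m02 * d201 + m01 * d202 + m12 * d211 + m11 * d212 + m22 * d221 + m21 * d222 = 0)
    (c222 : m02 * d202 + m02 * d202 + m12 * d212 + m12 * d212 + m22 * d222 + m22 * d222 = 0)
    (ha00 : d102 - d201 = a00)
    (ha01 : d200 - d002 = a01)
    (ha02 : d001 - d100 = a02)
    (ha10 : d112 - d211 = a10)
    (ha11 : d210 - d012 = a11)
    (ha12 : d011 - d110 = a12)
    (ha20 : d122 - d221 = a20)
    (ha21 : d220 - d022 = a21)
    (ha22 : d021 - d120 = a22) :
    d010 + d111 + d212 = -(a00 * m20 + a01 * m21 + a02 * m22) + (a20 * m00 + a21 * m01 + a22 * m02) := by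
  linear_combination ((-1) * m20) * ha00 + ((-1) * m21) * ha01 + ((-1) * m22) * ha02 + (m00) * ha20 + (m01) * ha21 + (m02) * ha22 + ((1/2) * m10) * c000 + (m11) * c001 + ((-1/2) * m10) * c011 + (m12) * c002 + ((-1/2) * m10) * c022 + (m10) * c110 + ((-1/2) * m11) * c100 + ((1/2) * m11) * c111 + (m12) * c112 + ((-1/2) * m11) * c122 + (m10) * c220 + ((-1/2) * m12) * c200 + (m11) * c221 + ((-1/2) * m12) * c211 + ((1/2) * m12) * c222 + ((-1) * d000 * m10 * m11 * m22) * o00 + (d000 * m10 * m12 * m21) * o00 + (d010 * m01 * m10 * m22) * o00 + ((-1) * d010 * m02 * m10 * m21) * o00 + ((-1) * d020 * m01 * m10 * m12) * o00 + (d020 * m02 * m10 * m11) * o00 + ((-1) * d101 * m10 * m11 * m22) * o00 + (d101 * m10 * m12 * m21) * o00 + (d111 * m01 * m10 * m22) * o00 + ((-1) * d111 * m02 * m10 * m21) * o00 + ((-1) * d121 * m01 * m10 * m12) * o00 + (d121 * m02 * m10 * m11) * o00 + ((-1) * d202 * m10 * m11 * m22) * o00 + (d202 * m10 * m12 * m21)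 * o00 + (d212 * m01 * m10 * m22) * o00 + ((-1) * d212 * m02 * m10 * m21) * o00 + ((-1) * d222 * m01 * m10 * m12) * o00 + (d222 * m02 * m10 * m11) * o00 + (d102 * m01 * m12) * o00 + ((-1) * d102 * m02 * m11) * o00 + ((-1) * d201 * m01 * m12) * o00 + (d201 * m02 * m11) * o00 + ((-1) * d122 * m11 * m22) * o00 + (d122 * m12 * m21) * o00 + (d221 * m11 * m22) * o00 + ((-1) * d221 * m12 * m21) * o00 + (d000 * m10 * m10 * m22) * o01 + ((-1) * d000 * m10 * m12 * m20) * o01 + ((-1) * d010 * m00 * m10 * m22) * o01 + (d010 * m02 * m10 * m20) * o01 + (d020 * m00 * m10 * m12) * o01 + ((-1) * d020 * m02 * m10 * m10) * o01 + (d101 * m10 * m10 * m22) * o01 + ((-1) * d101 * m10 * m12 * m20) * o01 + ((-1) * d111 * m00 * m10 * m22) * o01 + (d111 * m02 * m10 * m20) * o01 + (d121 * m00 * m10 * m12) * o01 + ((-1) * d121 * m02 * m10 * m10) * o01 + (d202 * m10 * m10 * m22) * o01 + ((-1) * d202 * m10 * m12 * m20) * o01 + ((-1) * d212 * m00 * m10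 * m22) * o01 + (d212 * m02 * m10 * m20) * o01 + (d222 * m00 * m10 * m12) * o01 + ((-1) * d222 * m02 * m10 * m10) * o01 + ((-1) * d002 * m01 * m12) * o01 + (d002 * m02 * m11) * o01 + (d200 * m01 * m12) * o01 + ((-1) * d200 * m02 * m11) * o01 + (d022 * m11 * m22) * o01 + ((-1) * d022 * m12 * m21) * o01 + ((-1) * d220 * m11 * m22) * o01 + (d220 * m12 * m21) * o01 + ((-1) * d000 * m10 * m10 * m21) * o02 + (d000 * m10 * m11 * m20) * o02 + (d010 * m00 * m10 * m21) * o02 + ((-1) * d010 * m01 * m10 * m20) * o02 + ((-1) * d020 * m00 * m10 * m11) * o02 + (d020 * m01 * m10 * m10) * o02 + ((-1) * d101 * m10 * m10 * m21) * o02 + (d101 * m10 * m11 * m20) * o02 + (d111 * m00 * m10 * m21) * o02 + ((-1) * d111 * m01 * m10 * m20) * o02 + ((-1) * d121 * m00 * m10 * m11) * o02 + (d121 * m01 * m10 * m10) * o02 + ((-1) * d202 * m10 * m10 * m21) * o02 + (d202 * m10 * m11 * m20) * o02 + (d212 * m00 * m10 * m21) * o02 + ((-1) * d212 * m01 * m10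 * m20) * o02 + ((-1) * d222 * m00 * m10 * m11) * o02 + (d222 * m01 * m10 * m10) * o02 + (d001 * m01 * m12) * o02 + ((-1) * d001 * m02 * m11) * o02 + ((-1) * d100 * m01 * m12) * o02 + (d100 * m02 * m11) * o02 + ((-1) * d021 * m11 * m22) * o02 + (d021 * m12 * m21) * o02 + (d120 * m11 * m22) * o02 + ((-1) * d120 * m12 * m21) * o02 + ((-1) * d000 * m11 * m11 * m22) * o01 + (d000 * m11 * m12 * m21) * o01 + (d010 * m01 * m11 * m22) * o01 + ((-1) * d010 * m02 * m11 * m21) * o01 + ((-1) * d020 * m01 * m11 * m12) * o01 + (d020 * m02 * m11 * m11) * o01 + ((-1) * d101 * m11 * m11 * m22) * o01 + (d101 * m11 * m12 * m21) * o01 + (d111 * m01 * m11 * m22) * o01 + ((-1) * d111 * m02 * m11 * m21) * o01 + ((-1) * d121 * m01 * m11 * m12) * o01 + (d121 * m02 * m11 * m11) * o01 + ((-1) * d202 * m11 * m11 * m22) * o01 + (d202 * m11 * m12 * m21) * o01 + (d212 * m01 * m11 * m22) * o01 + ((-1) * d212 * m02 * m11 * m21) * o01 + ((-1) * d222 * m01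 * m11 * m12) * o01 + (d222 * m02 * m11 * m11) * o01 + ((-1) * d102 * m00 * m12) * o01 + (d102 * m02 * m10) * o01 + (d201 * m00 * m12) * o01 + ((-1) * d201 * m02 * m10) * o01 + (d122 * m10 * m22) * o01 + ((-1) * d122 * m12 * m20) * o01 + ((-1) * d221 * m10 * m22) * o01 + (d221 * m12 * m20) * o01 + (d000 * m10 * m11 * m22) * o11 + ((-1) * d000 * m11 * m12 * m20) * o11 + ((-1) * d010 * m00 * m11 * m22) * o11 + (d010 * m02 * m11 * m20) * o11 + (d020 * m00 * m11 * m12) * o11 + ((-1) * d020 * m02 * m10 * m11) * o11 + (d101 * m10 * m11 * m22) * o11 + ((-1) * d101 * m11 * m12 * m20) * o11 + ((-1) * d111 * m00 * m11 * m22) * o11 + (d111 * m02 * m11 * m20) * o11 + (d121 * m00 * m11 * m12) * o11 + ((-1) * d121 * m02 * m10 * m11) * o11 + (d202 * m10 * m11 * m22) * o11 + ((-1) * d202 * m11 * m12 * m20) * o11 + ((-1) * d212 * m00 * m11 * m22) * o11 + (d212 * m02 * m11 * m20) * o11 + (d222 * m00 * m11 * m12) * o11 + ((-1) * d222 * m02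 * m10 * m11) * o11 + (d002 * m00 * m12) * o11 + ((-1) * d002 * m02 * m10) * o11 + ((-1) * d200 * m00 * m12) * o11 + (d200 * m02 * m10) * o11 + ((-1) * d022 * m10 * m22) * o11 + (d022 * m12 * m20) * o11 + (d220 * m10 * m22) * o11 + ((-1) * d220 * m12 * m20) * o11 + ((-1) * d000 * m10 * m11 * m21) * o12 + (d000 * m11 * m11 * m20) * o12 + (d010 * m00 * m11 * m21) * o12 + ((-1) * d010 * m01 * m11 * m20) * o12 + ((-1) * d020 * m00 * m11 * m11) * o12 + (d020 * m01 * m10 * m11) * o12 + ((-1) * d101 * m10 * m11 * m21) * o12 + (d101 * m11 * m11 * m20) * o12 + (d111 * m00 * m11 * m21) * o12 + ((-1) * d111 * m01 * m11 * m20) * o12 + ((-1) * d121 * m00 * m11 * m11) * o12 + (d121 * m01 * m10 * m11) * o12 + ((-1) * d202 * m10 * m11 * m21) * o12 + (d202 * m11 * m11 * m20) * o12 + (d212 * m00 * m11 * m21) * o12 + ((-1) * d212 * m01 * m11 * m20) * o12 + ((-1) * d222 * m00 * m11 * m11) * o12 + (d222 * m01 * m10 * m11) * o12 + ((-1) * d001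 * m00 * m12) * o12 + (d001 * m02 * m10) * o12 + (d100 * m00 * m12) * o12 + ((-1) * d100 * m02 * m10) * o12 + (d021 * m10 * m22) * o12 + ((-1) * d021 * m12 * m20) * o12 + ((-1) * d120 * m10 * m22) * o12 + (d120 * m12 * m20) * o12 + ((-1) * d000 * m11 * m12 * m22) * o02 + (d000 * m12 * m12 * m21) * o02 + (d010 * m01 * m12 * m22) * o02 + ((-1) * d010 * m02 * m12 * m21) * o02 + ((-1) * d020 * m01 * m12 * m12) * o02 + (d020 * m02 * m11 * m12) * o02 + ((-1) * d101 * m11 * m12 * m22) * o02 + (d101 * m12 * m12 * m21) * o02 + (d111 * m01 * m12 * m22) * o02 + ((-1) * d111 * m02 * m12 * m21) * o02 + ((-1) * d121 * m01 * m12 * m12) * o02 + (d121 * m02 * m11 * m12) * o02 + ((-1) * d202 * m11 * m12 * m22) * o02 + (d202 * m12 * m12 * m21) * o02 + (d212 * m01 * m12 * m22) * o02 + ((-1) * d212 * m02 * m12 * m21) * o02 + ((-1) * d222 * m01 * m12 * m12) * o02 + (d222 * m02 * m11 * m12) * o02 + (d102 * m00 * m11) * o02 + ((-1) * d102 * m01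 * m10) * o02 + ((-1) * d201 * m00 * m11) * o02 + (d201 * m01 * m10) * o02 + ((-1) * d122 * m10 * m21) * o02 + (d122 * m11 * m20) * o02 + (d221 * m10 * m21) * o02 + ((-1) * d221 * m11 * m20) * o02 + (d000 * m10 * m12 * m22) * o12 + ((-1) * d000 * m12 * m12 * m20) * o12 + ((-1) * d010 * m00 * m12 * m22) * o12 + (d010 * m02 * m12 * m20) * o12 + (d020 * m00 * m12 * m12) * o12 + ((-1) * d020 * m02 * m10 * m12) * o12 + (d101 * m10 * m12 * m22) * o12 + ((-1) * d101 * m12 * m12 * m20) * o12 + ((-1) * d111 * m00 * m12 * m22) * o12 + (d111 * m02 * m12 * m20) * o12 + (d121 * m00 * m12 * m12) * o12 + ((-1) * d121 * m02 * m10 * m12) * o12 + (d202 * m10 * m12 * m22) * o12 + ((-1) * d202 * m12 * m12 * m20) * o12 + ((-1) * d212 * m00 * m12 * m22) * o12 + (d212 * m02 * m12 * m20) * o12 + (d222 * m00 * m12 * m12) * o12 + ((-1) * d222 * m02 * m10 * m12) * o12 + ((-1) * d002 * m00 * m11) * o12 + (d002 * m01 * m10) * o12 + (d200 * m00 * m11)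 * o12 + ((-1) * d200 * m01 * m10) * o12 + (d022 * m10 * m21) * o12 + ((-1) * d022 * m11 * m20) * o12 + ((-1) * d220 * m10 * m21) * o12 + (d220 * m11 * m20) * o12 + ((-1) * d000 * m10 * m12 * m21) * o22 + (d000 * m11 * m12 * m20) * o22 + (d010 * m00 * m12 * m21) * o22 + ((-1) * d010 * m01 * m12 * m20) * o22 + ((-1) * d020 * m00 * m11 * m12) * o22 + (d020 * m01 * m10 * m12) * o22 + ((-1) * d101 * m10 * m12 * m21) * o22 + (d101 * m11 * m12 * m20) * o22 + (d111 * m00 * m12 * m21) * o22 + ((-1) * d111 * m01 * m12 * m20) * o22 + ((-1) * d121 * m00 * m11 * m12) * o22 + (d121 * m01 * m10 * m12) * o22 + ((-1) * d202 * m10 * m12 * m21) * o22 + (d202 * m11 * m12 * m20) * o22 + (d212 * m00 * m12 * m21) * o22 + ((-1) * d212 * m01 * m12 * m20) * o22 + ((-1) * d222 * m00 * m11 * m12) * o22 + (d222 * m01 * m10 * m12) * o22 + (d001 * m00 * m11) * o22 + ((-1) * d001 * m01 * m10) * o22 + ((-1) * d100 * m00 * m11) * o22 + (d100 * m01 * m10)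 * o22 + ((-1) * d021 * m10 * m21) * o22 + (d021 * m11 * m20) * o22 + (d120 * m10 * m21) * o22 + ((-1) * d120 * m11 * m20) * o22 + (d000 * m00 * m10) * hdet + (d000 * m01 * m11) * hdet + (d000 * m02 * m12) * hdet + (d010 * m10 * m10) * hdet + (d010 * m11 * m11) * hdet + (d010 * m12 * m12) * hdet + ((-1) * d010) * hdet + (d020 * m10 * m20) * hdet + (d020 * m11 * m21) * hdet + (d020 * m12 * m22) * hdet + (d101 * m00 * m10) * hdet + (d101 * m01 * m11) * hdet + (d101 * m02 * m12) * hdet + (d111 * m10 * m10) * hdet + (d111 * m11 * m11) * hdet + (d111 * m12 * m12) * hdet + ((-1) * d111) * hdet + (d121 * m10 * m20) * hdet + (d121 * m11 * m21) * hdet + (d121 * m12 * m22) * hdet + (d202 * m00 * m10) * hdet + (d202 * m01 * m11) * hdet + (d202 * m02 * m12) * hdet + (d212 * m10 * m10) * hdet + (d212 * m11 * m11) * hdet + (d212 * m12 * m12) * hdet + ((-1) * d212) * hdet + (d222 * m10 * m20) * hdet + (d222 * m11 * m21) * hdet + (d222 * m12 * m22) * hdet + ((-1) * d001 * m22) * hdet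 + (d002 * m21) * hdet + (d100 * m22) * hdet + ((-1) * d102 * m20) * hdet + ((-1) * d200 * m21) * hdet + (d201 * m20) * hdet + (d021 * m02) * hdet + ((-1) * d022 * m01) * hdet + ((-1) * d120 * m02) * hdet + (d122 * m00) * hdet + (d220 * m01) * hdet + ((-1) * d221 * m00) * hdet

private lemma aux2 (m00 m01 m02 m10 m11 m12 m20 m21 m22 d000 d001 d002 d010 d011 d012 d020 d021 d022 d100 d101 d102 d110 d111 d112 d120 d121 d122 d200 d201 d202 d210 d211 d212 d220 d221 d222 a00 a01 a02 a10 a11 a12 a20 a21 a22 : ℝ)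
    (o00 : m00 * m00 + m10 * m10 + m20 * m20 = 1)
    (o01 : m00 * m01 + m10 * m11 + m20 * m21 = 0)
    (o02 : m00 * m02 + m10 * m12 + m20 * m22 = 0)
    (o11 : m01 * m01 + m11 * m11 + m21 * m21 = 1)
    (o12 : m01 * m02 + m11 * m12 + m21 * m22 = 0)
    (o22 : m02 * m02 + m12 * m12 + m22 * m22 = 1)
    (hdet : m00 * m11 * m22 - m00 * m12 * m21 - m01 * m10 * m22 + m01 * m12 * m20 + m02 * m10 * m21 - m02 * m11 * m20 = 1)
    (c000 : m00 * d000 + m00 * d000 + m10 * d010 + m10 * d010 + m20 * d020 + m20 * d020 = 0)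
    (c001 : m00 * d001 + m01 * d000 + m10 * d011 + m11 * d010 + m20 * d021 + m21 * d020 = 0)
    (c002 : m00 * d002 + m02 * d000 + m10 * d012 + m12 * d010 + m20 * d022 + m22 * d020 = 0)
    (c010 : m01 * d000 + m00 * d001 + m11 * d010 + m10 * d011 + m21 * d020 + m20 * d021 = 0)
    (c011 : m01 * d001 + m01 * d001 + m11 * d011 + m11 * d011 + m21 * d021 + m21 * d021 = 0)
    (c012 : m01 * d002 + m02 * d001 + m11 * d012 + m12 * d011 + m21 * d022 + m22 * d021 = 0)
    (c020 : m02 * d000 + m00 * d002 + m12 * d010 + m10 * d012 + m22 * d020 + m20 * d022 = 0)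
    (c021 : m02 * d001 + m01 * d002 + m12 * d011 + m11 * d012 + m22 * d021 + m21 * d022 = 0)
    (c022 : m02 * d002 + m02 * d002 + m12 * d012 + m12 * d012 + m22 * d022 + m22 * d022 = 0)
    (c100 : m00 * d100 + m00 * d100 + m10 * d110 + m10 * d110 + m20 * d120 + m20 * d120 = 0)
    (c101 : m00 * d101 + m01 * d100 + m10 * d111 + m11 * d110 + m20 * d121 + m21 * d120 = 0)
    (c102 : m00 * d102 + m02 * d100 + m10 * d112 + m12 * d110 + m20 * d122 + m22 * d120 = 0)
    (c110 : m01 * d100 + m00 * d101 + m11 * d110 + m10 * d111 + m21 * d120 + m20 * d121 = 0)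
    (c111 : m01 * d101 + m01 * d101 + m11 * d111 + m11 * d111 + m21 * d121 + m21 * d121 = 0)
    (c112 : m01 * d102 + m02 * d101 + m11 * d112 + m12 * d111 + m21 * d122 + m22 * d121 = 0)
    (c120 : m02 * d100 + m00 * d102 + m12 * d110 + m10 * d112 + m22 * d120 + m20 * d122 = 0)
    (c121 : m02 * d101 + m01 * d102 + m12 * d111 + m11 * d112 + m22 * d121 + m21 * d122 = 0)
    (c122 : m02 * d102 + m02 * d102 + m12 * d112 + m12 * d112 + m22 * d122 + m22 * d122 = 0)
    (c200 : m00 * d200 + m00 * d200 + m10 * d210 + m10 * d210 + m20 * d220 + m20 * d220 = 0)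
    (c201 : m00 * d201 + m01 * d200 + m10 * d211 + m11 * d210 + m20 * d221 + m21 * d220 = 0)
    (c202 : m00 * d202 + m02 * d200 + m10 * d212 + m12 * d210 + m20 * d222 + m22 * d220 = 0)
    (c210 : m01 * d200 + m00 * d201 + m11 * d210 + m10 * d211 + m21 * d220 + m20 * d221 = 0)
    (c211 : m01 * d201 + m01 * d201 + m11 * d211 + m11 * d211 + m21 * d221 + m21 * d221 = 0)
    (c212 : m01 * d202 + m02 * d201 + m11 * d212 + m12 * d211 + m21 * d222 + m22 * d221 = 0)
    (c220 : m02 * d200 + m00 * d202 + m12 * d210 + m10 * d212 + m22 * d220 + m20 * d222 = 0)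
    (c221 : m02 * d201 + m01 * d202 + m12 * d211 + m11 * d212 + m22 * d221 + m21 * d222 = 0)
    (c222 : m02 * d202 + m02 * d202 + m12 * d212 + m12 * d212 + m22 * d222 + m22 * d222 = 0)
    (ha00 : d102 - d201 = a00)
    (ha01 : d200 - d002 = a01)
    (ha02 : d001 - d100 = a02)
    (ha10 : d112 - d211 = a10)
    (ha11 : d210 - d012 = a11)
    (ha12 : d011 - d110 = a12)
    (ha20 : d122 - d221 = a20)
    (ha21 : d220 - d022 = a21)
    (ha22 : d021 - d120 = a22) :
    d020 + d121 + d222 = (a00 * m10 + a01 * m11 + a02 * m12) - (a10 * m00 + a11 * m01 + a12 * m02) := by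
  linear_combination (m10) * ha00 + (m11) * ha01 + (m12) * ha02 + ((-1) * m00) * ha10 + ((-1) * m01) * ha11 + ((-1) * m02) * ha12 + ((1/2) * m20) * c000 + (m21) * c001 + ((-1/2) * m20) * c011 + (m22) * c002 + ((-1/2) * m20) * c022 + (m20) * c110 + ((-1/2) * m21) * c100 + ((1/2) * m21) * c111 + (m22) * c112 + ((-1/2) * m21) * c122 + (m20) * c220 + ((-1/2) * m22) * c200 + (m21) * c221 + ((-1/2) * m22) * c211 + ((1/2) * m22) * c222 + ((-1) * d000 * m11 * m20 * m22) * o00 + (d000 * m12 * m20 * m21) * o00 + (d010 * m01 * m20 * m22) * o00 + ((-1) * d010 * m02 * m20 * m21) * o00 + ((-1) * d020 * m01 * m12 * m20) * o00 + (d020 * m02 * m11 * m20) * o00 + ((-1) * d101 * m11 * m20 * m22) * o00 + (d101 * m12 * m20 * m21) * o00 + (d111 * m01 * m20 * m22) * o00 + ((-1) * d111 * m02 * m20 * m21) * o00 + ((-1) * d121 * m01 * m12 * m20) * o00 + (d121 * m02 * m11 * m20) * o00 + ((-1) * d202 * m11 * m20 * m22) * o00 + (d202 * m12 * m20 * m21)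 * o00 + (d212 * m01 * m20 * m22) * o00 + ((-1) * d212 * m02 * m20 * m21) * o00 + ((-1) * d222 * m01 * m12 * m20) * o00 + (d222 * m02 * m11 * m20) * o00 + (d102 * m01 * m22) * o00 + ((-1) * d102 * m02 * m21) * o00 + ((-1) * d201 * m01 * m22) * o00 + (d201 * m02 * m21) * o00 + (d112 * m11 * m22) * o00 + ((-1) * d112 * m12 * m21) * o00 + ((-1) * d211 * m11 * m22) * o00 + (d211 * m12 * m21) * o00 + (d000 * m10 * m20 * m22) * o01 + ((-1) * d000 * m12 * m20 * m20) * o01 + ((-1) * d010 * m00 * m20 * m22) * o01 + (d010 * m02 * m20 * m20) * o01 + (d020 * m00 * m12 * m20) * o01 + ((-1) * d020 * m02 * m10 * m20) * o01 + (d101 * m10 * m20 * m22) * o01 + ((-1) * d101 * m12 * m20 * m20) * o01 + ((-1) * d111 * m00 * m20 * m22) * o01 + (d111 * m02 * m20 * m20) * o01 + (d121 * m00 * m12 * m20) * o01 + ((-1) * d121 * m02 * m10 * m20) * o01 + (d202 * m10 * m20 * m22) * o01 + ((-1) * d202 * m12 * m20 * m20) * o01 + ((-1) * d212 * m00 * m20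 * m22) * o01 + (d212 * m02 * m20 * m20) * o01 + (d222 * m00 * m12 * m20) * o01 + ((-1) * d222 * m02 * m10 * m20) * o01 + ((-1) * d002 * m01 * m22) * o01 + (d002 * m02 * m21) * o01 + (d200 * m01 * m22) * o01 + ((-1) * d200 * m02 * m21) * o01 + ((-1) * d012 * m11 * m22) * o01 + (d012 * m12 * m21) * o01 + (d210 * m11 * m22) * o01 + ((-1) * d210 * m12 * m21) * o01 + ((-1) * d000 * m10 * m20 * m21) * o02 + (d000 * m11 * m20 * m20) * o02 + (d010 * m00 * m20 * m21) * o02 + ((-1) * d010 * m01 * m20 * m20) * o02 + ((-1) * d020 * m00 * m11 * m20) * o02 + (d020 * m01 * m10 * m20) * o02 + ((-1) * d101 * m10 * m20 * m21) * o02 + (d101 * m11 * m20 * m20) * o02 + (d111 * m00 * m20 * m21) * o02 + ((-1) * d111 * m01 * m20 * m20) * o02 + ((-1) * d121 * m00 * m11 * m20) * o02 + (d121 * m01 * m10 * m20) * o02 + ((-1) * d202 * m10 * m20 * m21) * o02 + (d202 * m11 * m20 * m20) * o02 + (d212 * m00 * m20 * m21) * o02 + ((-1) * d212 * m01 * m20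 * m20) * o02 + ((-1) * d222 * m00 * m11 * m20) * o02 + (d222 * m01 * m10 * m20) * o02 + (d001 * m01 * m22) * o02 + ((-1) * d001 * m02 * m21) * o02 + ((-1) * d100 * m01 * m22) * o02 + (d100 * m02 * m21) * o02 + (d011 * m11 * m22) * o02 + ((-1) * d011 * m12 * m21) * o02 + ((-1) * d110 * m11 * m22) * o02 + (d110 * m12 * m21) * o02 + ((-1) * d000 * m11 * m21 * m22) * o01 + (d000 * m12 * m21 * m21) * o01 + (d010 * m01 * m21 * m22) * o01 + ((-1) * d010 * m02 * m21 * m21) * o01 + ((-1) * d020 * m01 * m12 * m21) * o01 + (d020 * m02 * m11 * m21) * o01 + ((-1) * d101 * m11 * m21 * m22) * o01 + (d101 * m12 * m21 * m21) * o01 + (d111 * m01 * m21 * m22) * o01 + ((-1) * d111 * m02 * m21 * m21) * o01 + ((-1) * d121 * m01 * m12 * m21) * o01 + (d121 * m02 * m11 * m21) * o01 + ((-1) * d202 * m11 * m21 * m22) * o01 + (d202 * m12 * m21 * m21) * o01 + (d212 * m01 * m21 * m22) * o01 + ((-1) * d212 * m02 * m21 * m21) * o01 + ((-1) * d222 * m01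 * m12 * m21) * o01 + (d222 * m02 * m11 * m21) * o01 + ((-1) * d102 * m00 * m22) * o01 + (d102 * m02 * m20) * o01 + (d201 * m00 * m22) * o01 + ((-1) * d201 * m02 * m20) * o01 + ((-1) * d112 * m10 * m22) * o01 + (d112 * m12 * m20) * o01 + (d211 * m10 * m22) * o01 + ((-1) * d211 * m12 * m20) * o01 + (d000 * m10 * m21 * m22) * o11 + ((-1) * d000 * m12 * m20 * m21) * o11 + ((-1) * d010 * m00 * m21 * m22) * o11 + (d010 * m02 * m20 * m21) * o11 + (d020 * m00 * m12 * m21) * o11 + ((-1) * d020 * m02 * m10 * m21) * o11 + (d101 * m10 * m21 * m22) * o11 + ((-1) * d101 * m12 * m20 * m21) * o11 + ((-1) * d111 * m00 * m21 * m22) * o11 + (d111 * m02 * m20 * m21) * o11 + (d121 * m00 * m12 * m21) * o11 + ((-1) * d121 * m02 * m10 * m21) * o11 + (d202 * m10 * m21 * m22) * o11 + ((-1) * d202 * m12 * m20 * m21) * o11 + ((-1) * d212 * m00 * m21 * m22) * o11 + (d212 * m02 * m20 * m21) * o11 + (d222 * m00 * m12 * m21) * o11 + ((-1) * d222 * m02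 * m10 * m21) * o11 + (d002 * m00 * m22) * o11 + ((-1) * d002 * m02 * m20) * o11 + ((-1) * d200 * m00 * m22) * o11 + (d200 * m02 * m20) * o11 + (d012 * m10 * m22) * o11 + ((-1) * d012 * m12 * m20) * o11 + ((-1) * d210 * m10 * m22) * o11 + (d210 * m12 * m20) * o11 + ((-1) * d000 * m10 * m21 * m21) * o12 + (d000 * m11 * m20 * m21) * o12 + (d010 * m00 * m21 * m21) * o12 + ((-1) * d010 * m01 * m20 * m21) * o12 + ((-1) * d020 * m00 * m11 * m21) * o12 + (d020 * m01 * m10 * m21) * o12 + ((-1) * d101 * m10 * m21 * m21) * o12 + (d101 * m11 * m20 * m21) * o12 + (d111 * m00 * m21 * m21) * o12 + ((-1) * d111 * m01 * m20 * m21) * o12 + ((-1) * d121 * m00 * m11 * m21) * o12 + (d121 * m01 * m10 * m21) * o12 + ((-1) * d202 * m10 * m21 * m21) * o12 + (d202 * m11 * m20 * m21) * o12 + (d212 * m00 * m21 * m21) * o12 + ((-1) * d212 * m01 * m20 * m21) * o12 + ((-1) * d222 * m00 * m11 * m21) * o12 + (d222 * m01 * m10 * m21) * o12 + ((-1) * d001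 * m00 * m22) * o12 + (d001 * m02 * m20) * o12 + (d100 * m00 * m22) * o12 + ((-1) * d100 * m02 * m20) * o12 + ((-1) * d011 * m10 * m22) * o12 + (d011 * m12 * m20) * o12 + (d110 * m10 * m22) * o12 + ((-1) * d110 * m12 * m20) * o12 + ((-1) * d000 * m11 * m22 * m22) * o02 + (d000 * m12 * m21 * m22) * o02 + (d010 * m01 * m22 * m22) * o02 + ((-1) * d010 * m02 * m21 * m22) * o02 + ((-1) * d020 * m01 * m12 * m22) * o02 + (d020 * m02 * m11 * m22) * o02 + ((-1) * d101 * m11 * m22 * m22) * o02 + (d101 * m12 * m21 * m22) * o02 + (d111 * m01 * m22 * m22) * o02 + ((-1) * d111 * m02 * m21 * m22) * o02 + ((-1) * d121 * m01 * m12 * m22) * o02 + (d121 * m02 * m11 * m22) * o02 + ((-1) * d202 * m11 * m22 * m22) * o02 + (d202 * m12 * m21 * m22) * o02 + (d212 * m01 * m22 * m22) * o02 + ((-1) * d212 * m02 * m21 * m22) * o02 + ((-1) * d222 * m01 * m12 * m22) * o02 + (d222 * m02 * m11 * m22) * o02 + (d102 * m00 * m21) * o02 + ((-1) * d102 * m01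 * m20) * o02 + ((-1) * d201 * m00 * m21) * o02 + (d201 * m01 * m20) * o02 + (d112 * m10 * m21) * o02 + ((-1) * d112 * m11 * m20) * o02 + ((-1) * d211 * m10 * m21) * o02 + (d211 * m11 * m20) * o02 + (d000 * m10 * m22 * m22) * o12 + ((-1) * d000 * m12 * m20 * m22) * o12 + ((-1) * d010 * m00 * m22 * m22) * o12 + (d010 * m02 * m20 * m22) * o12 + (d020 * m00 * m12 * m22) * o12 + ((-1) * d020 * m02 * m10 * m22) * o12 + (d101 * m10 * m22 * m22) * o12 + ((-1) * d101 * m12 * m20 * m22) * o12 + ((-1) * d111 * m00 * m22 * m22) * o12 + (d111 * m02 * m20 * m22) * o12 + (d121 * m00 * m12 * m22) * o12 + ((-1) * d121 * m02 * m10 * m22) * o12 + (d202 * m10 * m22 * m22) * o12 + ((-1) * d202 * m12 * m20 * m22) * o12 + ((-1) * d212 * m00 * m22 * m22) * o12 + (d212 * m02 * m20 * m22) * o12 + (d222 * m00 * m12 * m22) * o12 + ((-1) * d222 * m02 * m10 * m22) * o12 + ((-1) * d002 * m00 * m21) * o12 + (d002 * m01 * m20) * o12 + (d200 * m00 * m21)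 * o12 + ((-1) * d200 * m01 * m20) * o12 + ((-1) * d012 * m10 * m21) * o12 + (d012 * m11 * m20) * o12 + (d210 * m10 * m21) * o12 + ((-1) * d210 * m11 * m20) * o12 + ((-1) * d000 * m10 * m21 * m22) * o22 + (d000 * m11 * m20 * m22) * o22 + (d010 * m00 * m21 * m22) * o22 + ((-1) * d010 * m01 * m20 * m22) * o22 + ((-1) * d020 * m00 * m11 * m22) * o22 + (d020 * m01 * m10 * m22) * o22 + ((-1) * d101 * m10 * m21 * m22) * o22 + (d101 * m11 * m20 * m22) * o22 + (d111 * m00 * m21 * m22) * o22 + ((-1) * d111 * m01 * m20 * m22) * o22 + ((-1) * d121 * m00 * m11 * m22) * o22 + (d121 * m01 * m10 * m22) * o22 + ((-1) * d202 * m10 * m21 * m22) * o22 + (d202 * m11 * m20 * m22) * o22 + (d212 * m00 * m21 * m22) * o22 + ((-1) * d212 * m01 * m20 * m22) * o22 + ((-1) * d222 * m00 * m11 * m22) * o22 + (d222 * m01 * m10 * m22) * o22 + (d001 * m00 * m21) * o22 + ((-1) * d001 * m01 * m20) * o22 + ((-1) * d100 * m00 * m21) * o22 + (d100 * m01 * m20)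 * o22 + (d011 * m10 * m21) * o22 + ((-1) * d011 * m11 * m20) * o22 + ((-1) * d110 * m10 * m21) * o22 + (d110 * m11 * m20) * o22 + (d000 * m00 * m20) * hdet + (d000 * m01 * m21) * hdet + (d000 * m02 * m22) * hdet + (d010 * m10 * m20) * hdet + (d010 * m11 * m21) * hdet + (d010 * m12 * m22) * hdet + (d020 * m20 * m20) * hdet + (d020 * m21 * m21) * hdet + (d020 * m22 * m22) * hdet + ((-1) * d020) * hdet + (d101 * m00 * m20) * hdet + (d101 * m01 * m21) * hdet + (d101 * m02 * m22) * hdet + (d111 * m10 * m20) * hdet + (d111 * m11 * m21) * hdet + (d111 * m12 * m22) * hdet + (d121 * m20 * m20) * hdet + (d121 * m21 * m21) * hdet + (d121 * m22 * m22) * hdet + ((-1) * d121) * hdet + (d202 * m00 * m20) * hdet + (d202 * m01 * m21) * hdet + (d202 * m02 * m22) * hdet + (d212 * m10 * m20) * hdet + (d212 * m11 * m21) * hdet + (d212 * m12 * m22) * hdet + (d222 * m20 * m20) * hdet + (d222 * m21 * m21) * hdet + (d222 * m22 * m22) * hdet + ((-1) * d222) * hdet + (d001 * m12) * hdet + ((-1)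 * d002 * m11) * hdet + ((-1) * d100 * m12) * hdet + (d102 * m10) * hdet + (d200 * m11) * hdet + ((-1) * d201 * m10) * hdet + ((-1) * d011 * m02) * hdet + (d012 * m01) * hdet + (d110 * m02) * hdet + ((-1) * d112 * m00) * hdet + ((-1) * d210 * m01) * hdet + (d211 * m00) * hdet

set_option maxHeartbeats 1000000 in
theorem div_of_rotation_field_with_constant_curl
    (Ω : Set (Fin 3 → ℝ)) (hΩ : IsOpen Ω)
    (R : (Fin 3 → ℝ) → Fin 3 → Fin 3 → ℝ) (hR : ContDiffOn ℝ 2 R Ω)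
    (hSO : ∀ x ∈ Ω, (Matrix.of (R x))ᵀ * Matrix.of (R x) = 1 ∧ (Matrix.of (R x)).det = 1)
    (α : Matrix (Fin 3) (Fin 3) ℝ)
    (hcurl : ∀ x ∈ Ω, ∀ i l : Fin 3,
      ∑ j, ∑ k, eps l j k * pd j (fun y => R y i k) x = α i l) :
    ∀ x ∈ Ω, ∀ i : Fin 3,
      ∑ j, pd j (fun y => R y i j) x = ∑ j, ∑ k, eps i j k * ∑ l, α j l * R x k l := by
  intro x hx i
  have e000 : eps 0 0 0 = 0 := by norm_num [eps, Prod.ext_iff, Fin.ext_iff]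
  have e001 : eps 0 0 1 = 0 := by norm_num [eps, Prod.ext_iff, Fin.ext_iff]
  have e002 : eps 0 0 2 = 0 := by norm_num [eps, Prod.ext_iff, Fin.ext_iff]
  have e010 : eps 0 1 0 = 0 := by norm_num [eps, Prod.ext_iff, Fin.ext_iff]
  have e011 : eps 0 1 1 = 0 := by norm_num [eps, Prod.ext_iff, Fin.ext_iff]
  have e012 : eps 0 1 2 = 1 := by norm_num [eps, Prod.ext_iff, Fin.ext_iff]
  have e020 : eps 0 2 0 = 0 := by norm_num [eps, Prod.ext_iff, Fin.ext_iff]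
  have e021 : eps 0 2 1 = -1 := by norm_num [eps, Prod.ext_iff, Fin.ext_iff]
  have e022 : eps 0 2 2 = 0 := by norm_num [eps, Prod.ext_iff, Fin.ext_iff]
  have e100 : eps 1 0 0 = 0 := by norm_num [eps, Prod.ext_iff, Fin.ext_iff]
  have e101 : eps 1 0 1 = 0 := by norm_num [eps, Prod.ext_iff, Fin.ext_iff]
  have e102 : eps 1 0 2 = -1 := by norm_num [eps, Prod.ext_iff, Fin.ext_iff]
  have e110 : eps 1 1 0 = 0 := by norm_num [eps, Prod.ext_iff, Fin.ext_iff]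
  have e111 : eps 1 1 1 = 0 := by norm_num [eps, Prod.ext_iff, Fin.ext_iff]
  have e112 : eps 1 1 2 = 0 := by norm_num [eps, Prod.ext_iff, Fin.ext_iff]
  have e120 : eps 1 2 0 = 1 := by norm_num [eps, Prod.ext_iff, Fin.ext_iff]
  have e121 : eps 1 2 1 = 0 := by norm_num [eps, Prod.ext_iff, Fin.ext_iff]
  have e122 : eps 1 2 2 = 0 := by norm_num [eps, Prod.ext_iff, Fin.ext_iff]
  have e200 : eps 2 0 0 = 0 := by norm_num [eps, Prod.ext_iff, Fin.ext_iff]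
  have e201 : eps 2 0 1 = 1 := by norm_num [eps, Prod.ext_iff, Fin.ext_iff]
  have e202 : eps 2 0 2 = 0 := by norm_num [eps, Prod.ext_iff, Fin.ext_iff]
  have e210 : eps 2 1 0 = -1 := by norm_num [eps, Prod.ext_iff, Fin.ext_iff]
  have e211 : eps 2 1 1 = 0 := by norm_num [eps, Prod.ext_iff, Fin.ext_iff]
  have e212 : eps 2 1 2 = 0 := by norm_num [eps, Prod.ext_iff, Fin.ext_iff]
  have e220 : eps 2 2 0 = 0 := by norm_num [eps, Prod.ext_iff, Fin.ext_iff]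
  have e221 : eps 2 2 1 = 0 := by norm_num [eps, Prod.ext_iff, Fin.ext_iff]
  have e222 : eps 2 2 2 = 0 := by norm_num [eps, Prod.ext_iff, Fin.ext_iff]
  have hdiff : ∀ j q : Fin 3, DifferentiableAt ℝ (fun y => R y j q) x := by
    intro j q
    have h1 : DifferentiableAt ℝ R x :=
      ((hR.differentiableOn (by norm_num)).differentiableAt (hΩ.mem_nhds hx))
    exact differentiableAt_pi.mp (differentiableAt_pi.mp h1 j) q
  have hdet : R x 0 0 * R x 1 1 * R x 2 2 - R x 0 0 * R x 1 2 * R x 2 1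
      - R x 0 1 * R x 1 0 * R x 2 2 + R x 0 1 * R x 1 2 * R x 2 0
      + R x 0 2 * R x 1 0 * R x 2 1 - R x 0 2 * R x 1 1 * R x 2 0 = 1 := by
    have h := (hSO x hx).2
    rw [Matrix.det_fin_three] at h
    simpa using h
  have ho : ∀ a b : Fin 3, ∑ j, R x j a * R x j b = if a = b then 1 else 0 := by
    intro a b
    have h := congrFun (congrFun ((hSO x hx).1) a) b
    simpa [Matrix.mul_apply, Matrix.one_apply] using h
  have o00 : R x 0 0 * R x 0 0 + R x 1 0 * R x 1 0 + R x 2 0 * R x 2 0 = 1 := by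
    simpa [Fin.sum_univ_three] using ho 0 0
  have o01 : R x 0 0 * R x 0 1 + R x 1 0 * R x 1 1 + R x 2 0 * R x 2 1 = 0 := by
    simpa [Fin.sum_univ_three] using ho 0 1
  have o02 : R x 0 0 * R x 0 2 + R x 1 0 * R x 1 2 + R x 2 0 * R x 2 2 = 0 := by
    simpa [Fin.sum_univ_three] using ho 0 2
  have o11 : R x 0 1 * R x 0 1 + R x 1 1 * R x 1 1 + R x 2 1 * R x 2 1 = 1 := by
    simpa [Fin.sum_univ_three] using ho 1 1
  have o12 : R x 0 1 * R x 0 2 + R x 1 1 * R x 1 2 + R x 2 1 * R x 2 2 = 0 := by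
    simpa [Fin.sum_univ_three] using ho 1 2
  have o22 : R x 0 2 * R x 0 2 + R x 1 2 * R x 1 2 + R x 2 2 * R x 2 2 = 1 := by
    simpa [Fin.sum_univ_three] using ho 2 2
  have hCs : ∀ p q s : Fin 3,
      ∑ j, (R x j q * pd p (fun y => R y j s) x + R x j s * pd p (fun y => R y j q) x) = 0 := by
    intro p q s
    have key : fderiv ℝ (fun y => ∑ j, R y j q * R y j s) x = 0 := by
      have hev : (fun y => ∑ j, R y j q * R y j s) =ᶠ[nhds x]
          (fun _ => if q = s then (1:ℝ) else 0) := by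
        filter_upwards [hΩ.mem_nhds hx] with y hy
        have h := congrFun (congrFun ((hSO y hy).1) q) s
        simpa [Matrix.mul_apply, Matrix.one_apply] using h
      rw [hev.fderiv_eq]
      exact fderiv_const_apply _
    have hsum : fderiv ℝ (fun y => ∑ j, R y j q * R y j s) x
        = ∑ j, (R x j q • fderiv ℝ (fun y => R y j s) x
            + R x j s • fderiv ℝ (fun y => R y j q) x) := by
      rw [fderiv_fun_sum (A := fun j y => R y j q * R y j s) (fun j _ => (hdiff j q).mul (hdiff j s))]
      exact Finset.sum_congr rfl fun j _ => fderiv_fun_mul (hdiff j q) (hdiff j s)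
    have h2 := congrArg (fun L : (Fin 3 → ℝ) →L[ℝ] ℝ => L (Pi.single p 1)) (hsum.symm.trans key)
    simpa [pd, ContinuousLinearMap.sum_apply] using h2
  have hC : ∀ p q s : Fin 3, R x 0 q * pd p (fun y => R y 0 s) x + R x 0 s * pd p (fun y => R y 0 q) x + R x 1 q * pd p (fun y => R y 1 s) x + R x 1 s * pd p (fun y => R y 1 q) x + R x 2 q * pd p (fun y => R y 2 s) x + R x 2 s * pd p (fun y => R y 2 q) x = 0 := by
    intro p q s
    have h := hCs p q s
    simp only [Fin.sum_univ_three] at h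
    linear_combination h
  have hA0 : ∀ j : Fin 3, pd 1 (fun y => R y j 2) x - pd 2 (fun y => R y j 1) x = α j 0 := by
    intro j
    have h := hcurl x hx j 0
    simp only [Fin.sum_univ_three, e000, e001, e002, e010, e011, e012, e020, e021, e022, e100, e101, e102, e110, e111, e112, e120, e121, e122, e200, e201, e202, e210, e211, e212, e220, e221, e222] at h
    linear_combination h
  have hA1 : ∀ j : Fin 3, pd 2 (fun y => R y j 0) x - pd 0 (fun y => R y j 2) x = α j 1 := by
    intro j
    have h := hcurl x hx j 1
    simp only [Fin.sum_univ_three, e000, e001, e002, e010, e011, e012, e020, e021, e022, e100, e101, e102, e110, e111, e112, e120, e121, e122, e200, e201, e202, e210, e211, e212, e220, e221, e222] at h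
    linear_combination h
  have hA2 : ∀ j : Fin 3, pd 0 (fun y => R y j 1) x - pd 1 (fun y => R y j 0) x = α j 2 := by
    intro j
    have h := hcurl x hx j 2
    simp only [Fin.sum_univ_three, e000, e001, e002, e010, e011, e012, e020, e021, e022, e100, e101, e102, e110, e111, e112, e120, e121, e122, e200, e201, e202, e210, e211, e212, e220, e221, e222] at h
    linear_combination h
  rcases (by decide : ∀ i : Fin 3, i = 0 ∨ i = 1 ∨ i = 2) i with rfl | rfl | rfl
  · simp only [Fin.sum_univ_three, e000, e001, e002, e010, e011, e012, e020, e021, e022, e100, e101, e102, e110, e111, e112, e120, e121, e122, e200, e201, e202, e210, e211, e212, e220, e221, e222]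
    linear_combination aux0 (R x 0 0) (R x 0 1) (R x 0 2) (R x 1 0) (R x 1 1) (R x 1 2) (R x 2 0) (R x 2 1) (R x 2 2) (pd 0 (fun y => R y 0 0) x) (pd 0 (fun y => R y 0 1) x) (pd 0 (fun y => R y 0 2) x) (pd 0 (fun y => R y 1 0) x) (pd 0 (fun y => R y 1 1) x) (pd 0 (fun y => R y 1 2) x) (pd 0 (fun y => R y 2 0) x) (pd 0 (fun y => R y 2 1) x) (pd 0 (fun y => R y 2 2) x) (pd 1 (fun y => R y 0 0) x) (pd 1 (fun y => R y 0 1) x) (pd 1 (fun y => R y 0 2) x) (pd 1 (fun y => R y 1 0) x) (pd 1 (fun y => R y 1 1) x) (pd 1 (fun y => R y 1 2) x) (pd 1 (fun y => R y 2 0) x) (pd 1 (fun y => R y 2 1) x) (pd 1 (fun y => R y 2 2) x) (pd 2 (fun y => R y 0 0) x) (pd 2 (fun y => R y 0 1) x) (pd 2 (fun y => R y 0 2) x) (pd 2 (fun y => R y 1 0) x) (pd 2 (fun y => R y 1 1) x) (pd 2 (fun y => R y 1 2) x) (pd 2 (fun y => R y 2 0) x) (pd 2 (fun y => R y 2 1)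 x) (pd 2 (fun y => R y 2 2) x) (α 0 0) (α 0 1) (α 0 2) (α 1 0) (α 1 1) (α 1 2) (α 2 0) (α 2 1) (α 2 2) o00 o01 o02 o11 o12 o22 hdet (hC 0 0 0) (hC 0 0 1) (hC 0 0 2) (hC 0 1 0) (hC 0 1 1) (hC 0 1 2) (hC 0 2 0) (hC 0 2 1) (hC 0 2 2) (hC 1 0 0) (hC 1 0 1) (hC 1 0 2) (hC 1 1 0) (hC 1 1 1) (hC 1 1 2) (hC 1 2 0) (hC 1 2 1) (hC 1 2 2) (hC 2 0 0) (hC 2 0 1) (hC 2 0 2) (hC 2 1 0) (hC 2 1 1) (hC 2 1 2) (hC 2 2 0) (hC 2 2 1) (hC 2 2 2) (hA0 0) (hA1 0) (hA2 0) (hA0 1) (hA1 1) (hA2 1) (hA0 2) (hA1 2) (hA2 2)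
  · simp only [Fin.sum_univ_three, e000, e001, e002, e010, e011, e012, e020, e021, e022, e100, e101, e102, e110, e111, e112, e120, e121, e122, e200, e201, e202, e210, e211, e212, e220, e221, e222]
    linear_combination aux1 (R x 0 0) (R x 0 1) (R x 0 2) (R x 1 0) (R x 1 1) (R x 1 2) (R x 2 0) (R x 2 1) (R x 2 2) (pd 0 (fun y => R y 0 0) x) (pd 0 (fun y => R y 0 1) x) (pd 0 (fun y => R y 0 2) x) (pd 0 (fun y => R y 1 0) x) (pd 0 (fun y => R y 1 1) x) (pd 0 (fun y => R y 1 2) x) (pd 0 (fun y => R y 2 0) x) (pd 0 (fun y => R y 2 1) x) (pd 0 (fun y => R y 2 2) x) (pd 1 (fun y => R y 0 0) x) (pd 1 (fun y => R y 0 1) x) (pd 1 (fun y => R y 0 2) x) (pd 1 (fun y => R y 1 0) x) (pd 1 (fun y => R y 1 1) x) (pd 1 (fun y => R y 1 2) x) (pd 1 (fun y => R y 2 0) x) (pd 1 (fun y => R y 2 1) x) (pd 1 (fun y => R y 2 2) x) (pd 2 (fun y => R y 0 0) x) (pd 2 (fun y => R y 0 1) x) (pd 2 (fun y => R y 0 2)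 x) (pd 2 (fun y => R y 1 0) x) (pd 2 (fun y => R y 1 1) x) (pd 2 (fun y => R y 1 2) x) (pd 2 (fun y => R y 2 0) x) (pd 2 (fun y => R y 2 1) x) (pd 2 (fun y => R y 2 2) x) (α 0 0) (α 0 1) (α 0 2) (α 1 0) (α 1 1) (α 1 2) (α 2 0) (α 2 1) (α 2 2) o00 o01 o02 o11 o12 o22 hdet (hC 0 0 0) (hC 0 0 1) (hC 0 0 2) (hC 0 1 0) (hC 0 1 1) (hC 0 1 2) (hC 0 2 0) (hC 0 2 1) (hC 0 2 2) (hC 1 0 0) (hC 1 0 1) (hC 1 0 2) (hC 1 1 0) (hC 1 1 1) (hC 1 1 2) (hC 1 2 0) (hC 1 2 1) (hC 1 2 2) (hC 2 0 0) (hC 2 0 1) (hC 2 0 2) (hC 2 1 0) (hC 2 1 1) (hC 2 1 2) (hC 2 2 0) (hC 2 2 1) (hC 2 2 2) (hA0 0) (hA1 0) (hA2 0) (hA0 1) (hA1 1) (hA2 1) (hA0 2) (hA1 2) (hA2 2)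
  · simp only [Fin.sum_univ_three, e000, e001, e002, e010, e011, e012, e020, e021, e022, e100, e101, e102, e110, e111, e112, e120, e121, e122, e200, e201, e202, e210, e211, e212, e220, e221, e222]
    linear_combination aux2 (R x 0 0) (R x 0 1) (R x 0 2) (R x 1 0) (R x 1 1) (R x 1 2) (R x 2 0) (R x 2 1) (R x 2 2) (pd 0 (fun y => R y 0 0) x) (pd 0 (fun y => R y 0 1) x) (pd 0 (fun y => R y 0 2) x) (pd 0 (fun y => R y 1 0) x) (pd 0 (fun y => R y 1 1) x) (pd 0 (fun y => R y 1 2) x) (pd 0 (fun y => R y 2 0) x) (pd 0 (fun y => R y 2 1) x) (pd 0 (fun y => R y 2 2) x) (pd 1 (fun y => R y 0 0) x) (pd 1 (fun y => R y 0 1) x) (pd 1 (fun y => R y 0 2) x) (pd 1 (fun y => R y 1 0) x) (pd 1 (fun y => R y 1 1) x) (pd 1 (fun y => R y 1 2) x) (pd 1 (fun y => R y 2 0) x) (pd 1 (fun y => R y 2 1) x) (pd 1 (fun y => R y 2 2) x) (pd 2 (fun y => R y 0 0) x) (pd 2 (fun y => R y 0 1) x) (pd 2 (fun y => R y 0 2)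 x) (pd 2 (fun y => R y 1 0) x) (pd 2 (fun y => R y 1 1) x) (pd 2 (fun y => R y 1 2) x) (pd 2 (fun y => R y 2 0) x) (pd 2 (fun y => R y 2 1) x) (pd 2 (fun y => R y 2 2) x) (α 0 0) (α 0 1) (α 0 2) (α 1 0) (α 1 1) (α 1 2) (α 2 0) (α 2 1) (α 2 2) o00 o01 o02 o11 o12 o22 hdet (hC 0 0 0) (hC 0 0 1) (hC 0 0 2) (hC 0 1 0) (hC 0 1 1) (hC 0 1 2) (hC 0 2 0) (hC 0 2 1) (hC 0 2 2) (hC 1 0 0) (hC 1 0 1) (hC 1 0 2) (hC 1 1 0) (hC 1 1 1) (hC 1 1 2) (hC 1 2 0) (hC 1 2 1) (hC 1 2 2) (hC 2 0 0) (hC 2 0 1) (hC 2 0 2) (hC 2 1 0) (hC 2 1 1) (hC 2 1 2) (hC 2 2 0) (hC 2 2 1) (hC 2 2 2) (hA0 0) (hA1 0) (hA2 0) (hA0 1) (hA1 1) (hA2 1) (hA0 2) (hA1 2) (hA2 2)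
end

section
/- Let Ω ⊆ ℝ³ be open and connected and R : Ω → SO(3) a C² matrix field with curl R (rowwise) equal to a constant matrix α ∈ ℝ³ˣ³. Then R is constant (and α = 0). -/
open Matrix

lemma fin3cases (p : Fin 3) : p = 0 ∨ p = 1 ∨ p = 2 := by revert p; decide

lemma eps_000 : eps 0 0 0 = 0 := rfl
lemma eps_001 : eps 0 0 1 = 0 := rfl
lemma eps_002 : eps 0 0 2 = 0 := rfl
lemma eps_010 : eps 0 1 0 = 0 := rfl
lemma eps_011 : eps 0 1 1 = 0 := rfl
lemma eps_012 : eps 0 1 2 = 1 := rfl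
lemma eps_020 : eps 0 2 0 = 0 := rfl
lemma eps_021 : eps 0 2 1 = -1 := rfl
lemma eps_022 : eps 0 2 2 = 0 := rfl
lemma eps_100 : eps 1 0 0 = 0 := rfl
lemma eps_101 : eps 1 0 1 = 0 := rfl
lemma eps_102 : eps 1 0 2 = -1 := rfl
lemma eps_110 : eps 1 1 0 = 0 := rfl
lemma eps_111 : eps 1 1 1 = 0 := rfl
lemma eps_112 : eps 1 1 2 = 0 := rfl
lemma eps_120 : eps 1 2 0 = 1 := rfl
lemma eps_121 : eps 1 2 1 = 0 := rfl
lemma eps_122 : eps 1 2 2 = 0 := rfl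
lemma eps_200 : eps 2 0 0 = 0 := rfl
lemma eps_201 : eps 2 0 1 = 1 := rfl
lemma eps_202 : eps 2 0 2 = 0 := rfl
lemma eps_210 : eps 2 1 0 = -1 := rfl
lemma eps_211 : eps 2 1 1 = 0 := rfl
lemma eps_212 : eps 2 1 2 = 0 := rfl
lemma eps_220 : eps 2 2 0 = 0 := rfl
lemma eps_221 : eps 2 2 1 = 0 := rfl
lemma eps_222 : eps 2 2 2 = 0 := rfl
attribute [simp] eps_000 eps_001 eps_002 eps_010 eps_011 eps_012 eps_020 eps_021 eps_022 eps_100 eps_101 eps_102 eps_110 eps_111 eps_112 eps_120 eps_121 eps_122 eps_200 eps_201 eps_202 eps_210 eps_211 eps_212 eps_220 eps_221 eps_222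

section pdtool
variable {n : ℕ} {f g : (Fin n → ℝ) → ℝ} {x : Fin n → ℝ} {i : Fin n} {c : ℝ}

lemma pd_congr (h : f =ᶠ[nhds x] g) : pd i f x = pd i g x := by
  unfold pd; rw [h.fderiv_eq]

lemma pd_const : pd i (fun _ => c) x = 0 := by
  unfold pd; rw [fderiv_fun_const]; simp

lemma pd_add (hf : DifferentiableAt ℝ f x) (hg : DifferentiableAt ℝ g x) :
    pd i (fun y => f y + g y) x = pd i f x + pd i g x := by
  unfold pd; rw [fderiv_fun_add hf hg]; simp

lemma pd_sub (hf : DifferentiableAt ℝ f x) (hg : DifferentiableAt ℝ g x) :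
    pd i (fun y => f y - g y) x = pd i f x - pd i g x := by
  unfold pd; rw [fderiv_fun_sub hf hg]; simp

lemma pd_mul (hf : DifferentiableAt ℝ f x) (hg : DifferentiableAt ℝ g x) :
    pd i (fun y => f y * g y) x = f x * pd i g x + g x * pd i f x := by
  unfold pd; rw [fderiv_fun_mul hf hg]; simp

lemma pd_const_mul (hf : DifferentiableAt ℝ f x) :
    pd i (fun y => c * f y) x = c * pd i f x := by
  unfold pd; rw [fderiv_const_mul hf]; simp

lemma pd_mul_const (hf : DifferentiableAt ℝ f x) :
    pd i (fun y => f y * c) x = pd i f x * c := by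
  unfold pd; rw [fderiv_mul_const hf]; simp [mul_comm]

/-- Schwarz symmetry of second partial derivatives for a C² function. -/
lemma pd_comm (hf : ContDiffAt ℝ 2 f x) (i j : Fin n) :
    pd i (fun y => pd j f y) x = pd j (fun y => pd i f y) x := by
  have h1 : DifferentiableAt ℝ (fderiv ℝ f) x :=
    (hf.fderiv_right (m := 1) (by norm_num)).differentiableAt one_ne_zero
  have key : ∀ v w : Fin n → ℝ,
      fderiv ℝ (fun y => fderiv ℝ f y w) x v = fderiv ℝ (fderiv ℝ f) x v w := by
    intro v w
    rw [fderiv_clm_apply h1 (differentiableAt_const w)]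
    simp
  have hsymm := hf.isSymmSndFDerivAt (by norm_num)
  unfold pd
  rw [key, key, hsymm.eq]

end pdtool

/-- `M = Rᵀ α` at the point `x`. -/
noncomputable def MM (R : (Fin 3 → ℝ) → Fin 3 → Fin 3 → ℝ) (α : Matrix (Fin 3) (Fin 3) ℝ)
    (x : Fin 3 → ℝ) (p l : Fin 3) : ℝ := ∑ s, R x s p * α s l

/-- `T = M - (tr M / 2) Id`. -/
noncomputable def TT (R : (Fin 3 → ℝ) → Fin 3 → Fin 3 → ℝ) (α : Matrix (Fin 3) (Fin 3) ℝ)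
    (x : Fin 3 → ℝ) (j q : Fin 3) : ℝ :=
  MM R α x j q - (if j = q then (MM R α x 0 0 + MM R α x 1 1 + MM R α x 2 2) / 2 else 0)

/-- `B_j`, the skew matrix `Rᵀ ∂_j R`, expressed through `T`. -/
noncomputable def BB (R : (Fin 3 → ℝ) → Fin 3 → Fin 3 → ℝ) (α : Matrix (Fin 3) (Fin 3) ℝ)
    (x : Fin 3 → ℝ) (j p k : Fin 3) : ℝ := ∑ q, eps p k q * TT R α x j q

section main
variable {Ω : Set (Fin 3 → ℝ)} {R : (Fin 3 → ℝ) → Fin 3 → Fin 3 → ℝ}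
  {α : Matrix (Fin 3) (Fin 3) ℝ}

lemma entry_contDiffOn (hR : ContDiffOn ℝ 2 R Ω) (a b : Fin 3) :
    ContDiffOn ℝ 2 (fun y => R y a b) Ω := by
  exact (contDiff_apply_apply ℝ ℝ a b).comp_contDiffOn hR

lemma entry_cd2At (hΩ : IsOpen Ω) (hR : ContDiffOn ℝ 2 R Ω) {x : Fin 3 → ℝ} (hx : x ∈ Ω)
    (a b : Fin 3) : ContDiffAt ℝ 2 (fun y => R y a b) x :=
  (entry_contDiffOn hR a b).contDiffAt (hΩ.mem_nhds hx)

lemma entry_diffAt (hΩ : IsOpen Ω) (hR : ContDiffOn ℝ 2 R Ω) {x : Fin 3 → ℝ} (hx : x ∈ Ω)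
    (a b : Fin 3) : DifferentiableAt ℝ (fun y => R y a b) x :=
  (entry_cd2At hΩ hR hx a b).differentiableAt two_ne_zero

/-- Stage 1: on `Ω`, the gradient of `R` is determined pointwise by `R` and `α`. -/
lemma stage1 (hΩ : IsOpen Ω) (hR : ContDiffOn ℝ 2 R Ω)
    (hortho : ∀ x ∈ Ω, (Matrix.of (R x))ᵀ * Matrix.of (R x) = 1)
    (hcurl : ∀ x ∈ Ω, ∀ i l : Fin 3,
      ∑ j, ∑ k, eps l j k * pd j (fun y => R y i k) x = α i l)
    {x : Fin 3 → ℝ} (hx : x ∈ Ω) :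
    ∀ j a b, pd j (fun y => R y a b) x = ∑ p, R x a p * BB R α x j p b := by
  classical
  have hdiff : ∀ a b : Fin 3, DifferentiableAt ℝ (fun y => R y a b) x :=
    fun a b => entry_diffAt hΩ hR hx a b
  -- orthogonality, both directions, entrywise
  have o1 : ∀ a b : Fin 3, ∑ i, R x i a * R x i b = if a = b then 1 else 0 := by
    intro a b
    have h := congrFun (congrFun (hortho x hx) a) b
    simpa [Matrix.mul_apply, Matrix.one_apply] using h
  have o2 : ∀ a b : Fin 3, ∑ i, R x a i * R x b i = if a = b then 1 else 0 := by
    intro a b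
    have h := congrFun (congrFun (mul_eq_one_comm.mp (hortho x hx) : Matrix.of (R x) * (Matrix.of (R x))ᵀ = 1) a) b
    simpa [Matrix.mul_apply, Matrix.one_apply] using h
  -- specialized clean instances
  have q00 : ∑ i, R x 0 i * R x 0 i = 1 := by simpa using o2 0 0
  have q11 : ∑ i, R x 1 i * R x 1 i = 1 := by simpa using o2 1 1
  have q22 : ∑ i, R x 2 i * R x 2 i = 1 := by simpa using o2 2 2
  have q01 : ∑ i, R x 0 i * R x 1 i = 0 := by simpa using o2 0 1
  have q02 : ∑ i, R x 0 i * R x 2 i = 0 := by simpa using o2 0 2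
  have q10 : ∑ i, R x 1 i * R x 0 i = 0 := by simpa using o2 1 0
  have q12 : ∑ i, R x 1 i * R x 2 i = 0 := by simpa using o2 1 2
  have q20 : ∑ i, R x 2 i * R x 0 i = 0 := by simpa using o2 2 0
  have q21 : ∑ i, R x 2 i * R x 1 i = 0 := by simpa using o2 2 1
  simp only [Fin.sum_univ_three] at q00 q11 q22 q01 q02 q10 q12 q20 q21
  -- the R Rᵀ contraction lemma
  have o2v : ∀ (v : Fin 3 → ℝ) (a : Fin 3),
      ∑ p, R x a p * (∑ i, R x i p * v i) = v a := by
    intro v a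
    obtain rfl | rfl | rfl := fin3cases a <;> simp only [Fin.sum_univ_three]
    · linear_combination v 0 * q00 + v 1 * q01 + v 2 * q02
    · linear_combination v 0 * q10 + v 1 * q11 + v 2 * q12
    · linear_combination v 0 * q20 + v 1 * q21 + v 2 * q22
  -- abbreviations
  obtain ⟨g, hg⟩ : ∃ g : Fin 3 → Fin 3 → Fin 3 → ℝ,
      ∀ j a b, g j a b = pd j (fun y => R y a b) x := ⟨_, fun _ _ _ => rfl⟩
  obtain ⟨c, hcdef⟩ : ∃ c : Fin 3 → Fin 3 → Fin 3 → ℝ,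
      ∀ j p k, c j p k = ∑ i, R x i p * g j i k := ⟨_, fun _ _ _ => rfl⟩
  obtain ⟨t, htdef⟩ : ∃ t : Fin 3 → Fin 3 → ℝ,
      ∀ j q, t j q = (∑ p, ∑ k, eps p k q * c j p k) / 2 := ⟨_, fun _ _ => rfl⟩
  -- differentiated orthogonality
  have s1 : ∀ j a b : Fin 3,
      ∑ p, (g j p a * R x p b + R x p a * g j p b) = 0 := by
    intro j a b
    have hfun : (fun y => R y 0 a * R y 0 b + R y 1 a * R y 1 b + R y 2 a * R y 2 b)
        =ᶠ[nhds x] (fun _ => if a = b then (1:ℝ) else 0) := by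
      filter_upwards [hΩ.mem_nhds hx] with y hy
      have h := congrFun (congrFun (hortho y hy) a) b
      simpa [Matrix.mul_apply, Matrix.one_apply, Fin.sum_univ_three] using h
    have h0 : pd j (fun y => R y 0 a * R y 0 b + R y 1 a * R y 1 b + R y 2 a * R y 2 b) x
        = 0 := by rw [pd_congr hfun, pd_const]
    rw [pd_add (((hdiff 0 a).fun_mul (hdiff 0 b)).fun_add ((hdiff 1 a).fun_mul (hdiff 1 b)))
        ((hdiff 2 a).fun_mul (hdiff 2 b)),
      pd_add ((hdiff 0 a).fun_mul (hdiff 0 b)) ((hdiff 1 a).fun_mul (hdiff 1 b)),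
      pd_mul (hdiff 0 a) (hdiff 0 b), pd_mul (hdiff 1 a) (hdiff 1 b),
      pd_mul (hdiff 2 a) (hdiff 2 b)] at h0
    simp only [Fin.sum_univ_three, hg]
    linear_combination h0
  have s2 : ∀ i l : Fin 3,
      ∑ j, ∑ k, eps l j k * g j i k = α i l := by
    intro i l; simp only [hg]; exact hcurl x hx i l
  -- g = R * c
  have hgc : ∀ j i k, g j i k = ∑ p, R x i p * c j p k := by
    intro j i k
    simp only [hcdef]
    exact (o2v (fun i' => g j i' k) i).symm
  -- c is skew in the last two indices
  have hcskew : ∀ j p k, c j p k + c j k p = 0 := by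
    intro j p k
    have h := s1 j k p
    simp only [Fin.sum_univ_three] at h
    simp only [hcdef, Fin.sum_univ_three]
    linear_combination h
  -- c in terms of its axial vector t
  have hct : ∀ j p k, c j p k = ∑ q, eps p k q * t j q := by
    intro j p k
    obtain rfl | rfl | rfl := fin3cases p <;> obtain rfl | rfl | rfl := fin3cases k <;>
      simp only [htdef, Fin.sum_univ_three] <;> simp <;>
      linarith [hcskew j 0 0, hcskew j 1 1, hcskew j 2 2, hcskew j 0 1, hcskew j 0 2,
        hcskew j 1 2]
  -- M in terms of c
  have hMc : ∀ p l, MM R α x p l = ∑ j, ∑ k, eps l j k * c j p k := by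
    intro p l
    have h0 := s2 0 l; have h1 := s2 1 l; have h2 := s2 2 l
    simp only [Fin.sum_univ_three] at h0 h1 h2
    simp only [MM, hcdef, Fin.sum_univ_three]
    linear_combination (-(R x 0 p) * h0) - R x 1 p * h1 - R x 2 p * h2
  -- M in terms of t
  have hMt : ∀ p l, MM R α x p l
      = t p l - (if p = l then 1 else 0) * (t 0 0 + t 1 1 + t 2 2) := by
    intro p l
    rw [hMc p l]
    simp only [hct, Fin.sum_univ_three]
    obtain rfl | rfl | rfl := fin3cases p <;> obtain rfl | rfl | rfl := fin3cases l <;>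
      simp <;> ring
  -- clean instances of hMt
  have m00 : MM R α x 0 0 = t 0 0 - (t 0 0 + t 1 1 + t 2 2) := by simpa using hMt 0 0
  have m11 : MM R α x 1 1 = t 1 1 - (t 0 0 + t 1 1 + t 2 2) := by simpa using hMt 1 1
  have m22 : MM R α x 2 2 = t 2 2 - (t 0 0 + t 1 1 + t 2 2) := by simpa using hMt 2 2
  have m01 : MM R α x 0 1 = t 0 1 := by simpa using hMt 0 1
  have m02 : MM R α x 0 2 = t 0 2 := by simpa using hMt 0 2
  have m10 : MM R α x 1 0 = t 1 0 := by simpa using hMt 1 0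
  have m12 : MM R α x 1 2 = t 1 2 := by simpa using hMt 1 2
  have m20 : MM R α x 2 0 = t 2 0 := by simpa using hMt 2 0
  have m21 : MM R α x 2 1 = t 2 1 := by simpa using hMt 2 1
  -- t = T
  have htM : ∀ j q, t j q = TT R α x j q := by
    intro j q
    obtain rfl | rfl | rfl := fin3cases j <;> obtain rfl | rfl | rfl := fin3cases q <;>
      simp only [TT] <;> simp <;>
      linarith [m00, m01, m02, m10, m11, m12, m20, m21, m22]
  -- conclusion
  intro j a b
  rw [← hg j a b, hgc j a b]
  refine Finset.sum_congr rfl fun p _ => ?_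
  rw [hct j p b]
  unfold BB
  refine congrArg _ (Finset.sum_congr rfl fun q _ => ?_)
  rw [htM]


lemma MM_fun_eq (p l : Fin 3) : (fun y => MM R α y p l)
    = fun y => R y 0 p * α 0 l + R y 1 p * α 1 l + R y 2 p * α 2 l := by
  funext y; simp [MM, Fin.sum_univ_three]

lemma MM_diffAt (hΩ : IsOpen Ω) (hR : ContDiffOn ℝ 2 R Ω) {x : Fin 3 → ℝ} (hx : x ∈ Ω)
    (p l : Fin 3) : DifferentiableAt ℝ (fun y => MM R α y p l) x := by
  rw [MM_fun_eq]
  exact (((entry_diffAt hΩ hR hx 0 p).mul_const _).add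
    ((entry_diffAt hΩ hR hx 1 p).mul_const _)).add ((entry_diffAt hΩ hR hx 2 p).mul_const _)

lemma pd_MM (hΩ : IsOpen Ω) (hR : ContDiffOn ℝ 2 R Ω) {x : Fin 3 → ℝ} (hx : x ∈ Ω)
    (i p l : Fin 3) : pd i (fun y => MM R α y p l) x
      = pd i (fun y => R y 0 p) x * α 0 l + pd i (fun y => R y 1 p) x * α 1 l
        + pd i (fun y => R y 2 p) x * α 2 l := by
  rw [MM_fun_eq]
  rw [pd_add (((entry_diffAt hΩ hR hx 0 p).mul_const _).fun_add
      ((entry_diffAt hΩ hR hx 1 p).mul_const _)) ((entry_diffAt hΩ hR hx 2 p).mul_const _),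
    pd_add ((entry_diffAt hΩ hR hx 0 p).mul_const _) ((entry_diffAt hΩ hR hx 1 p).mul_const _),
    pd_mul_const (entry_diffAt hΩ hR hx 0 p), pd_mul_const (entry_diffAt hΩ hR hx 1 p),
    pd_mul_const (entry_diffAt hΩ hR hx 2 p)]

lemma TT_diffAt (hΩ : IsOpen Ω) (hR : ContDiffOn ℝ 2 R Ω) {x : Fin 3 → ℝ} (hx : x ∈ Ω)
    (j q : Fin 3) : DifferentiableAt ℝ (fun y => TT R α y j q) x := by
  by_cases h : j = q
  · have e : (fun y => TT R α y j q) = fun y => MM R α y j q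
        - (MM R α y 0 0 + MM R α y 1 1 + MM R α y 2 2) * (1/2) := by
      funext y; simp [TT, h]; ring
    rw [e]
    exact (MM_diffAt hΩ hR hx j q).sub ((((MM_diffAt hΩ hR hx 0 0).add
      (MM_diffAt hΩ hR hx 1 1)).add (MM_diffAt hΩ hR hx 2 2)).mul_const _)
  · have e : (fun y => TT R α y j q) = fun y => MM R α y j q := by
      funext y; simp [TT, h]
    rw [e]; exact MM_diffAt hΩ hR hx j q

lemma pd_TT (hΩ : IsOpen Ω) (hR : ContDiffOn ℝ 2 R Ω) {x : Fin 3 → ℝ} (hx : x ∈ Ω)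
    (i j q : Fin 3) : pd i (fun y => TT R α y j q) x
      = pd i (fun y => MM R α y j q) x
        - (if j = q then (pd i (fun y => MM R α y 0 0) x + pd i (fun y => MM R α y 1 1) x
            + pd i (fun y => MM R α y 2 2) x) / 2 else 0) := by
  by_cases h : j = q
  · have e : (fun y => TT R α y j q) = fun y => MM R α y j q
        - (MM R α y 0 0 + MM R α y 1 1 + MM R α y 2 2) * (1/2) := by
      funext y; simp [TT, h]; ring
    rw [e, pd_sub (MM_diffAt hΩ hR hx j q) ((((MM_diffAt hΩ hR hx 0 0).fun_add
        (MM_diffAt hΩ hR hx 1 1)).fun_add (MM_diffAt hΩ hR hx 2 2)).mul_const _),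
      pd_mul_const (((MM_diffAt hΩ hR hx 0 0).fun_add (MM_diffAt hΩ hR hx 1 1)).fun_add
        (MM_diffAt hΩ hR hx 2 2)),
      pd_add ((MM_diffAt hΩ hR hx 0 0).fun_add (MM_diffAt hΩ hR hx 1 1)) (MM_diffAt hΩ hR hx 2 2),
      pd_add (MM_diffAt hΩ hR hx 0 0) (MM_diffAt hΩ hR hx 1 1), if_pos h]
    ring
  · have e : (fun y => TT R α y j q) = fun y => MM R α y j q := by
      funext y; simp [TT, h]
    rw [e, if_neg h, sub_zero]

lemma BB_fun_eq (j p k : Fin 3) : (fun y => BB R α y j p k)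
    = fun y => eps p k 0 * TT R α y j 0 + eps p k 1 * TT R α y j 1
      + eps p k 2 * TT R α y j 2 := by
  funext y; simp [BB, Fin.sum_univ_three]

lemma BB_diffAt (hΩ : IsOpen Ω) (hR : ContDiffOn ℝ 2 R Ω) {x : Fin 3 → ℝ} (hx : x ∈ Ω)
    (j p k : Fin 3) : DifferentiableAt ℝ (fun y => BB R α y j p k) x := by
  rw [BB_fun_eq]
  exact (((TT_diffAt hΩ hR hx j 0).const_mul _).add
    ((TT_diffAt hΩ hR hx j 1).const_mul _)).add ((TT_diffAt hΩ hR hx j 2).const_mul _)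

lemma pd_BB (hΩ : IsOpen Ω) (hR : ContDiffOn ℝ 2 R Ω) {x : Fin 3 → ℝ} (hx : x ∈ Ω)
    (i j p k : Fin 3) : pd i (fun y => BB R α y j p k) x
      = eps p k 0 * pd i (fun y => TT R α y j 0) x
        + eps p k 1 * pd i (fun y => TT R α y j 1) x
        + eps p k 2 * pd i (fun y => TT R α y j 2) x := by
  rw [BB_fun_eq]
  rw [pd_add (((TT_diffAt hΩ hR hx j 0).const_mul _).fun_add
      ((TT_diffAt hΩ hR hx j 1).const_mul _)) ((TT_diffAt hΩ hR hx j 2).const_mul _),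
    pd_add ((TT_diffAt hΩ hR hx j 0).const_mul _) ((TT_diffAt hΩ hR hx j 1).const_mul _),
    pd_const_mul (TT_diffAt hΩ hR hx j 0), pd_const_mul (TT_diffAt hΩ hR hx j 1),
    pd_const_mul (TT_diffAt hΩ hR hx j 2)]


set_option maxHeartbeats 2000000 in
/-- Stage 2: the pointwise value of `M = Rᵀ α` vanishes. -/
lemma stage2 (hΩ : IsOpen Ω) (hR : ContDiffOn ℝ 2 R Ω)
    (hortho : ∀ x ∈ Ω, (Matrix.of (R x))ᵀ * Matrix.of (R x) = 1)
    (hcurl : ∀ x ∈ Ω, ∀ i l : Fin 3,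
      ∑ j, ∑ k, eps l j k * pd j (fun y => R y i k) x = α i l)
    {x : Fin 3 → ℝ} (hx : x ∈ Ω) :
    ∀ p l, MM R α x p l = 0 := by
  classical
  have hst : ∀ {y}, y ∈ Ω → ∀ j a b,
      pd j (fun z => R z a b) y = ∑ p, R y a p * BB R α y j p b :=
    fun {y} hy => stage1 hΩ hR hortho hcurl hy
  set Rx : Matrix (Fin 3) (Fin 3) ℝ := Matrix.of (R x) with hRxdef
  have horth' : Rxᵀ * Rx = 1 := hortho x hx
  obtain ⟨Bm, hBm⟩ : ∃ Bm : Fin 3 → Matrix (Fin 3) (Fin 3) ℝ,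
      ∀ i p k, Bm i p k = BB R α x i p k := ⟨_, fun _ _ _ => rfl⟩
  obtain ⟨Gm, hGm⟩ : ∃ Gm : Fin 3 → Matrix (Fin 3) (Fin 3) ℝ,
      ∀ i a b, Gm i a b = pd i (fun y => R y a b) x := ⟨_, fun _ _ _ => rfl⟩
  obtain ⟨DBm, hDBm⟩ : ∃ DBm : Fin 3 → Fin 3 → Matrix (Fin 3) (Fin 3) ℝ,
      ∀ i j p k, DBm i j p k = pd i (fun y => BB R α y j p k) x := ⟨_, fun _ _ _ _ => rfl⟩
  have hG : ∀ i, Gm i = Rx * Bm i := by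
    intro i; ext a b
    rw [Matrix.mul_apply, hGm, hst hx i a b]
    exact Finset.sum_congr rfl fun p _ => by rw [hBm]; rfl
  have hentry : ∀ i j a b, (Gm i * Bm j + Rx * DBm i j) a b
      = pd i (fun y => pd j (fun z => R z a b) y) x := by
    intro i j a b
    have hfe : (fun y => pd j (fun z => R z a b) y)
        =ᶠ[nhds x] (fun y => R y a 0 * BB R α y j 0 b + R y a 1 * BB R α y j 1 b
          + R y a 2 * BB R α y j 2 b) := by
      filter_upwards [hΩ.mem_nhds hx] with y hy
      rw [hst hy j a b]; simp [Fin.sum_univ_three]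
    rw [pd_congr hfe,
      pd_add (((entry_diffAt hΩ hR hx a 0).fun_mul (BB_diffAt hΩ hR hx j 0 b)).fun_add
        ((entry_diffAt hΩ hR hx a 1).fun_mul (BB_diffAt hΩ hR hx j 1 b)))
        ((entry_diffAt hΩ hR hx a 2).fun_mul (BB_diffAt hΩ hR hx j 2 b)),
      pd_add ((entry_diffAt hΩ hR hx a 0).fun_mul (BB_diffAt hΩ hR hx j 0 b))
        ((entry_diffAt hΩ hR hx a 1).fun_mul (BB_diffAt hΩ hR hx j 1 b)),
      pd_mul (entry_diffAt hΩ hR hx a 0) (BB_diffAt hΩ hR hx j 0 b),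
      pd_mul (entry_diffAt hΩ hR hx a 1) (BB_diffAt hΩ hR hx j 1 b),
      pd_mul (entry_diffAt hΩ hR hx a 2) (BB_diffAt hΩ hR hx j 2 b)]
    rw [Matrix.add_apply, Matrix.mul_apply, Matrix.mul_apply]
    simp only [Fin.sum_univ_three, hGm, hBm, hDBm]
    have hRxa : ∀ p, Rx a p = R x a p := fun p => rfl
    rw [hRxa, hRxa, hRxa]
    ring
  have hS : ∀ i j, Gm i * Bm j + Rx * DBm i j = Gm j * Bm i + Rx * DBm j i := by
    intro i j; ext a b
    rw [hentry i j a b, hentry j i a b]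
    exact pd_comm (entry_cd2At hΩ hR hx a b) i j
  have key : ∀ i j, Bm i * Bm j + DBm i j = Bm j * Bm i + DBm j i := by
    intro i j
    have h := hS i j
    rw [hG i, hG j] at h
    have h2 : Rxᵀ * (Rx * Bm i * Bm j + Rx * DBm i j)
        = Rxᵀ * (Rx * Bm j * Bm i + Rx * DBm j i) := by rw [h]
    calc Bm i * Bm j + DBm i j
        = Rxᵀ * Rx * (Bm i * Bm j) + Rxᵀ * Rx * DBm i j := by rw [horth']; simp
      _ = Rxᵀ * (Rx * Bm i * Bm j + Rx * DBm i j) := by noncomm_ring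
      _ = Rxᵀ * (Rx * Bm j * Bm i + Rx * DBm j i) := h2
      _ = Rxᵀ * Rx * (Bm j * Bm i) + Rxᵀ * Rx * DBm j i := by noncomm_ring
      _ = Bm j * Bm i + DBm j i := by rw [horth']; simp
  -- derivative of M in terms of B and M
  have hdmu : ∀ i p l, pd i (fun y => MM R α y p l) x
      = ∑ a, BB R α x i a p * MM R α x a l := by
    intro i p l
    rw [pd_MM hΩ hR hx i p l, hst hx i 0 p, hst hx i 1 p, hst hx i 2 p]
    simp only [MM, Fin.sum_univ_three]
    ring
  -- DBm entries in terms of B and M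
  have hDB : ∀ i j p k, DBm i j p k
      = eps p k 0 * ((∑ a, BB R α x i a j * MM R α x a 0)
          - (if j = (0:Fin 3) then ((∑ a, BB R α x i a 0 * MM R α x a 0)
            + (∑ a, BB R α x i a 1 * MM R α x a 1)
            + (∑ a, BB R α x i a 2 * MM R α x a 2)) / 2 else 0))
        + eps p k 1 * ((∑ a, BB R α x i a j * MM R α x a 1)
          - (if j = (1:Fin 3) then ((∑ a, BB R α x i a 0 * MM R α x a 0)
            + (∑ a, BB R α x i a 1 * MM R α x a 1)
            + (∑ a, BB R α x i a 2 * MM R α x a 2)) / 2 else 0))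
        + eps p k 2 * ((∑ a, BB R α x i a j * MM R α x a 2)
          - (if j = (2:Fin 3) then ((∑ a, BB R α x i a 0 * MM R α x a 0)
            + (∑ a, BB R α x i a 1 * MM R α x a 1)
            + (∑ a, BB R α x i a 2 * MM R α x a 2)) / 2 else 0)) := by
    intro i j p k
    rw [hDBm, pd_BB hΩ hR hx i j p k, pd_TT hΩ hR hx i j 0, pd_TT hΩ hR hx i j 1,
      pd_TT hΩ hR hx i j 2, hdmu i j 0, hdmu i j 1, hdmu i j 2,
      hdmu i 0 0, hdmu i 1 1, hdmu i 2 2]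
  -- extract the three scalar equations
  have hE1 := congrFun (congrFun (key 0 1) 0) 1
  have hE2 := congrFun (congrFun (key 0 2) 0) 2
  have hE3 := congrFun (congrFun (key 1 2) 1) 2
  rw [Matrix.add_apply, Matrix.add_apply, Matrix.mul_apply, Matrix.mul_apply,
    hDB, hDB] at hE1 hE2 hE3
  simp only [Fin.sum_univ_three, hBm, BB, TT] at hE1 hE2 hE3
  norm_num at hE1 hE2 hE3
  simp only [show ((0:Fin 3) = 2) = False from by decide, show ((2:Fin 3) = 0) = False from by decide,
    show ((1:Fin 3) = 2) = False from by decide, show ((2:Fin 3) = 1) = False from by decide,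
    show ((0:Fin 3) = 1) = False from by decide, show ((1:Fin 3) = 0) = False from by decide,
    if_false, if_true, eq_self_iff_true] at hE1 hE2 hE3
  set m00 := MM R α x 0 0 with hm00
  set m01 := MM R α x 0 1 with hm01
  set m02 := MM R α x 0 2 with hm02
  set m10 := MM R α x 1 0 with hm10
  set m11 := MM R α x 1 1 with hm11
  set m12 := MM R α x 1 2 with hm12
  set m20 := MM R α x 2 0 with hm20
  set m21 := MM R α x 2 1 with hm21
  set m22 := MM R α x 2 2 with hm22
  have hSOS : (1/4)*((m00-m11)^2+(m00-m22)^2+(m11-m22)^2) + (3/4)*(m00^2+m11^2+m22^2)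
      + (1/2)*((m01+m10)^2+(m02+m20)^2+(m12+m21)^2)
      + (1/2)*(m01^2+m10^2+m02^2+m20^2+m12^2+m21^2) = 0 := by
    linear_combination hE1 + hE2 + hE3
  have z00 : m00 = 0 := by
    have h2 : m00^2 = 0 := by linarith [hSOS, sq_nonneg (m00-m11), sq_nonneg (m00-m22), sq_nonneg (m11-m22), sq_nonneg (m01+m10), sq_nonneg (m02+m20), sq_nonneg (m12+m21), sq_nonneg m00, sq_nonneg m11, sq_nonneg m22, sq_nonneg m01, sq_nonneg m10, sq_nonneg m02, sq_nonneg m20, sq_nonneg m12, sq_nonneg m21]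
    exact sq_eq_zero_iff.mp h2
  have z01 : m01 = 0 := by
    have h2 : m01^2 = 0 := by linarith [hSOS, sq_nonneg (m00-m11), sq_nonneg (m00-m22), sq_nonneg (m11-m22), sq_nonneg (m01+m10), sq_nonneg (m02+m20), sq_nonneg (m12+m21), sq_nonneg m00, sq_nonneg m11, sq_nonneg m22, sq_nonneg m01, sq_nonneg m10, sq_nonneg m02, sq_nonneg m20, sq_nonneg m12, sq_nonneg m21]
    exact sq_eq_zero_iff.mp h2
  have z02 : m02 = 0 := by
    have h2 : m02^2 = 0 := by linarith [hSOS, sq_nonneg (m00-m11), sq_nonneg (m00-m22), sq_nonneg (m11-m22), sq_nonneg (m01+m10), sq_nonneg (m02+m20), sq_nonneg (m12+m21), sq_nonneg m00, sq_nonneg m11, sq_nonneg m22, sq_nonneg m01, sq_nonneg m10, sq_nonneg m02, sq_nonneg m20, sq_nonneg m12, sq_nonneg m21]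
    exact sq_eq_zero_iff.mp h2
  have z10 : m10 = 0 := by
    have h2 : m10^2 = 0 := by linarith [hSOS, sq_nonneg (m00-m11), sq_nonneg (m00-m22), sq_nonneg (m11-m22), sq_nonneg (m01+m10), sq_nonneg (m02+m20), sq_nonneg (m12+m21), sq_nonneg m00, sq_nonneg m11, sq_nonneg m22, sq_nonneg m01, sq_nonneg m10, sq_nonneg m02, sq_nonneg m20, sq_nonneg m12, sq_nonneg m21]
    exact sq_eq_zero_iff.mp h2
  have z11 : m11 = 0 := by
    have h2 : m11^2 = 0 := by linarith [hSOS, sq_nonneg (m00-m11), sq_nonneg (m00-m22), sq_nonneg (m11-m22), sq_nonneg (m01+m10), sq_nonneg (m02+m20), sq_nonneg (m12+m21), sq_nonneg m00, sq_nonneg m11, sq_nonneg m22, sq_nonneg m01, sq_nonneg m10, sq_nonneg m02, sq_nonneg m20, sq_nonneg m12, sq_nonneg m21]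
    exact sq_eq_zero_iff.mp h2
  have z12 : m12 = 0 := by
    have h2 : m12^2 = 0 := by linarith [hSOS, sq_nonneg (m00-m11), sq_nonneg (m00-m22), sq_nonneg (m11-m22), sq_nonneg (m01+m10), sq_nonneg (m02+m20), sq_nonneg (m12+m21), sq_nonneg m00, sq_nonneg m11, sq_nonneg m22, sq_nonneg m01, sq_nonneg m10, sq_nonneg m02, sq_nonneg m20, sq_nonneg m12, sq_nonneg m21]
    exact sq_eq_zero_iff.mp h2
  have z20 : m20 = 0 := by
    have h2 : m20^2 = 0 := by linarith [hSOS, sq_nonneg (m00-m11), sq_nonneg (m00-m22), sq_nonneg (m11-m22), sq_nonneg (m01+m10), sq_nonneg (m02+m20), sq_nonneg (m12+m21), sq_nonneg m00, sq_nonneg m11, sq_nonneg m22, sq_nonneg m01, sq_nonneg m10, sq_nonneg m02, sq_nonneg m20, sq_nonneg m12, sq_nonneg m21]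
    exact sq_eq_zero_iff.mp h2
  have z21 : m21 = 0 := by
    have h2 : m21^2 = 0 := by linarith [hSOS, sq_nonneg (m00-m11), sq_nonneg (m00-m22), sq_nonneg (m11-m22), sq_nonneg (m01+m10), sq_nonneg (m02+m20), sq_nonneg (m12+m21), sq_nonneg m00, sq_nonneg m11, sq_nonneg m22, sq_nonneg m01, sq_nonneg m10, sq_nonneg m02, sq_nonneg m20, sq_nonneg m12, sq_nonneg m21]
    exact sq_eq_zero_iff.mp h2
  have z22 : m22 = 0 := by
    have h2 : m22^2 = 0 := by linarith [hSOS, sq_nonneg (m00-m11), sq_nonneg (m00-m22), sq_nonneg (m11-m22), sq_nonneg (m01+m10), sq_nonneg (m02+m20), sq_nonneg (m12+m21), sq_nonneg m00, sq_nonneg m11, sq_nonneg m22, sq_nonneg m01, sq_nonneg m10, sq_nonneg m02, sq_nonneg m20, sq_nonneg m12, sq_nonneg m21]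
    exact sq_eq_zero_iff.mp h2
  intro p l
  obtain rfl|rfl|rfl := fin3cases p <;> obtain rfl|rfl|rfl := fin3cases l
  · exact hm00 ▸ z00
  · exact hm01 ▸ z01
  · exact hm02 ▸ z02
  · exact hm10 ▸ z10
  · exact hm11 ▸ z11
  · exact hm12 ▸ z12
  · exact hm20 ▸ z20
  · exact hm21 ▸ z21
  · exact hm22 ▸ z22

end main

theorem rotations_with_constant_curl_are_constant
    (Ω : Set (Fin 3 → ℝ)) (hΩ : IsOpen Ω) (hconn : IsConnected Ω)
    (R : (Fin 3 → ℝ) → Fin 3 → Fin 3 → ℝ) (hR : ContDiffOn ℝ 2 R Ω)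
    (hSO : ∀ x ∈ Ω, (Matrix.of (R x))ᵀ * Matrix.of (R x) = 1 ∧ (Matrix.of (R x)).det = 1)
    (α : Matrix (Fin 3) (Fin 3) ℝ)
    (hcurl : ∀ x ∈ Ω, ∀ i l : Fin 3,
      ∑ j, ∑ k, eps l j k * pd j (fun y => R y i k) x = α i l) :
    (∀ x ∈ Ω, ∀ y ∈ Ω, R x = R y) ∧ α = 0 := by
  classical
  have hortho : ∀ x ∈ Ω, (Matrix.of (R x))ᵀ * Matrix.of (R x) = 1 := fun x hx => (hSO x hx).1
  have hpd0 : ∀ x ∈ Ω, ∀ j a b, pd j (fun y => R y a b) x = 0 := by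
    intro x hx j a b
    rw [stage1 hΩ hR hortho hcurl hx j a b]
    have hM := stage2 hΩ hR hortho hcurl hx
    simp [BB, TT, hM, Fin.sum_univ_three]
  have hα : α = 0 := by
    obtain ⟨x0, hx0⟩ := hconn.nonempty
    ext i l
    have h := hcurl x0 hx0 i l
    simp only [hpd0 x0 hx0] at h
    simpa using h.symm
  refine ⟨?_, hα⟩
  have hfz : ∀ x ∈ Ω, ∀ a b, fderiv ℝ (fun y => R y a b) x = 0 := by
    intro x hx a b
    ext v
    show fderiv ℝ (fun y => R y a b) x v = 0
    have hsingle : ∀ i : Fin 3, Pi.single i (v i) = v i • (Pi.single i 1 : Fin 3 → ℝ) := by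
      intro i; funext j; simp [Pi.single_apply, mul_ite]
    calc fderiv ℝ (fun y => R y a b) x v
        = fderiv ℝ (fun y => R y a b) x (∑ i, Pi.single i (v i)) := by
          conv_lhs => rw [← Finset.univ_sum_single v]
      _ = ∑ i, fderiv ℝ (fun y => R y a b) x (Pi.single i (v i)) := by
          rw [map_sum]
      _ = ∑ i, v i * fderiv ℝ (fun y => R y a b) x (Pi.single i 1) := by
          refine Finset.sum_congr rfl fun i _ => ?_
          rw [hsingle i]; simp
      _ = 0 := by
          refine Finset.sum_eq_zero fun i _ => ?_
          have := hpd0 x hx i a b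
          unfold pd at this
          rw [this, mul_zero]
  have hball : ∀ x ∈ Ω, ∃ ε > 0, Metric.ball x ε ⊆ Ω ∧
      ∀ z ∈ Metric.ball x ε, R z = R x := by
    intro x hx
    obtain ⟨ε, hε, hb⟩ := Metric.isOpen_iff.mp hΩ x hx
    refine ⟨ε, hε, hb, fun z hz => ?_⟩
    funext a b
    have hdo : DifferentiableOn ℝ (fun y => R y a b) (Metric.ball x ε) :=
      fun w hw => (entry_diffAt hΩ hR (hb hw) a b).differentiableWithinAt
    have hz0 : ∀ w ∈ Metric.ball x ε,
        fderivWithin ℝ (fun y => R y a b) (Metric.ball x ε) w = 0 := by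
      intro w hw
      rw [fderivWithin_of_isOpen Metric.isOpen_ball hw]
      exact hfz w (hb hw) a b
    exact (convex_ball x ε).is_const_of_fderivWithin_eq_zero hdo hz0 hz
      (Metric.mem_ball_self hε)
  intro x hx y hy
  haveI := Subtype.connectedSpace hconn
  have hlc : IsLocallyConstant (fun z : Ω => R z) := by
    rw [IsLocallyConstant.iff_exists_open (fun z : Ω => R z)]
    intro z
    obtain ⟨ε, hε, hb, hconst⟩ := hball z.1 z.2
    refine ⟨Subtype.val ⁻¹' Metric.ball z.1 ε,
      Metric.isOpen_ball.preimage continuous_subtype_val, Metric.mem_ball_self hε,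
      fun w hw => ?_⟩
    exact hconst w.1 hw
  exact hlc.apply_eq_of_preconnectedSpace ⟨x, hx⟩ ⟨y, hy⟩
end

section
/- Let Ω ⊆ ℝⁿ, and let R : Ω → SO(n) be differentiable at x ∈ Ω. Then for all i,k,l: 2(R(x)ᵀ ∂ᵢR(x))ₖₗ = Σₘ [ Rₘₖ(x)(Curl R(x))ₘᵢₗ + Rₘᵢ(x)(Curl R(x))ₘₖₗ + Rₘₗ(x)(Curl R(x))ₘₖᵢ ], where (Curl R)ₘⱼₖ = ∂ⱼRₘₖ - ∂ₖRₘⱼ. -/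
open Matrix

theorem derivative_of_rotation_field_from_curl
    (n : ℕ) (Ω : Set (Fin n → ℝ)) (hΩ : IsOpen Ω)
    (R : (Fin n → ℝ) → Fin n → Fin n → ℝ)
    (hSO : ∀ y ∈ Ω, (Matrix.of (R y))ᵀ * Matrix.of (R y) = 1 ∧ (Matrix.of (R y)).det = 1)
    (x : Fin n → ℝ) (hx : x ∈ Ω) (hdiff : DifferentiableAt ℝ R x) :
    ∀ i k l : Fin n,
      2 * ∑ m, R x m k * pd i (fun y => R y m l) x
        = ∑ m, (R x m k * (pd i (fun y => R y m l) x - pd l (fun y => R y m i) x)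
              + R x m i * (pd k (fun y => R y m l) x - pd l (fun y => R y m k) x)
              + R x m l * (pd k (fun y => R y m i) x - pd i (fun y => R y m k) x)) := by
  have hcomp : ∀ m a : Fin n, DifferentiableAt ℝ (fun y => R y m a) x := by
    intro m a
    exact differentiableAt_pi.mp (differentiableAt_pi.mp hdiff m) a
  -- skewness: ∑ m, R x m a * ∂_j R x m b + R x m b * ∂_j R x m a = 0
  have hkey : ∀ j a b : Fin n,
      ∑ m, R x m a * pd j (fun y => R y m b) x
        + ∑ m, R x m b * pd j (fun y => R y m a) x = 0 := by
    intro j a b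
    have hconst : (fun y => ∑ m, R y m a * R y m b)
        =ᶠ[nhds x] fun _ => ((1 : Matrix (Fin n) (Fin n) ℝ) a b) := by
      filter_upwards [hΩ.mem_nhds hx] with y hy
      have h := (hSO y hy).1
      have := congrFun (congrFun h a) b
      simpa [Matrix.mul_apply, Matrix.transpose_apply] using this
    have hsum : HasFDerivAt (fun y => ∑ m, R y m a * R y m b)
        (∑ m, (R x m a • fderiv ℝ (fun y => R y m b) x
          + R x m b • fderiv ℝ (fun y => R y m a) x)) x := by
      apply HasFDerivAt.fun_sum
      intro m _
      exact (hcomp m a).hasFDerivAt.mul (hcomp m b).hasFDerivAt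
    have h0 : (∑ m, (R x m a • fderiv ℝ (fun y => R y m b) x
          + R x m b • fderiv ℝ (fun y => R y m a) x)) = 0 := by
      rw [← hsum.fderiv]
      rw [Filter.EventuallyEq.fderiv_eq hconst]
      exact fderiv_const_apply _
    have h1 := congrArg (fun L : (Fin n → ℝ) →L[ℝ] ℝ => L (Pi.single j 1)) h0
    simpa [pd, ContinuousLinearMap.sum_apply, Finset.sum_add_distrib] using h1
  intro i k l
  have h1 := hkey l k i
  have h2 := hkey k i l
  have h3 := hkey i k l
  simp only [mul_sub, Finset.sum_add_distrib, Finset.sum_sub_distrib]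
  linarith
end

section
/- For ε > 0 define F_ε : B₁(0) ⊆ ℝ² → ℝ²ˣ² by F_ε(x) = Id + ε·[[0, x₁],[-x₁, 0]]. Then: (a) curl F_ε = ε(1,0)ᵀ (rowwise, constant); (b) ∫_{B₁} |F_ε - Id|² dx = (π/2)ε²; (c) there exists C > 0 such that ∫_{B₁} dist(F_ε(x), SO(2))² dx ≤ C ε³ for all ε ∈ (0,1]. -/
open Matrix MeasureTheory

open Real Set
open scoped ENNReal

lemma aux_pd_const (j : Fin 2) (c : ℝ) (x : Fin 2 → ℝ) :
    pd j (fun _ : Fin 2 → ℝ => c) x = 0 := by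
  rw [pd, fderiv_fun_const]; simp

lemma aux_pd_mul (ε : ℝ) (j : Fin 2) (x : Fin 2 → ℝ) :
    pd j (fun y : Fin 2 → ℝ => ε * y 0) x = ε * (Pi.single j 1 : Fin 2 → ℝ) 0 := by
  have h : HasFDerivAt (fun y : Fin 2 → ℝ => ε * y 0)
      (ε • ContinuousLinearMap.proj (R := ℝ) (φ := fun _ : Fin 2 => ℝ) 0) x :=
    ((ContinuousLinearMap.proj (R := ℝ) (φ := fun _ : Fin 2 => ℝ) 0).hasFDerivAt).const_mul ε
  rw [pd, h.fderiv]
  simp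

lemma aux_pd_neg_mul (ε : ℝ) (j : Fin 2) (x : Fin 2 → ℝ) :
    pd j (fun y : Fin 2 → ℝ => -(ε * y 0)) x = -(ε * (Pi.single j 1 : Fin 2 → ℝ) 0) := by
  have h : HasFDerivAt (fun y : Fin 2 → ℝ => -(ε * y 0))
      (-(ε • ContinuousLinearMap.proj (R := ℝ) (φ := fun _ : Fin 2 => ℝ) 0)) x :=
    (((ContinuousLinearMap.proj (R := ℝ) (φ := fun _ : Fin 2 => ℝ) 0).hasFDerivAt).const_mul
      ε).neg
  rw [pd, h.fderiv]
  simp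

lemma aux_disk_int_sq : (∫ p in {p : ℝ × ℝ | p.1 ^ 2 + p.2 ^ 2 < 1}, p.1 ^ 2) = π / 4 := by
  have hmD : MeasurableSet {p : ℝ × ℝ | p.1 ^ 2 + p.2 ^ 2 < 1} := by
    apply measurableSet_lt <;> fun_prop
  rw [← integral_indicator hmD, ← integral_comp_polarCoord_symm]
  have h2 : ∀ p ∈ polarCoord.target,
      p.1 • Set.indicator {p : ℝ × ℝ | p.1 ^ 2 + p.2 ^ 2 < 1} (fun p => p.1 ^ 2) (polarCoord.symm p)
      = Set.indicator (Ioo (0:ℝ) 1 ×ˢ Ioo (-π) π) (fun p => p.1 ^ 3 * (cos p.2) ^ 2) p := by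
    rintro ⟨r, θ⟩ hp
    rw [polarCoord_target] at hp
    obtain ⟨hr, hθ⟩ := hp
    simp only [mem_Ioi] at hr
    have hsq : (r * cos θ) ^ 2 + (r * sin θ) ^ 2 = r ^ 2 := by
      have := sin_sq_add_cos_sq θ; nlinarith
    have hsymm : polarCoord.symm (r, θ) = (r * cos θ, r * sin θ) := rfl
    have hmem : polarCoord.symm (r, θ) ∈ {p : ℝ × ℝ | p.1 ^ 2 + p.2 ^ 2 < 1} ↔ r < 1 := by
      rw [hsymm]; simp only [mem_setOf_eq]; rw [hsq]
      constructor <;> intro h <;> nlinarith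
    rcases lt_or_ge r 1 with h | h
    · rw [Set.indicator_of_mem (hmem.mpr h),
        Set.indicator_of_mem (Set.mem_prod.mpr ⟨Set.mem_Ioo.mpr ⟨hr, h⟩, hθ⟩), hsymm,
        smul_eq_mul]
      show r * (r * cos θ) ^ 2 = r ^ 3 * cos θ ^ 2
      ring
    · rw [Set.indicator_of_notMem (fun hc => absurd (hmem.mp hc) (not_lt.mpr h)),
        Set.indicator_of_notMem (fun hc => absurd (Set.mem_prod.mp hc).1.2 (not_lt.mpr h)),
        smul_zero]
  rw [setIntegral_congr_fun
      (by rw [polarCoord_target]; exact measurableSet_Ioi.prod measurableSet_Ioo) h2,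
    setIntegral_indicator ((measurableSet_Ioo).prod measurableSet_Ioo)]
  have htgt : polarCoord.target ∩ (Ioo (0:ℝ) 1 ×ˢ Ioo (-π) π) = Ioo (0:ℝ) 1 ×ˢ Ioo (-π) π := by
    rw [polarCoord_target]
    exact inter_eq_right.mpr (Set.prod_mono (fun x hx => hx.1) (fun x hx => hx))
  rw [htgt, Measure.volume_eq_prod,
    setIntegral_prod_mul (fun r : ℝ => r ^ 3) (fun θ : ℝ => cos θ ^ 2)]
  have hr3 : (∫ r in Ioo (0:ℝ) 1, r ^ 3) = 1/4 := by
    rw [← integral_Ioc_eq_integral_Ioo, ← intervalIntegral.integral_of_le (by norm_num)]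
    rw [integral_pow]; norm_num
  have hcos : (∫ θ in Ioo (-π) π, cos θ ^ 2) = π := by
    rw [← integral_Ioc_eq_integral_Ioo,
      ← intervalIntegral.integral_of_le (by linarith [pi_pos])]
    rw [integral_cos_sq]; simp
  rw [hr3, hcos]; ring

lemma aux_disk_int_sq_pi :
    (∫ x in {x : Fin 2 → ℝ | (x 0) ^ 2 + (x 1) ^ 2 < 1}, (x 0) ^ 2) = π / 4 := by
  have h := (volume_preserving_finTwoArrow ℝ).setIntegral_preimage_emb
    (MeasurableEquiv.measurableEmbedding _) (fun p : ℝ × ℝ => p.1 ^ 2)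
    {p : ℝ × ℝ | p.1 ^ 2 + p.2 ^ 2 < 1}
  have hset : (MeasurableEquiv.finTwoArrow ⁻¹' {p : ℝ × ℝ | p.1 ^ 2 + p.2 ^ 2 < 1})
      = {x : Fin 2 → ℝ | (x 0) ^ 2 + (x 1) ^ 2 < 1} := rfl
  rw [hset] at h
  rw [show (fun x : Fin 2 → ℝ => (x 0) ^ 2)
      = fun x : Fin 2 → ℝ => (MeasurableEquiv.finTwoArrow x).1 ^ 2 from rfl]
  rw [h, aux_disk_int_sq]

theorem counterexample_naive_rigidity
    (F : ℝ → (Fin 2 → ℝ) → Fin 2 → Fin 2 → ℝ)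
    (hF : ∀ ε : ℝ, ∀ x : Fin 2 → ℝ,
      F ε x = ![![1, ε * x 0], ![-(ε * x 0), 1]]) :
    (∀ ε : ℝ, ∀ x ∈ {x : Fin 2 → ℝ | (x 0) ^ 2 + (x 1) ^ 2 < 1}, ∀ i : Fin 2,
      pd 0 (fun y => F ε y i 1) x - pd 1 (fun y => F ε y i 0) x
        = ε * (if i = 0 then 1 else 0)) ∧
    (∀ ε : ℝ,
      (∫ x in {x : Fin 2 → ℝ | (x 0) ^ 2 + (x 1) ^ 2 < 1},
        ∑ i, ∑ j, (F ε x i j - (if i = j then (1 : ℝ) else 0)) ^ 2)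
      = Real.pi / 2 * ε ^ 2) ∧
    ∃ C > (0 : ℝ), ∀ ε ∈ Set.Ioc (0 : ℝ) 1,
      (∫ x in {x : Fin 2 → ℝ | (x 0) ^ 2 + (x 1) ^ 2 < 1},
        sInf {d : ℝ | ∃ Rm : Matrix (Fin 2) (Fin 2) ℝ,
          Rmᵀ * Rm = 1 ∧ Rm.det = 1 ∧ d = ∑ i, ∑ j, (F ε x i j - Rm i j) ^ 2})
      ≤ C * ε ^ 3 := by
  have hDm : MeasurableSet {x : Fin 2 → ℝ | (x 0) ^ 2 + (x 1) ^ 2 < 1} := by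
    apply measurableSet_lt <;> fun_prop
  refine ⟨?_, ?_, ?_⟩
  · -- part (a)
    intro ε x _
    rw [Fin.forall_fin_two]
    constructor
    · have e1 : (fun y => F ε y 0 1) = (fun y : Fin 2 → ℝ => ε * y 0) := by
        funext y; rw [hF]; simp
      have e2 : (fun y => F ε y 0 0) = (fun _ : Fin 2 → ℝ => (1:ℝ)) := by
        funext y; rw [hF]; simp
      rw [e1, e2, aux_pd_mul, aux_pd_const]
      simp
    · have e1 : (fun y => F ε y 1 1) = (fun _ : Fin 2 → ℝ => (1:ℝ)) := by
        funext y; rw [hF]; simp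
      have e2 : (fun y => F ε y 1 0) = (fun y : Fin 2 → ℝ => -(ε * y 0)) := by
        funext y; rw [hF]; simp
      rw [e1, e2, aux_pd_const, aux_pd_neg_mul]
      simp
  · -- part (b)
    intro ε
    have hcong : (∫ x in {x : Fin 2 → ℝ | (x 0) ^ 2 + (x 1) ^ 2 < 1},
          ∑ i, ∑ j, (F ε x i j - (if i = j then (1 : ℝ) else 0)) ^ 2)
        = ∫ x in {x : Fin 2 → ℝ | (x 0) ^ 2 + (x 1) ^ 2 < 1}, (2 * ε ^ 2) * (x 0) ^ 2 := by
      refine integral_congr_ae (Filter.Eventually.of_forall fun x => ?_)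
      simp only [hF, Fin.sum_univ_two]
      norm_num [Fin.sum_univ_two]
      ring
    rw [hcong, integral_const_mul, aux_disk_int_sq_pi]
    ring
  · -- part (c)
    refine ⟨2, by norm_num, ?_⟩
    rintro ε ⟨hε0, hε1⟩
    set D := {x : Fin 2 → ℝ | (x 0) ^ 2 + (x 1) ^ 2 < 1} with hD
    set f := fun x : Fin 2 → ℝ => sInf {d : ℝ | ∃ Rm : Matrix (Fin 2) (Fin 2) ℝ,
          Rmᵀ * Rm = 1 ∧ Rm.det = 1 ∧ d = ∑ i, ∑ j, (F ε x i j - Rm i j) ^ 2} with hf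
    have hnonneg : ∀ x, 0 ≤ f x := by
      intro x
      apply Real.sInf_nonneg
      rintro d ⟨Rm, -, -, rfl⟩
      positivity
    have hbound : ∀ x ∈ D, f x ≤ ε ^ 3 / 2 := by
      intro x hx
      set s := Real.sqrt (1 + (ε * x 0) ^ 2) with hs
      have hspos : 0 < s := Real.sqrt_pos.mpr (by positivity)
      have hs2 : s ^ 2 = 1 + (ε * x 0) ^ 2 := Real.sq_sqrt (by positivity)
      have hs1 : 1 ≤ s := by
        rw [show (1:ℝ) = Real.sqrt 1 from (Real.sqrt_one).symm]
        exact Real.sqrt_le_sqrt (by nlinarith)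
      have hsu : s ≤ 1 + (ε * x 0) ^ 2 / 2 := by
        rw [show (1 + (ε * x 0) ^ 2 / 2 : ℝ) = Real.sqrt ((1 + (ε * x 0) ^ 2 / 2) ^ 2) from
          (Real.sqrt_sq (by positivity)).symm]
        exact Real.sqrt_le_sqrt (by nlinarith)
      have hc : s⁻¹ ^ 2 * (1 + (ε * x 0) ^ 2) = 1 := by
        rw [← hs2]; field_simp
      set Rm : Matrix (Fin 2) (Fin 2) ℝ :=
        ![![s⁻¹, (ε * x 0) * s⁻¹], ![-((ε * x 0) * s⁻¹), s⁻¹]] with hR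
      have hRort : Rmᵀ * Rm = 1 := by
        ext i j
        simp only [Matrix.mul_apply, Matrix.transpose_apply]
        fin_cases i <;> fin_cases j <;>
            simp [hR, Matrix.mul_apply, Fin.sum_univ_two, Matrix.one_apply] <;>
          first
            | linear_combination hc
            | linear_combination 2 * hc
            | ring
      have hRdet : Rm.det = 1 := by
        rw [Matrix.det_fin_two]
        simp [hR]
        linear_combination hc
      have hmem : (2 * (1 - s⁻¹) ^ 2 * (1 + (ε * x 0) ^ 2))
          ∈ {d : ℝ | ∃ Rm : Matrix (Fin 2) (Fin 2) ℝ,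
          Rmᵀ * Rm = 1 ∧ Rm.det = 1 ∧ d = ∑ i, ∑ j, (F ε x i j - Rm i j) ^ 2} := by
        refine ⟨Rm, hRort, hRdet, ?_⟩
        rw [hF, hR]
        simp [Fin.sum_univ_two]
        try ring
      have hbdd : BddBelow {d : ℝ | ∃ Rm : Matrix (Fin 2) (Fin 2) ℝ,
          Rmᵀ * Rm = 1 ∧ Rm.det = 1 ∧ d = ∑ i, ∑ j, (F ε x i j - Rm i j) ^ 2} := by
        refine ⟨0, ?_⟩
        rintro d ⟨Rm, -, -, rfl⟩
        positivity
      have hle : f x ≤ 2 * (1 - s⁻¹) ^ 2 * (1 + (ε * x 0) ^ 2) := csInf_le hbdd hmem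
      have hval : 2 * (1 - s⁻¹) ^ 2 * (1 + (ε * x 0) ^ 2) = 2 * (s - 1) ^ 2 := by
        rw [← hs2]
        field_simp
      have hx0 : (x 0) ^ 2 ≤ 1 := by
        have h1 : (x 1) ^ 2 ≥ 0 := sq_nonneg _
        have hx' : (x 0) ^ 2 + (x 1) ^ 2 < 1 := hx
        nlinarith
      have ht4 : (ε * x 0) ^ 4 ≤ ε ^ 3 := by
        have e4 : ε ^ 4 ≤ ε ^ 3 := pow_le_pow_of_le_one hε0.le hε1 (by norm_num)
        have hx4 : (x 0) ^ 4 ≤ 1 := by nlinarith [sq_nonneg (x 0)]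
        have e0 : (0:ℝ) ≤ ε ^ 4 := by positivity
        nlinarith [pow_nonneg (sq_nonneg (x 0)) 1]
      have hfinal : 2 * (s - 1) ^ 2 ≤ ε ^ 3 / 2 := by
        nlinarith [sq_nonneg (ε * x 0)]
      calc f x ≤ 2 * (1 - s⁻¹) ^ 2 * (1 + (ε * x 0) ^ 2) := hle
        _ = 2 * (s - 1) ^ 2 := hval
        _ ≤ ε ^ 3 / 2 := hfinal
    have hsub : D ⊆ Set.pi Set.univ (fun _ : Fin 2 => Ioo (-1:ℝ) 1) := by
      intro x hx
      have hx' : (x 0) ^ 2 + (x 1) ^ 2 < 1 := hx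
      have h0 : x 0 ∈ Ioo (-1:ℝ) 1 := by
        constructor <;> nlinarith [sq_nonneg (x 0), sq_nonneg (x 1)]
      have h1 : x 1 ∈ Ioo (-1:ℝ) 1 := by
        constructor <;> nlinarith [sq_nonneg (x 0), sq_nonneg (x 1)]
      intro i _
      fin_cases i
      · exact h0
      · exact h1
    have hvol : volume D ≤ 4 := by
      refine le_trans (measure_mono hsub) ?_
      rw [volume_pi_pi]
      simp only [Real.volume_Ioo, Finset.prod_const, Finset.card_univ, Fintype.card_fin]
      rw [show ((1:ℝ) - -1) = 2 by norm_num]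
      rw [show ((4:ℝ≥0∞)) = ENNReal.ofReal 2 ^ 2 by
        rw [ENNReal.ofReal_ofNat]; norm_num]
    have hvolfin : volume D < ⊤ := lt_of_le_of_lt hvol (by norm_num)
    have hint : IntegrableOn (fun _ : Fin 2 → ℝ => ε ^ 3 / 2) D := by
      exact integrableOn_const hvolfin.ne
    have hmono : (∫ x in D, f x) ≤ ∫ _x in D, ε ^ 3 / 2 := by
      refine integral_mono_of_nonneg (Filter.Eventually.of_forall fun x => hnonneg x) hint ?_
      exact (ae_restrict_iff' hDm).mpr (Filter.Eventually.of_forall hbound)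
    refine le_trans hmono ?_
    rw [setIntegral_const, smul_eq_mul]
    have htr : (volume D).toReal ≤ 4 := by
      have := ENNReal.toReal_mono (by norm_num : (4:ℝ≥0∞) ≠ ⊤) hvol
      simpa using this
    calc (volume D).toReal * (ε ^ 3 / 2) ≤ 4 * (ε ^ 3 / 2) := by
          apply mul_le_mul_of_nonneg_right htr (by positivity)
      _ = 2 * ε ^ 3 := by ring
end
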